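/- arXiv:2002.03174 — 5 statements merged into one kernel-verified Lean document; each statement's English description precedes it below -/
import Mathlib

section
/- Let n agents have single-peaked value densities on [0,1] with a common slope k, pairwise distinct peaks, supports whose union is [0,1], and normalized total value 1 each. If an allocation X is Pareto optimal, then X is non-wasteful and is (up to null sets) a connected, peak-preserving allocation: the agents' pieces are intervals ordered along [0,1] in the order of the agents' peaks. -/
set_option maxHeartbeats 1600000
open MeasureTheory Set



open MeasureTheory

noncomputable def pieceVal (v : ℝ → ℝ) (P : Set ℝ) : ℝ := ∫ x in P, v x

def IsAlloc {n : ℕ} (X : Fin n → Set ℝ) : Prop :=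
  (∀ i, MeasurableSet (X i)) ∧ (∀ i j, i ≠ j → X i ∩ X j = ∅) ∧
    (⋃ i, X i) = Set.Icc (0:ℝ) 1

def Dominates {n : ℕ} (v : Fin n → ℝ → ℝ) (Y X : Fin n → Set ℝ) : Prop :=
  (∀ i, pieceVal (v i) (X i) ≤ pieceVal (v i) (Y i)) ∧
    ∃ i, pieceVal (v i) (X i) < pieceVal (v i) (Y i)

def ParetoOpt {n : ℕ} (v : Fin n → ℝ → ℝ) (X : Fin n → Set ℝ) : Prop :=
  ¬ ∃ Y, IsAlloc Y ∧ Dominates v Y X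

def Supp01 (v : ℝ → ℝ) : Set ℝ := {x ∈ Set.Icc (0:ℝ) 1 | 0 < v x}

def SinglePeakedD (v : ℝ → ℝ) (p k : ℝ) : Prop :=
  0 < k ∧ p ∈ Set.Icc (0:ℝ) 1 ∧
    (∀ x ∈ Set.Icc (0:ℝ) 1, v x = max 0 (v p - k * |x - p|)) ∧
    (∫ x in Set.Icc (0:ℝ) 1, v x) = 1

def NonWasteful {n : ℕ} (v : Fin n → ℝ → ℝ) (X : Fin n → Set ℝ) : Prop :=
  ∀ i, volume (X i \ Supp01 (v i)) = 0

def ConnPeakPres {n : ℕ} (p : Fin n → ℝ) (X : Fin n → Set ℝ) : Prop :=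
  ∃ (c : Fin (n+1) → ℝ) (σ : Equiv.Perm (Fin n)),
    Monotone c ∧ c 0 = 0 ∧ c (Fin.last n) = 1 ∧
    StrictMono (fun i => p (σ i)) ∧
    ∀ i : Fin n, X (σ i) =ᵐ[volume] Set.Ioc (c i.castSucc) (c i.succ)

def EnvyFreeA {n : ℕ} (v : Fin n → ℝ → ℝ) (X : Fin n → Set ℝ) : Prop :=
  ∀ i j, pieceVal (v i) (X j) ≤ pieceVal (v i) (X i)


-- ===== auxiliary development =====

noncomputable def tent (h p k x : ℝ) : ℝ := max 0 (h - k * |x - p|)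

lemma tent_nonneg (h p k x : ℝ) : 0 ≤ tent h p k x := le_max_left _ _

lemma tent_cont (h p k : ℝ) : Continuous (tent h p k) := by
  unfold tent; fun_prop

lemma tent_le (h p k x : ℝ) (hh : 0 ≤ h) (hk : 0 ≤ k) : tent h p k x ≤ h := by
  unfold tent
  have : h - k * |x - p| ≤ h := by nlinarith [abs_nonneg (x - p)]
  exact max_le hh this

lemma tent_pos_iff (h p k x : ℝ) : 0 < tent h p k x ↔ k * |x - p| < h := by
  unfold tent
  constructor
  · intro hx
    rcases max_cases 0 (h - k * |x - p|) with ⟨he, _⟩ | ⟨he, hlt⟩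
    · rw [he] at hx; exact absurd hx (lt_irrefl _)
    · linarith
  · intro hx; rw [lt_max_iff]; right; linarith

lemma tent_eq_of_pos {h p k x : ℝ} (hx : k * |x - p| < h) :
    tent h p k x = h - k * |x - p| := max_eq_right (by linarith)

lemma tent_intOn (h p k : ℝ) {P : Set ℝ} (hP : P ⊆ Set.Icc 0 1) :
    IntegrableOn (tent h p k) P volume :=
  ((tent_cont h p k).integrableOn_Icc).mono_set hP

section sp

variable {v : ℝ → ℝ} {pp k : ℝ}

lemma sp_eqOn (hsp : SinglePeakedD v pp k) :
    ∀ x ∈ Set.Icc (0:ℝ) 1, v x = tent (v pp) pp k x := hsp.2.2.1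

lemma sp_int_congr (hsp : SinglePeakedD v pp k) {P : Set ℝ} (hP : P ⊆ Set.Icc 0 1)
    (hPm : MeasurableSet P) : (∫ x in P, v x) = ∫ x in P, tent (v pp) pp k x :=
  setIntegral_congr_fun hPm (fun x hx => sp_eqOn hsp x (hP hx))

lemma sp_int_tent (hsp : SinglePeakedD v pp k) :
    (∫ x in Set.Icc (0:ℝ) 1, tent (v pp) pp k x) = 1 := by
  rw [← sp_int_congr hsp subset_rfl measurableSet_Icc]
  exact hsp.2.2.2

lemma sp_h_pos (hsp : SinglePeakedD v pp k) : 0 < v pp := by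
  have h0 : 0 ≤ v pp := by
    have := sp_eqOn hsp pp hsp.2.1
    simp only [tent, sub_self, abs_zero, mul_zero, sub_zero] at this
    rw [this]
    exact le_max_left _ _
  rcases lt_or_eq_of_le h0 with h | h
  · exact h
  · exfalso
    have hz : ∀ x ∈ Set.Icc (0:ℝ) 1, tent (v pp) pp k x = 0 := by
      intro x _
      unfold tent
      apply max_eq_left
      have : 0 ≤ k * |x - pp| := mul_nonneg hsp.1.le (abs_nonneg _)
      linarith [h.symm ▸ this]
    have : (∫ x in Set.Icc (0:ℝ) 1, tent (v pp) pp k x) = 0 := by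
      rw [setIntegral_congr_fun measurableSet_Icc hz]
      simp
    rw [sp_int_tent hsp] at this
    norm_num at this
  
lemma sp_supp_eq (hsp : SinglePeakedD v pp k) :
    Supp01 v = Set.Icc (0:ℝ) 1 ∩ {x | 0 < tent (v pp) pp k x} := by
  ext x
  simp only [Supp01, Set.mem_inter_iff, Set.mem_setOf_eq, Set.mem_sep_iff]
  constructor
  · rintro ⟨h1, h2⟩
    exact ⟨h1, by rwa [← sp_eqOn hsp x h1]⟩
  · rintro ⟨h1, h2⟩
    exact ⟨h1, by rwa [sp_eqOn hsp x h1]⟩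

lemma sp_supp_meas (hsp : SinglePeakedD v pp k) : MeasurableSet (Supp01 v) := by
  rw [sp_supp_eq hsp]
  exact measurableSet_Icc.inter ((tent_cont _ _ _).measurable measurableSet_Ioi)

lemma sp_intOn (hsp : SinglePeakedD v pp k) : IntegrableOn v (Set.Icc 0 1) volume :=
  (tent_intOn (v pp) pp k subset_rfl).congr_fun
    (fun x hx => (sp_eqOn hsp x hx).symm) measurableSet_Icc

end sp


/-- strict integral comparison on [0,1] given a margin on a subinterval -/
lemma integral_strict_lt {f g : ℝ → ℝ} (hf : Continuous f) (hg : Continuous g)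
    (hle : ∀ x ∈ Set.Icc (0:ℝ) 1, f x ≤ g x)
    {c d ε : ℝ} (hc : 0 ≤ c) (hd : d ≤ 1) (hcd : c < d) (hε : 0 < ε)
    (hmar : ∀ x ∈ Set.Icc c d, f x + ε ≤ g x) :
    (∫ x in Set.Icc (0:ℝ) 1, f x) < ∫ x in Set.Icc (0:ℝ) 1, g x := by
  have hfi : IntegrableOn f (Set.Icc (0:ℝ) 1) volume := hf.integrableOn_Icc
  have hgi : IntegrableOn g (Set.Icc (0:ℝ) 1) volume := hg.integrableOn_Icc
  have hsub : Set.Icc c d ⊆ Set.Icc (0:ℝ) 1 := fun x hx => ⟨by linarith [hx.1], by linarith [hx.2]⟩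
  have hgfi : IntegrableOn (fun x => g x - f x) (Set.Icc (0:ℝ) 1) volume := hgi.sub hfi
  have h1 : (∫ x in Set.Icc c d, (g x - f x)) ≤ ∫ x in Set.Icc (0:ℝ) 1, (g x - f x) := by
    apply setIntegral_mono_set hgfi
    · filter_upwards [ae_restrict_mem measurableSet_Icc] with x hx
      simp only [Pi.zero_apply]
      linarith [hle x hx]
    · exact HasSubset.Subset.eventuallyLE hsub
  have hconst : IntegrableOn (fun _ : ℝ => ε) (Set.Icc c d) volume := by
    refine integrableOn_const (LT.lt.ne ?_)
    rw [Real.volume_Icc]; exact ENNReal.ofReal_lt_top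
  have h2 : (∫ x in Set.Icc c d, (fun _ => ε) x) ≤ ∫ x in Set.Icc c d, (g x - f x) :=
    setIntegral_mono_on hconst (hgfi.mono_set hsub) measurableSet_Icc
      (fun x hx => by linarith [hmar x hx])
  have h2' : (∫ x in Set.Icc c d, (fun _ => ε) x) = ε * (d - c) := by
    rw [setIntegral_const, measureReal_def, Real.volume_Icc, smul_eq_mul,
      ENNReal.toReal_ofReal (by linarith)]
    ring
  have h3 : (∫ x in Set.Icc (0:ℝ) 1, (g x - f x)) =
      (∫ x in Set.Icc (0:ℝ) 1, g x) - ∫ x in Set.Icc (0:ℝ) 1, f x :=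
    integral_sub hgi hfi
  nlinarith

lemma lemA {k pi pj hi hj : ℝ} (hk : 0 < k)
    (hpi0 : 0 ≤ pi) (hpj1 : pj ≤ 1)
    (hhi : 0 < hi) (hhj : 0 < hj) (hij : pi < pj)
    (hinti : (∫ x in Set.Icc (0:ℝ) 1, tent hi pi k x) = 1)
    (hintj : (∫ x in Set.Icc (0:ℝ) 1, tent hj pj k x) = 1) :
    k * pi + hi < k * pj + hj ∧ hj - k * pj < hi - k * pi := by
  constructor
  · by_contra hcon
    push_neg at hcon
    -- hcon : k * pj + hj ≤ k * pi + hi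
    have hglob : ∀ x ∈ Set.Icc (0:ℝ) 1, tent hj pj k x ≤ tent hi pi k x := by
      intro x _
      apply max_le_max le_rfl
      have habs : |x - pi| - |x - pj| ≤ pj - pi := by
        have h1 : |x - pi| - |x - pj| ≤ |(x - pi) - (x - pj)| := abs_sub_abs_le_abs_sub _ _
        have h3 : x - pi - (x - pj) = pj - pi := by ring
        rw [h3, abs_of_nonneg (by linarith : (0:ℝ) ≤ pj - pi)] at h1
        linarith
      nlinarith
    set x0 : ℝ := max (max 0 (pj - hj/k)) pi with hx0def
    have hx0lt : x0 < pj := by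
      apply max_lt (max_lt _ _) hij
      · linarith
      · have : 0 < hj / k := div_pos hhj hk
        linarith
    have hx00 : 0 ≤ x0 := le_trans (le_max_left 0 _) (le_max_left _ _)
    have hx0i : pi ≤ x0 := le_max_right _ _
    have hx0j : pj - hj/k ≤ x0 := le_trans (le_max_right 0 _) (le_max_left _ _)
    set c : ℝ := (3*x0 + pj)/4 with hcdef
    set d : ℝ := (x0 + pj)/2 with hddef
    have hmar : ∀ x ∈ Set.Icc c d, tent hj pj k x + k*(pj - x0) ≤ tent hi pi k x := by
      intro x hx
      obtain ⟨hx1, hx2⟩ := hx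
      have hxpj : x < pj := by simp only [hddef] at hx2; linarith
      have hxx0 : x0 < x := by simp only [hcdef] at hx1; linarith
      have habsj : |x - pj| = pj - x := by rw [abs_of_nonpos (by linarith)]; ring
      have htj : tent hj pj k x = hj - k * (pj - x) := by
        rw [tent_eq_of_pos, habsj]
        rw [habsj]
        have h5 : pj - x < hj / k := by linarith
        calc k * (pj - x) < k * (hj / k) := mul_lt_mul_of_pos_left h5 hk
          _ = hj := by field_simp
      have hti : hi - k * (x - pi) ≤ tent hi pi k x := by
        have : hi - k * |x - pi| ≤ tent hi pi k x := le_max_right _ _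
        rw [abs_of_nonneg (by linarith)] at this
        exact this
      rw [htj]
      nlinarith
    have := integral_strict_lt (tent_cont hj pj k) (tent_cont hi pi k) hglob
      (c := c) (d := d) (ε := k*(pj - x0))
      (by simp only [hcdef]; linarith) (by simp only [hddef]; linarith)
      (by simp only [hcdef, hddef]; linarith) (by nlinarith) hmar
    rw [hinti, hintj] at this
    exact lt_irrefl _ this
  · by_contra hcon
    push_neg at hcon
    -- hcon : hi - k * pi ≤ hj - k * pj
    have hglob : ∀ x ∈ Set.Icc (0:ℝ) 1, tent hi pi k x ≤ tent hj pj k x := by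
      intro x _
      apply max_le_max le_rfl
      have habs : |x - pj| - |x - pi| ≤ pj - pi := by
        have h1 : |x - pj| - |x - pi| ≤ |(x - pj) - (x - pi)| := abs_sub_abs_le_abs_sub _ _
        have h3 : x - pj - (x - pi) = -(pj - pi) := by ring
        rw [h3, abs_neg, abs_of_nonneg (by linarith : (0:ℝ) ≤ pj - pi)] at h1
        linarith
      nlinarith
    set x1 : ℝ := min (min 1 (pi + hi/k)) pj with hx1def
    have hx1gt : pi < x1 := by
      apply lt_min (lt_min _ _) hij
      · linarith
      · have : 0 < hi / k := div_pos hhi hk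
        linarith
    have hx11 : x1 ≤ 1 := le_trans (min_le_left _ _) (min_le_left _ _)
    have hx1i : x1 ≤ pi + hi/k := le_trans (min_le_left _ _) (min_le_right _ _)
    have hx1j : x1 ≤ pj := min_le_right _ _
    set c : ℝ := (pi + x1)/2 with hcdef
    set d : ℝ := (pi + 3*x1)/4 with hddef
    have hmar : ∀ x ∈ Set.Icc c d, tent hi pi k x + k*(x1 - pi) ≤ tent hj pj k x := by
      intro x hx
      obtain ⟨hx1', hx2'⟩ := hx
      have hxpi : pi < x := by simp only [hcdef] at hx1'; linarith
      have hxx1 : x < x1 := by simp only [hddef] at hx2'; linarith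
      have hti : tent hi pi k x = hi - k * (x - pi) := by
        rw [tent_eq_of_pos]
        · rw [abs_of_nonneg (by linarith)]
        · rw [abs_of_nonneg (by linarith)]
          have : x - pi < hi / k := by linarith
          calc k * (x - pi) < k * (hi / k) := mul_lt_mul_of_pos_left this hk
            _ = hi := by field_simp
      have htj : hj - k * (pj - x) ≤ tent hj pj k x := by
        have : hj - k * |x - pj| ≤ tent hj pj k x := le_max_right _ _
        rw [abs_of_nonpos (by linarith)] at this
        convert this using 2
        ring
      rw [hti]
      nlinarith
    have := integral_strict_lt (tent_cont hi pi k) (tent_cont hj pj k) hglob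
      (c := c) (d := d) (ε := k*(x1 - pi))
      (by simp only [hcdef]; linarith) (by simp only [hddef]; linarith)
      (by simp only [hcdef, hddef]; linarith) (by nlinarith) hmar
    rw [hinti, hintj] at this
    exact lt_irrefl _ this

lemma lemB {k pi pj hi hj : ℝ} (hk : 0 < k) (hij : pi < pj)
    (hA1 : k * pi + hi < k * pj + hj) (hA2 : hj - k * pj < hi - k * pi)
    {x y : ℝ} (hxy : x < y) (hxl : pj - hj / k < x) (hyr : y < pi + hi / k) :
    tent hi pi k y * tent hj pj k x < tent hi pi k x * tent hj pj k y := by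
  have hdiv1 : pi - hi / k < pj - hj / k := by
    have hmul1 : k * (pi - hi / k) = k * pi - hi := by field_simp
    have hmul2 : k * (pj - hj / k) = k * pj - hj := by field_simp
    exact (mul_lt_mul_iff_right₀ hk).1 (by rw [hmul1, hmul2]; linarith)
  have hdiv2 : pi + hi / k < pj + hj / k := by
    have hmul1 : k * (pi + hi / k) = k * pi + hi := by field_simp
    have hmul2 : k * (pj + hj / k) = k * pj + hj := by field_simp
    exact (mul_lt_mul_iff_right₀ hk).1 (by rw [hmul1, hmul2]; linarith)
  have habs : ∀ a b c : ℝ, b - c / k < a → a < b + c / k → k * |a - b| < c := by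
    intro a b c h1 h2
    have : |a - b| < c / k := abs_lt.2 ⟨by linarith, by linarith⟩
    rw [lt_div_iff₀ hk] at this
    linarith
  have P1 : k * |x - pi| < hi := habs x pi hi (by linarith) (by linarith)
  have P2 : k * |y - pi| < hi := habs y pi hi (by linarith) (by linarith)
  have P3 : k * |x - pj| < hj := habs x pj hj (by linarith) (by linarith)
  have P4 : k * |y - pj| < hj := habs y pj hj (by linarith) (by linarith)
  have hd : (0:ℝ) < (hi - k * pi) - (hj - k * pj) := by linarith
  have he : (0:ℝ) < (k * pj + hj) - (k * pi + hi) := by linarith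
  have hyx : (0:ℝ) < y - x := by linarith
  rw [tent_eq_of_pos P1, tent_eq_of_pos P2, tent_eq_of_pos P3, tent_eq_of_pos P4]
  rcases abs_cases (x - pi) with ⟨e1, s1⟩ | ⟨e1, s1⟩ <;>
  rcases abs_cases (y - pi) with ⟨e2, s2⟩ | ⟨e2, s2⟩ <;>
  rcases abs_cases (x - pj) with ⟨e3, s3⟩ | ⟨e3, s3⟩ <;>
  rcases abs_cases (y - pj) with ⟨e4, s4⟩ | ⟨e4, s4⟩ <;>
  rw [e1] at P1 ⊢ <;> rw [e2] at P2 ⊢ <;> rw [e3] at P3 ⊢ <;> rw [e4] at P4 ⊢ <;>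
  first
  | linarith
  | nlinarith [mul_pos hd hyx, mul_pos he hyx, mul_pos hyx (sub_pos.2 P1),
      mul_pos hyx (sub_pos.2 P2), mul_pos hyx (sub_pos.2 P3), mul_pos hyx (sub_pos.2 P4),
      mul_pos hd (sub_pos.2 P1), mul_pos hd (sub_pos.2 P2), mul_pos hd (sub_pos.2 P3),
      mul_pos hd (sub_pos.2 P4), mul_pos he (sub_pos.2 P1), mul_pos he (sub_pos.2 P2),
      mul_pos he (sub_pos.2 P3), mul_pos he (sub_pos.2 P4), mul_pos hd he,
      mul_pos hk hyx, sq_nonneg (y - x)]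

/-- positive integral over a positive measure set where f is positive -/
lemma setIntegral_pos' {f : ℝ → ℝ} {S : Set ℝ} (hS : MeasurableSet S)
    (hpos : ∀ x ∈ S, 0 < f x) (hμ : volume S ≠ 0) (hint : IntegrableOn f S volume) :
    0 < ∫ x in S, f x := by
  have h0 : 0 ≤ᵐ[volume.restrict S] f := by
    filter_upwards [ae_restrict_mem hS] with x hx
    exact (hpos x hx).le
  rw [setIntegral_pos_iff_support_of_nonneg_ae h0 hint]
  have hsub : S ⊆ Function.support f ∩ S :=
    fun x hx => ⟨fun h0' => (lt_irrefl 0 (h0' ▸ hpos x hx)), hx⟩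
  exact lt_of_lt_of_le (pos_iff_ne_zero.2 hμ) (measure_mono hsub)

/-- choose a subset with prescribed mass -/
lemma exists_subset_mass {f : ℝ → ℝ} (hf : Continuous f) (hf0 : ∀ x, 0 ≤ f x)
    {Cb : ℝ} (hCb : 0 < Cb) (hfb : ∀ x, f x ≤ Cb)
    {S : Set ℝ} (hS : MeasurableSet S) (hS1 : S ⊆ Set.Icc 0 1)
    {m : ℝ} (hm0 : 0 ≤ m) (hm : m ≤ ∫ x in S, f x) :
    ∃ S', S' ⊆ S ∧ MeasurableSet S' ∧ (∫ x in S', f x) = m := by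
  set F : ℝ → ℝ := fun s => ∫ x in S ∩ Set.Iic s, f x with hF
  have hIntS : IntegrableOn f S volume := (hf.integrableOn_Icc).mono_set hS1
  have hIntsub : ∀ P : Set ℝ, P ⊆ S → IntegrableOn f P volume :=
    fun P hP => hIntS.mono_set hP
  have hmono : ∀ s t : ℝ, s ≤ t → F s ≤ F t ∧ F t - F s ≤ Cb * (t - s) := by
    intro s t hst
    have hsplit : S ∩ Set.Iic t = (S ∩ Set.Iic s) ∪ (S ∩ Set.Ioc s t) := by
      ext x
      simp only [Set.mem_inter_iff, Set.mem_union, Set.mem_Iic, Set.mem_Ioc]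
      constructor
      · rintro ⟨hxS, hxt⟩
        rcases le_or_gt x s with h | h
        · exact Or.inl ⟨hxS, h⟩
        · exact Or.inr ⟨hxS, h, hxt⟩
      · rintro (⟨hxS, hxs⟩ | ⟨hxS, hxs, hxt⟩)
        · exact ⟨hxS, le_trans hxs hst⟩
        · exact ⟨hxS, hxt⟩
    have hdisj : Disjoint (S ∩ Set.Iic s) (S ∩ Set.Ioc s t) := by
      apply Set.disjoint_left.2
      rintro x ⟨_, hx1⟩ ⟨_, hx2, _⟩
      exact absurd hx1 (not_le.2 hx2)
    have hunion : F t = F s + ∫ x in S ∩ Set.Ioc s t, f x := by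
      rw [hF]
      simp only
      rw [hsplit, setIntegral_union hdisj (hS.inter measurableSet_Ioc)
        (hIntsub _ (Set.inter_subset_left)) (hIntsub _ (Set.inter_subset_left))]
    have h1 : 0 ≤ ∫ x in S ∩ Set.Ioc s t, f x :=
      setIntegral_nonneg (hS.inter measurableSet_Ioc) (fun x _ => hf0 x)
    have h2 : (∫ x in S ∩ Set.Ioc s t, f x) ≤ Cb * (t - s) := by
      have hle : (∫ x in S ∩ Set.Ioc s t, f x) ≤ ∫ x in S ∩ Set.Ioc s t, (fun _ => Cb) x := by
        apply setIntegral_mono_on (hIntsub _ Set.inter_subset_left) _ (hS.inter measurableSet_Ioc)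
          (fun x _ => hfb x)
        refine integrableOn_const (LT.lt.ne ?_)
        calc volume (S ∩ Set.Ioc s t) ≤ volume (Set.Ioc s t) := measure_mono Set.inter_subset_right
          _ < ⊤ := by rw [Real.volume_Ioc]; exact ENNReal.ofReal_lt_top
      rw [setIntegral_const, smul_eq_mul, measureReal_def] at hle
      have hv : (volume (S ∩ Set.Ioc s t)).toReal ≤ t - s := by
        have : volume (S ∩ Set.Ioc s t) ≤ ENNReal.ofReal (t - s) := by
          rw [← Real.volume_Ioc (a := s) (b := t)]
          exact measure_mono Set.inter_subset_right
        calc (volume (S ∩ Set.Ioc s t)).toReal ≤ (ENNReal.ofReal (t - s)).toReal :=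
              ENNReal.toReal_mono ENNReal.ofReal_ne_top this
          _ ≤ t - s := by rw [ENNReal.toReal_ofReal_eq_iff.2]; linarith
      nlinarith [mul_le_mul_of_nonneg_left hv hCb.le]
    constructor
    · rw [hunion]; linarith
    · rw [hunion]; linarith
  have hcont : Continuous F := by
    apply (LipschitzWith.of_dist_le_mul (K := Real.toNNReal Cb) (f := F) _).continuous
    intro s t
    rw [Real.dist_eq, Real.dist_eq, Real.coe_toNNReal _ hCb.le]
    rcases le_total s t with h | h
    · obtain ⟨h1, h2⟩ := hmono s t h
      rw [abs_of_nonpos (by linarith), abs_of_nonpos (by linarith)]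
      linarith
    · obtain ⟨h1, h2⟩ := hmono t s h
      rw [abs_of_nonneg (by linarith), abs_of_nonneg (by linarith)]
      linarith
  have hF0 : F 0 = 0 := by
    rw [hF]
    simp only
    have : volume (S ∩ Set.Iic 0) = 0 := by
      apply measure_mono_null (t := {(0:ℝ)}) _ Real.volume_singleton
      intro x hx
      exact Set.mem_singleton_iff.2 (le_antisymm hx.2 (hS1 hx.1).1)
    rw [Measure.restrict_eq_zero.2 this, integral_zero_measure]
  have hF1 : F 1 = ∫ x in S, f x := by
    rw [hF]
    simp only
    have heq : S ∩ Set.Iic 1 = S := Set.inter_eq_left.2 (fun x hx => (hS1 hx).2)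
    rw [heq]
  have hmem : m ∈ Set.Icc (F 0) (F 1) := by
    rw [hF0, hF1]; exact ⟨hm0, hm⟩
  obtain ⟨s, _, hs⟩ := intermediate_value_Icc (by norm_num : (0:ℝ) ≤ 1) hcont.continuousOn hmem
  exact ⟨S ∩ Set.Iic s, Set.inter_subset_left, hS.inter measurableSet_Iic, hs⟩

lemma improve {n : ℕ} {v : Fin n → ℝ → ℝ} {X : Fin n → Set ℝ} (hX : IsAlloc X)
    (hvi : ∀ l, IntegrableOn (v l) (Set.Icc 0 1) volume)
    {i j : Fin n} (hij : i ≠ j) {A B : Set ℝ} (hAm : MeasurableSet A) (hBm : MeasurableSet B)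
    (hAX : A ⊆ X i) (hBX : B ⊆ X j)
    (heq : (∫ x in A, v i x) = ∫ x in B, v i x)
    (hlt : (∫ x in B, v j x) < ∫ x in A, v j x) :
    ∃ Y, IsAlloc Y ∧ Dominates v Y X := by
  classical
  obtain ⟨hXm, hXd, hXu⟩ := hX
  have hXsub : ∀ l, X l ⊆ Set.Icc (0:ℝ) 1 := by
    intro l x hx
    rw [← hXu]
    exact Set.mem_iUnion.2 ⟨l, hx⟩
  have hIv : ∀ l (P : Set ℝ), P ⊆ Set.Icc (0:ℝ) 1 → IntegrableOn (v l) P volume :=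
    fun l P hP => (hvi l).mono_set hP
  have hD : ∀ a b : Fin n, a ≠ b → ∀ x, x ∈ X a → x ∈ X b → False := by
    intro a b hab x h1 h2
    have := hXd a b hab
    rw [Set.eq_empty_iff_forall_notMem] at this
    exact this x ⟨h1, h2⟩
  have hiji : j ≠ i := Ne.symm hij
  set Y : Fin n → Set ℝ :=
    fun l => if l = i then (X i \ A) ∪ B else if l = j then (X j \ B) ∪ A else X l with hYdef
  have hYi : Y i = (X i \ A) ∪ B := by rw [hYdef]; simp
  have hYj : Y j = (X j \ B) ∪ A := by rw [hYdef]; simp [hiji]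
  have hYl : ∀ l, l ≠ i → l ≠ j → Y l = X l := by
    intro l h1 h2
    rw [hYdef]
    simp only [if_neg h1, if_neg h2]
  have hmemY : ∀ l x, x ∈ Y l →
      (l = i ∧ ((x ∈ X i ∧ x ∉ A) ∨ x ∈ B)) ∨ (l = j ∧ ((x ∈ X j ∧ x ∉ B) ∨ x ∈ A)) ∨
      (l ≠ i ∧ l ≠ j ∧ x ∈ X l) := by
    intro l x hx
    by_cases hli : l = i
    · rw [hli, hYi] at hx
      rcases hx with h | h
      · exact Or.inl ⟨hli, Or.inl ⟨h.1, h.2⟩⟩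
      · exact Or.inl ⟨hli, Or.inr h⟩
    · by_cases hlj : l = j
      · rw [hlj, hYj] at hx
        rcases hx with h | h
        · exact Or.inr (Or.inl ⟨hlj, Or.inl ⟨h.1, h.2⟩⟩)
        · exact Or.inr (Or.inl ⟨hlj, Or.inr h⟩)
      · rw [hYl l hli hlj] at hx
        exact Or.inr (Or.inr ⟨hli, hlj, hx⟩)
  have hsplitI : (∫ x in (X i \ A) ∪ B, v i x) = (∫ x in X i \ A, v i x) + ∫ x in B, v i x := by
    apply setIntegral_union _ hBm (hIv i _ (fun x hx => hXsub i hx.1))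
      (hIv i _ (fun x hx => hXsub j (hBX hx)))
    exact Set.disjoint_left.2 (fun x hx1 hx2 => hD i j hij x hx1.1 (hBX hx2))
  have hXiA : (∫ x in X i, v i x) = (∫ x in X i \ A, v i x) + ∫ x in A, v i x := by
    rw [← setIntegral_union disjoint_sdiff_self_left hAm
      (hIv i _ (fun x hx => hXsub i hx.1)) (hIv i _ (fun x hx => hXsub i (hAX hx)))]
    rw [Set.diff_union_of_subset hAX]
  have hsplitJ : (∫ x in (X j \ B) ∪ A, v j x) = (∫ x in X j \ B, v j x) + ∫ x in A, v j x := by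
    apply setIntegral_union _ hAm (hIv j _ (fun x hx => hXsub j hx.1))
      (hIv j _ (fun x hx => hXsub i (hAX hx)))
    exact Set.disjoint_left.2 (fun x hx1 hx2 => hD i j hij x (hAX hx2) hx1.1)
  have hXjB : (∫ x in X j, v j x) = (∫ x in X j \ B, v j x) + ∫ x in B, v j x := by
    rw [← setIntegral_union disjoint_sdiff_self_left hBm
      (hIv j _ (fun x hx => hXsub j hx.1)) (hIv j _ (fun x hx => hXsub j (hBX hx)))]
    rw [Set.diff_union_of_subset hBX]
  have hvalJ : pieceVal (v j) (X j) < pieceVal (v j) (Y j) := by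
    rw [hYj]
    unfold pieceVal
    rw [hsplitJ]
    linarith
  refine ⟨Y, ⟨?_, ?_, ?_⟩, ?_, j, hvalJ⟩
  · -- measurability
    intro l
    by_cases hli : l = i
    · rw [hli, hYi]
      exact ((hXm i).diff hAm).union hBm
    · by_cases hlj : l = j
      · rw [hlj, hYj]
        exact ((hXm j).diff hBm).union hAm
      · rw [hYl l hli hlj]
        exact hXm l
  · -- disjointness
    intro a b hab
    rw [Set.eq_empty_iff_forall_notMem]
    rintro x ⟨hxa, hxb⟩
    rcases hmemY a x hxa with ⟨hai, ha⟩ | ⟨haj, ha⟩ | ⟨hani, hanj, ha⟩ <;>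
      rcases hmemY b x hxb with ⟨hbi, hb⟩ | ⟨hbj, hb⟩ | ⟨hbni, hbnj, hb⟩
    · exact hab (hai.trans hbi.symm)
    · -- a = i, b = j
      rcases ha with ⟨h1, h2⟩ | h1
      · rcases hb with ⟨h3, h4⟩ | h3
        · exact hD i j hij x h1 h3
        · exact h2 h3
      · rcases hb with ⟨h3, h4⟩ | h3
        · exact h4 h1
        · exact hD i j hij x (hAX h3) (hBX h1)
    · -- a = i, b = other
      rcases ha with ⟨h1, _⟩ | h1
      · exact hD i b (Ne.symm hbni) x h1 hb
      · exact hD j b (Ne.symm hbnj) x (hBX h1) hb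
    · -- a = j, b = i
      rcases ha with ⟨h1, h2⟩ | h1
      · rcases hb with ⟨h3, h4⟩ | h3
        · exact hD i j hij x h3 h1
        · exact h2 h3
      · rcases hb with ⟨h3, h4⟩ | h3
        · exact h4 h1
        · exact hD i j hij x (hAX h1) (hBX h3)
    · exact hab (haj.trans hbj.symm)
    · rcases ha with ⟨h1, _⟩ | h1
      · exact hD j b (Ne.symm hbnj) x h1 hb
      · exact hD i b (Ne.symm hbni) x (hAX h1) hb
    · rcases hb with ⟨h1, _⟩ | h1
      · exact hD i a (Ne.symm hani) x h1 ha
      · exact hD j a (Ne.symm hanj) x (hBX h1) ha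
    · rcases hb with ⟨h1, _⟩ | h1
      · exact hD j a (Ne.symm hanj) x h1 ha
      · exact hD i a (Ne.symm hani) x (hAX h1) ha
    · exact hD a b hab x ha hb
  · -- union
    rw [← hXu]
    apply Set.Subset.antisymm
    · apply Set.iUnion_subset
      intro l x hx
      rcases hmemY l x hx with ⟨_, ha⟩ | ⟨_, ha⟩ | ⟨_, _, ha⟩
      · rcases ha with ⟨h1, _⟩ | h1
        · exact Set.mem_iUnion.2 ⟨i, h1⟩
        · exact Set.mem_iUnion.2 ⟨j, hBX h1⟩
      · rcases ha with ⟨h1, _⟩ | h1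
        · exact Set.mem_iUnion.2 ⟨j, h1⟩
        · exact Set.mem_iUnion.2 ⟨i, hAX h1⟩
      · exact Set.mem_iUnion.2 ⟨l, ha⟩
    · intro x hx
      obtain ⟨l, hl⟩ := Set.mem_iUnion.1 hx
      by_cases hli : l = i
      · by_cases hxA : x ∈ A
        · refine Set.mem_iUnion.2 ⟨j, ?_⟩
          rw [hYj]
          exact Or.inr hxA
        · refine Set.mem_iUnion.2 ⟨i, ?_⟩
          rw [hYi]
          exact Or.inl ⟨hli ▸ hl, hxA⟩
      · by_cases hlj : l = j
        · by_cases hxB : x ∈ B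
          · refine Set.mem_iUnion.2 ⟨i, ?_⟩
            rw [hYi]
            exact Or.inr hxB
          · refine Set.mem_iUnion.2 ⟨j, ?_⟩
            rw [hYj]
            exact Or.inl ⟨hlj ▸ hl, hxB⟩
        · refine Set.mem_iUnion.2 ⟨l, ?_⟩
          rw [hYl l hli hlj]
          exact hl
  · -- weak improvement for all
    intro l
    by_cases hli : l = i
    · rw [hli, hYi]
      unfold pieceVal
      rw [hsplitI, ← heq]
      linarith [le_of_eq hXiA]
    · by_cases hlj : l = j
      · rw [hlj]
        exact le_of_lt hvalJ
      · rw [hYl l hli hlj]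

lemma noCross {n : ℕ} {v : Fin n → ℝ → ℝ} {p : Fin n → ℝ} {k : ℝ}
    (hsp : ∀ i, SinglePeakedD (v i) (p i) k) {X : Fin n → Set ℝ} (hX : IsAlloc X)
    (hPO : ParetoOpt v X) {i j : Fin n} (hij : p i < p j) {t : ℝ}
    (hA : volume (X i ∩ Supp01 (v i) ∩ Set.Ioi t) ≠ 0)
    (hB : volume (X j ∩ Supp01 (v j) ∩ Set.Iio t) ≠ 0) : False := by
  have hk : 0 < k := (hsp i).1
  set Hi := v i (p i) with hHi
  set Hj := v j (p j) with hHj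
  have hHip : 0 < Hi := sp_h_pos (hsp i)
  have hHjp : 0 < Hj := sp_h_pos (hsp j)
  obtain ⟨hA1, hA2⟩ := lemA hk ((hsp i).2.1.1) ((hsp j).2.1.2) hHip hHjp hij
    (sp_int_tent (hsp i)) (sp_int_tent (hsp j))
  have hineq : i ≠ j := fun h => absurd hij (by rw [h]; exact lt_irrefl _)
  obtain ⟨hXm, hXd, hXu⟩ := hX
  have hXsub : ∀ l, X l ⊆ Set.Icc (0:ℝ) 1 := by
    intro l x hx
    rw [← hXu]
    exact Set.mem_iUnion.2 ⟨l, hx⟩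
  set A := X i ∩ Supp01 (v i) ∩ Set.Ioi t with hAdef
  set B := X j ∩ Supp01 (v j) ∩ Set.Iio t with hBdef
  have hAm : MeasurableSet A := ((hXm i).inter (sp_supp_meas (hsp i))).inter measurableSet_Ioi
  have hBm : MeasurableSet B := ((hXm j).inter (sp_supp_meas (hsp j))).inter measurableSet_Iio
  have hAIcc : A ⊆ Set.Icc 0 1 := fun x hx => hx.1.2.1
  have hBIcc : B ⊆ Set.Icc 0 1 := fun x hx => hx.1.2.1
  -- bounds from support membership
  have hboundi : ∀ x, 0 < tent Hi (p i) k x → p i - Hi / k < x ∧ x < p i + Hi / k := by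
    intro x hx
    rw [tent_pos_iff] at hx
    have h1 : |x - p i| < Hi / k := by
      rw [lt_div_iff₀ hk]; linarith [hx]
    rw [abs_lt] at h1
    exact ⟨by linarith [h1.1], by linarith [h1.2]⟩
  have hboundj : ∀ x, 0 < tent Hj (p j) k x → p j - Hj / k < x ∧ x < p j + Hj / k := by
    intro x hx
    rw [tent_pos_iff] at hx
    have h1 : |x - p j| < Hj / k := by
      rw [lt_div_iff₀ hk]; linarith [hx]
    rw [abs_lt] at h1
    exact ⟨by linarith [h1.1], by linarith [h1.2]⟩
  have hposA : ∀ x ∈ A, 0 < tent Hi (p i) k x := by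
    intro x hx
    have h1 := hx.1.2
    rw [sp_supp_eq (hsp i)] at h1
    exact h1.2
  have hposBj : ∀ x ∈ B, 0 < tent Hj (p j) k x := by
    intro x hx
    have h1 := hx.1.2
    rw [sp_supp_eq (hsp j)] at h1
    exact h1.2
  -- endpoints comparison
  have hri_lt_rj : p i + Hi / k < p j + Hj / k := by
    have h1 : k * (p i + Hi / k) = k * p i + Hi := by field_simp
    have h2 : k * (p j + Hj / k) = k * p j + Hj := by field_simp
    exact (mul_lt_mul_iff_right₀ hk).1 (by rw [h1, h2]; linarith)
  have hli_lt_lj : p i - Hi / k < p j - Hj / k := by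
    have h1 : k * (p i - Hi / k) = k * p i - Hi := by field_simp
    have h2 : k * (p j - Hj / k) = k * p j - Hj := by field_simp
    exact (mul_lt_mul_iff_right₀ hk).1 (by rw [h1, h2]; linarith)
  -- properties of points in A and B
  have hApt : ∀ x ∈ A, t < x ∧ x < p i + Hi / k := by
    intro x hx
    exact ⟨hx.2, (hboundi x (hposA x hx)).2⟩
  have hBpt : ∀ x ∈ B, p j - Hj / k < x ∧ x < t := by
    intro x hx
    exact ⟨(hboundj x (hposBj x hx)).1, hx.2⟩
  -- t is in the overlap
  obtain ⟨a0, ha0⟩ := nonempty_of_measure_ne_zero hA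
  obtain ⟨b0, hb0⟩ := nonempty_of_measure_ne_zero hB
  have hlt_t : p j - Hj / k < t := lt_trans (hBpt b0 hb0).1 (hBpt b0 hb0).2
  have hrt_t : t < p i + Hi / k := lt_trans (hApt a0 ha0).1 (hApt a0 ha0).2
  -- positivity of tents on B for i
  have hposBi : ∀ x ∈ B, 0 < tent Hi (p i) k x := by
    intro x hx
    rw [tent_pos_iff]
    have h1 := hBpt x hx
    have habs : |x - p i| < Hi / k := abs_lt.2 ⟨by linarith [h1.1, hli_lt_lj], by linarith [h1.2, hrt_t]⟩
    rw [lt_div_iff₀ hk] at habs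
    linarith
  have hTit : 0 < tent Hi (p i) k t := by
    rw [tent_pos_iff]
    have habs : |t - p i| < Hi / k := abs_lt.2 ⟨by linarith [hli_lt_lj], by linarith⟩
    rw [lt_div_iff₀ hk] at habs
    linarith
  have hTjt : 0 < tent Hj (p j) k t := by
    rw [tent_pos_iff]
    have habs : |t - p j| < Hj / k := abs_lt.2 ⟨by linarith, by linarith [hri_lt_rj]⟩
    rw [lt_div_iff₀ hk] at habs
    linarith
  -- masses
  have hintA : IntegrableOn (tent Hi (p i) k) A volume := tent_intOn _ _ _ hAIcc
  have hintBi : IntegrableOn (tent Hi (p i) k) B volume := tent_intOn _ _ _ hBIcc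
  have hmA : 0 < ∫ x in A, tent Hi (p i) k x := setIntegral_pos' hAm hposA hA hintA
  have hmB : 0 < ∫ x in B, tent Hi (p i) k x := setIntegral_pos' hBm hposBi hB hintBi
  -- the key refutation given matched masses
  have key : ∀ A' B' : Set ℝ, A' ⊆ A → B' ⊆ B → MeasurableSet A' → MeasurableSet B' →
      (∫ x in A', tent Hi (p i) k x) = (∫ x in B', tent Hi (p i) k x) →
      0 < (∫ x in A', tent Hi (p i) k x) → False := by
    intro A' B' hA'A hB'B hA'm hB'm hmass hmpos
    have hA'Icc : A' ⊆ Set.Icc 0 1 := fun x hx => hAIcc (hA'A hx)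
    have hB'Icc : B' ⊆ Set.Icc 0 1 := fun x hx => hBIcc (hB'B hx)
    have hμA' : volume A' ≠ 0 := by
      intro h0
      rw [Measure.restrict_eq_zero.2 h0, integral_zero_measure] at hmpos
      exact lt_irrefl _ hmpos
    have hμB' : volume B' ≠ 0 := by
      intro h0
      rw [hmass, Measure.restrict_eq_zero.2 h0, integral_zero_measure] at hmpos
      exact lt_irrefl _ hmpos
    -- pointwise strict comparisons
    have hptA : ∀ x ∈ A', 0 < tent Hi (p i) k t * tent Hj (p j) k x
        - tent Hj (p j) k t * tent Hi (p i) k x := by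
      intro x hx
      have h1 := hApt x (hA'A hx)
      have := lemB hk hij hA1 hA2 (x := t) (y := x) h1.1 hlt_t h1.2
      nlinarith [this]
    have hptB : ∀ x ∈ B', 0 < tent Hj (p j) k t * tent Hi (p i) k x
        - tent Hi (p i) k t * tent Hj (p j) k x := by
      intro x hx
      have h1 := hBpt x (hB'B hx)
      have := lemB hk hij hA1 hA2 (x := x) (y := t) h1.2 h1.1 hrt_t
      nlinarith [this]
    -- integrate
    have hgAint : IntegrableOn (fun x => tent Hi (p i) k t * tent Hj (p j) k x
        - tent Hj (p j) k t * tent Hi (p i) k x) A' volume := by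
      apply Integrable.sub
      · exact (tent_intOn Hj (p j) k hA'Icc).const_mul _
      · exact (tent_intOn Hi (p i) k hA'Icc).const_mul _
    have hgBint : IntegrableOn (fun x => tent Hj (p j) k t * tent Hi (p i) k x
        - tent Hi (p i) k t * tent Hj (p j) k x) B' volume := by
      apply Integrable.sub
      · exact (tent_intOn Hi (p i) k hB'Icc).const_mul _
      · exact (tent_intOn Hj (p j) k hB'Icc).const_mul _
    have hIA := setIntegral_pos' hA'm hptA hμA' hgAint
    have hIB := setIntegral_pos' hB'm hptB hμB' hgBint
    rw [integral_sub ((tent_intOn Hj (p j) k hA'Icc).const_mul _)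
      ((tent_intOn Hi (p i) k hA'Icc).const_mul _), integral_const_mul, integral_const_mul] at hIA
    rw [integral_sub ((tent_intOn Hi (p i) k hB'Icc).const_mul _)
      ((tent_intOn Hj (p j) k hB'Icc).const_mul _), integral_const_mul, integral_const_mul] at hIB
    -- chain
    have hchain : (∫ x in B', tent Hj (p j) k x) < ∫ x in A', tent Hj (p j) k x := by
      have h1 : tent Hi (p i) k t * ∫ x in A', tent Hj (p j) k x >
          tent Hj (p j) k t * ∫ x in A', tent Hi (p i) k x := by linarith
      have h2 : tent Hj (p j) k t * ∫ x in B', tent Hi (p i) k x >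
          tent Hi (p i) k t * ∫ x in B', tent Hj (p j) k x := by linarith
      rw [hmass] at h1
      have := lt_trans h2 h1
      exact (mul_lt_mul_iff_right₀ hTit).1 this
    -- translate to v and improve
    have heqv : (∫ x in A', v i x) = ∫ x in B', v i x := by
      rw [sp_int_congr (hsp i) hA'Icc hA'm, sp_int_congr (hsp i) hB'Icc hB'm]
      exact hmass
    have hltv : (∫ x in B', v j x) < ∫ x in A', v j x := by
      rw [sp_int_congr (hsp j) hA'Icc hA'm, sp_int_congr (hsp j) hB'Icc hB'm]
      exact hchain
    have hvint : ∀ l, IntegrableOn (v l) (Set.Icc 0 1) volume := fun l => sp_intOn (hsp l)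
    exact hPO (improve ⟨hXm, hXd, hXu⟩ hvint hineq hA'm hB'm
      (fun x hx => (hA'A hx).1.1) (fun x hx => (hB'B hx).1.1) heqv hltv)
  -- match the masses
  rcases le_total (∫ x in A, tent Hi (p i) k x) (∫ x in B, tent Hi (p i) k x) with hle | hle
  · obtain ⟨B', hB'B, hB'm, hB'mass⟩ := exists_subset_mass (tent_cont Hi (p i) k)
      (tent_nonneg Hi (p i) k) hHip (fun x => tent_le Hi (p i) k x hHip.le hk.le)
      hBm hBIcc hmA.le hle
    exact key A B' subset_rfl hB'B hAm hB'm (by rw [hB'mass]) hmA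
  · obtain ⟨A', hA'A, hA'm, hA'mass⟩ := exists_subset_mass (tent_cont Hi (p i) k)
      (tent_nonneg Hi (p i) k) hHip (fun x => tent_le Hi (p i) k x hHip.le hk.le)
      hAm hAIcc hmB.le hle
    exact key A' B hA'A subset_rfl hA'm hBm (by rw [hA'mass]) (by rw [hA'mass]; exact hmB)

lemma nonwaste {n : ℕ} {v : Fin n → ℝ → ℝ} {p : Fin n → ℝ} {k : ℝ}
    (hsp : ∀ i, SinglePeakedD (v i) (p i) k)
    (hcover : (⋃ i, Supp01 (v i)) = Set.Icc (0:ℝ) 1)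
    {X : Fin n → Set ℝ} (hX : IsAlloc X) (hPO : ParetoOpt v X) :
    NonWasteful v X := by
  intro i
  by_contra hW
  obtain ⟨hXm, hXd, hXu⟩ := hX
  have hXsub : ∀ l, X l ⊆ Set.Icc (0:ℝ) 1 := by
    intro l x hx
    rw [← hXu]
    exact Set.mem_iUnion.2 ⟨l, hx⟩
  set W := X i \ Supp01 (v i) with hWdef
  have hWm : MeasurableSet W := (hXm i).diff (sp_supp_meas (hsp i))
  have hWIcc : W ⊆ Set.Icc (0:ℝ) 1 := fun x hx => hXsub i hx.1
  have hWcup : W = ⋃ l, (W ∩ Supp01 (v l)) := by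
    apply Set.Subset.antisymm
    · intro x hx
      have : x ∈ ⋃ l, Supp01 (v l) := hcover.symm ▸ hWIcc hx
      obtain ⟨l, hl⟩ := Set.mem_iUnion.1 this
      exact Set.mem_iUnion.2 ⟨l, hx, hl⟩
    · exact Set.iUnion_subset (fun l => Set.inter_subset_left)
  have : ∃ l, volume (W ∩ Supp01 (v l)) ≠ 0 := by
    by_contra hall
    push_neg at hall
    apply hW
    rw [hWcup]
    exact measure_iUnion_null_iff.2 hall
  obtain ⟨l, hl⟩ := this
  have hli : l ≠ i := by
    intro h
    apply hl
    subst h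
    have : W ∩ Supp01 (v l) = ∅ := by
      rw [Set.eq_empty_iff_forall_notMem]
      rintro x ⟨hx1, hx2⟩
      exact hx1.2 hx2
    rw [this]
    exact measure_empty
  set G := W ∩ Supp01 (v l) with hGdef
  have hGm : MeasurableSet G := hWm.inter (sp_supp_meas (hsp l))
  have hGX : G ⊆ X i := fun x hx => hx.1.1
  have hGIcc : G ⊆ Set.Icc (0:ℝ) 1 := fun x hx => hWIcc hx.1
  have hvi0 : ∀ x ∈ G, v i x = 0 := by
    intro x hx
    have hxIcc : x ∈ Set.Icc (0:ℝ) 1 := hGIcc hx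
    have h1 : ¬ (0 < v i x) := fun hpos => hx.1.2 ⟨hxIcc, hpos⟩
    have h2 : 0 ≤ v i x := by
      rw [sp_eqOn (hsp i) x hxIcc]
      exact tent_nonneg _ _ _ _
    rcases lt_or_eq_of_le h2 with h | h
    · exact absurd h h1
    · exact h.symm
  have hGi : (∫ x in G, v i x) = 0 := by
    rw [setIntegral_congr_fun hGm hvi0]
    simp
  have hGl : 0 < ∫ x in G, v l x := by
    rw [sp_int_congr (hsp l) hGIcc hGm]
    apply setIntegral_pos' hGm _ hl (tent_intOn _ _ _ hGIcc)
    intro x hx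
    have := hx.2
    rw [sp_supp_eq (hsp l)] at this
    exact this.2
  have hvint : ∀ m, IntegrableOn (v m) (Set.Icc 0 1) volume := fun m => sp_intOn (hsp m)
  apply hPO
  apply improve ⟨hXm, hXd, hXu⟩ hvint (Ne.symm hli) hGm MeasurableSet.empty hGX
    (Set.empty_subset _) (B := (∅ : Set ℝ))
  · rw [hGi]
    simp
  · simp only [Measure.restrict_empty, integral_zero_measure]
    exact hGl

/-- Necessity: a Pareto optimal allocation is non-wasteful and is (up to null sets)
a connected, peak-preserving allocation. -/
theorem statement1 {n : ℕ} (v : Fin n → ℝ → ℝ) (p : Fin n → ℝ) (k : ℝ)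
    (hsp : ∀ i, SinglePeakedD (v i) (p i) k)
    (hdistinct : Function.Injective p)
    (hcover : (⋃ i, Supp01 (v i)) = Set.Icc (0:ℝ) 1)
    (X : Fin n → Set ℝ) (hX : IsAlloc X)
    (hPO : ParetoOpt v X) :
    NonWasteful v X ∧ ConnPeakPres p X := by
  have hNW : NonWasteful v X := nonwaste hsp hcover hX hPO
  refine ⟨hNW, ?_⟩
  obtain ⟨hXm, hXd, hXu⟩ := hX
  have hXsub : ∀ l, X l ⊆ Set.Icc (0:ℝ) 1 := by
    intro l x hx
    rw [← hXu]
    exact Set.mem_iUnion.2 ⟨l, hx⟩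
  set σ : Equiv.Perm (Fin n) := Tuple.sort p with hσdef
  have hσ : StrictMono (fun l => p (σ l)) :=
    (Tuple.monotone_sort p).strictMono_of_injective (hdistinct.comp σ.injective)
  set a : Fin n → Set ℝ := fun l => X (σ l) ∩ Supp01 (v (σ l)) with hadef
  have ham : ∀ l, MeasurableSet (a l) := fun l => (hXm _).inter (sp_supp_meas (hsp _))
  have haX : ∀ l, a l ⊆ X (σ l) := fun l => Set.inter_subset_left
  have haIcc : ∀ l, a l ⊆ Set.Icc (0:ℝ) 1 := fun l x hx => hXsub _ hx.1
  have hadisj : ∀ l l' : Fin n, l ≠ l' → a l ∩ a l' = ∅ := by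
    intro l l' h
    have h2 : σ l ≠ σ l' := fun he => h (σ.injective he)
    have := hXd _ _ h2
    rw [Set.eq_empty_iff_forall_notMem] at this ⊢
    rintro x ⟨h3, h4⟩
    exact this x ⟨h3.1, h4.1⟩
  have haX_ae : ∀ l, volume (X (σ l) \ a l) = 0 := by
    intro l
    have : X (σ l) \ a l = X (σ l) \ Supp01 (v (σ l)) := by
      ext x
      simp only [hadef, Set.mem_diff, Set.mem_inter_iff]
      tauto
    rw [this]
    exact hNW (σ l)
  set D : Fin (n+1) → Set ℝ := fun m => ⋃ (l : Fin n) (_ : (l:ℕ) < (m:ℕ)), a l with hDdef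
  have hDm : ∀ m, MeasurableSet (D m) :=
    fun m => MeasurableSet.iUnion (fun l => MeasurableSet.iUnion (fun _ => ham l))
  have hDIcc : ∀ m, D m ⊆ Set.Icc (0:ℝ) 1 := by
    intro m
    apply Set.iUnion_subset
    intro l
    apply Set.iUnion_subset
    intro _
    exact haIcc l
  have hIccfin : volume (Set.Icc (0:ℝ) 1) = 1 := by
    rw [Real.volume_Icc]
    norm_num
  have hDfin : ∀ m, volume (D m) ≠ ⊤ := by
    intro m
    exact ne_top_of_le_ne_top (by rw [hIccfin]; exact ENNReal.one_ne_top)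
      (measure_mono (μ := volume) (hDIcc m))
  set c : Fin (n+1) → ℝ := fun m => (volume (D m)).toReal with hcdef
  have hc0' : ∀ m, 0 ≤ c m := fun m => ENNReal.toReal_nonneg
  have hDmono : ∀ m m' : Fin (n+1), m ≤ m' → D m ⊆ D m' := by
    intro m m' h
    apply Set.iUnion_subset
    intro l
    apply Set.iUnion_subset
    intro hl
    exact Set.subset_iUnion_of_subset l (Set.subset_iUnion_of_subset
      (lt_of_lt_of_le hl (by exact_mod_cast h)) subset_rfl)
  have hcmono : Monotone c := by
    intro m m' h
    exact ENNReal.toReal_mono (hDfin m') (measure_mono (hDmono m m' h))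
  have hc0 : c 0 = 0 := by
    have : D 0 = ∅ := by
      rw [Set.eq_empty_iff_forall_notMem]
      intro x hx
      obtain ⟨l, hl2⟩ := Set.mem_iUnion.1 hx
      obtain ⟨hl, _⟩ := Set.mem_iUnion.1 hl2
      have h00 : ((0 : Fin (n+1)) : ℕ) = 0 := rfl
      rw [h00] at hl
      exact Nat.not_lt_zero _ hl
    rw [hcdef]
    simp only [this, measure_empty, ENNReal.toReal_zero]
  -- the union of all a's is a.e. Icc
  have hcupae : volume (Set.Icc (0:ℝ) 1 \ ⋃ l, a l) = 0 := by
    apply measure_mono_null (t := ⋃ l, (X (σ l) \ a l))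
    · intro x hx
      have hx1 : x ∈ ⋃ i, X i := hXu.symm ▸ hx.1
      obtain ⟨m, hm⟩ := Set.mem_iUnion.1 hx1
      have : x ∈ X (σ (σ.symm m)) := by rwa [Equiv.apply_symm_apply]
      refine Set.mem_iUnion.2 ⟨σ.symm m, this, ?_⟩
      intro hxa
      exact hx.2 (Set.mem_iUnion.2 ⟨σ.symm m, hxa⟩)
    · exact measure_iUnion_null_iff.2 haX_ae
  have hDlast : volume (D (Fin.last n)) = 1 := by
    have h1 : D (Fin.last n) = ⋃ l, a l := by
      apply Set.Subset.antisymm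
      · exact Set.iUnion_subset (fun l => Set.iUnion_subset (fun _ => Set.subset_iUnion _ l))
      · exact Set.iUnion_subset (fun l => Set.subset_iUnion_of_subset l
          (Set.subset_iUnion_of_subset l.2 subset_rfl))
    rw [h1]
    apply le_antisymm
    · have := measure_mono (μ := volume) (Set.iUnion_subset haIcc : (⋃ l, a l) ⊆ Set.Icc (0:ℝ) 1)
      rwa [hIccfin] at this
    · have h2 : volume (Set.Icc (0:ℝ) 1) ≤ volume (⋃ l, a l) + volume (Set.Icc (0:ℝ) 1 \ ⋃ l, a l) := by
        apply le_trans (measure_mono _) (measure_union_le _ _)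
        intro x hx
        by_cases h : x ∈ ⋃ l, a l
        · exact Or.inl h
        · exact Or.inr ⟨hx, h⟩
      rw [hcupae, add_zero, hIccfin] at h2
      exact h2
  have hclast : c (Fin.last n) = 1 := by
    rw [hcdef]
    simp only [hDlast]
    simp
  -- measure of D m
  have hDval : ∀ m, volume (D m) = ENNReal.ofReal (c m) := by
    intro m
    rw [hcdef]
    simp only
    rw [ENNReal.ofReal_toReal (hDfin m)]
  -- key: trimming claim
  have hkey : ∀ m : Fin (n+1), volume (D m ∩ Set.Ioi (c m)) = 0 := by
    intro m
    by_contra h0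
    -- left side: some l' with small index has mass above c m
    have hsplit : D m ∩ Set.Ioi (c m) = ⋃ (l : Fin n) (_ : (l:ℕ) < (m:ℕ)), (a l ∩ Set.Ioi (c m)) := by
      rw [hDdef]
      simp only [Set.iUnion_inter]
    have : ∃ l : Fin n, (l:ℕ) < (m:ℕ) ∧ volume (a l ∩ Set.Ioi (c m)) ≠ 0 := by
      by_contra hall
      push_neg at hall
      apply h0
      rw [hsplit]
      apply measure_iUnion_null_iff.2
      intro l
      apply measure_iUnion_null_iff.2
      intro hl
      exact hall l hl
    obtain ⟨l', hl'm, hl'⟩ := this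
    -- right side: E = Icc 0 (c m) \ D m has positive measure
    set E := Set.Icc 0 (c m) \ D m with hEdef
    have hDiic : D m ∩ Set.Iic (c m) ⊆ Set.Icc 0 (c m) :=
      fun x hx => ⟨(hDIcc m hx.1).1, hx.2⟩
    have hIccDm : Set.Icc 0 (c m) ∩ D m = D m ∩ Set.Iic (c m) := by
      ext x
      constructor
      · rintro ⟨h1, h2⟩
        exact ⟨h2, h1.2⟩
      · rintro ⟨h1, h2⟩
        exact ⟨⟨(hDIcc m h1).1, h2⟩, h1⟩
    have hDsplit : volume (D m ∩ Set.Iic (c m)) + volume (D m ∩ Set.Ioi (c m)) = volume (D m) := by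
      have := measure_inter_add_diff (μ := volume) (D m) (measurableSet_Iic (a := c m))
      rwa [Set.diff_eq, Set.compl_Iic] at this
    have hE : volume E ≠ 0 := by
      intro hE0
      have h2 : volume (Set.Icc 0 (c m)) ≤ volume (D m ∩ Set.Iic (c m)) := by
        have h3 : Set.Icc 0 (c m) ⊆ (D m ∩ Set.Iic (c m)) ∪ E := by
          intro x hx
          by_cases h : x ∈ D m
          · exact Or.inl ⟨h, hx.2⟩
          · exact Or.inr ⟨hx, h⟩
        calc volume (Set.Icc 0 (c m)) ≤ volume (D m ∩ Set.Iic (c m)) + volume E :=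
              le_trans (measure_mono h3) (measure_union_le _ _)
          _ = volume (D m ∩ Set.Iic (c m)) := by rw [hE0, add_zero]
      have h4 : volume (D m ∩ Set.Iic (c m)) < volume (D m) := by
        rw [← hDsplit]
        exact ENNReal.lt_add_right
          (ne_top_of_le_ne_top (hDfin m) (measure_mono Set.inter_subset_left)) h0
      rw [Real.volume_Icc, sub_zero] at h2
      have h5 : volume (D m) ≤ volume (D m ∩ Set.Iic (c m)) := by
        calc volume (D m) = ENNReal.ofReal (c m) := hDval m
          _ = volume (Set.Icc 0 (c m)) := by rw [Real.volume_Icc, sub_zero]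
          _ ≤ volume (D m ∩ Set.Iic (c m)) := by rw [Real.volume_Icc, sub_zero]; exact h2
      exact absurd (lt_of_le_of_lt h5 h4) (lt_irrefl _)
    have hcm1 : c m ≤ 1 := by
      calc c m ≤ c (Fin.last n) := hcmono (Fin.le_last m)
        _ = 1 := hclast
    have hEIcc : E ⊆ Set.Icc (0:ℝ) 1 := fun x hx => ⟨hx.1.1, le_trans hx.1.2 hcm1⟩
    have : ∃ l : Fin n, volume (a l ∩ E) ≠ 0 := by
      by_contra hall
      push_neg at hall
      apply hE
      have hsub : E ⊆ (E \ ⋃ l, a l) ∪ ⋃ l, (a l ∩ E) := by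
        intro x hx
        by_cases h : x ∈ ⋃ l, a l
        · obtain ⟨l, hl⟩ := Set.mem_iUnion.1 h
          exact Or.inr (Set.mem_iUnion.2 ⟨l, Set.mem_inter hl hx⟩)
        · exact Or.inl ⟨hx, h⟩
      have hsubE : E \ (⋃ l, a l) ⊆ Set.Icc (0:ℝ) 1 \ ⋃ l, a l :=
        fun x hx => ⟨hEIcc hx.1, hx.2⟩
      have h1 : volume (E \ ⋃ l, a l) = 0 := measure_mono_null hsubE hcupae
      have h2 : volume (⋃ l, (a l ∩ E)) = 0 := measure_iUnion_null_iff.2 hall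
      refine le_antisymm ?_ zero_le
      calc volume E ≤ volume (E \ ⋃ l, a l) + volume (⋃ l, (a l ∩ E)) :=
            le_trans (measure_mono hsub) (measure_union_le _ _)
        _ ≤ 0 := by rw [h1, h2, add_zero]
    obtain ⟨l, hlE⟩ := this
    have hlm : (m:ℕ) ≤ (l:ℕ) := by
      by_contra hcon
      push_neg at hcon
      apply hlE
      have hsub : a l ⊆ D m :=
        Set.subset_iUnion_of_subset l (Set.subset_iUnion_of_subset hcon subset_rfl)
      have : a l ∩ E = ∅ := by
        rw [Set.eq_empty_iff_forall_notMem]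
        rintro x ⟨h1, h2⟩
        exact h2.2 (hsub h1)
      rw [this]
      exact measure_empty
    have hlio : volume (a l ∩ Set.Iio (c m)) ≠ 0 := by
      intro h0'
      apply hlE
      have hsub : a l ∩ E ⊆ (a l ∩ Set.Iio (c m)) ∪ {c m} := by
        rintro x ⟨h1, h2⟩
        rcases lt_or_eq_of_le h2.1.2 with h | h
        · exact Or.inl ⟨h1, h⟩
        · exact Or.inr (Set.mem_singleton_iff.2 h)
      refine le_antisymm ?_ zero_le
      calc volume (a l ∩ E) ≤ volume (a l ∩ Set.Iio (c m)) + volume ({c m} : Set ℝ) :=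
            le_trans (measure_mono hsub) (measure_union_le _ _)
        _ ≤ 0 := by rw [h0', Real.volume_singleton, add_zero]
    have hflt : l' < l := by
      have : (l':ℕ) < (l:ℕ) := lt_of_lt_of_le hl'm hlm
      exact this
    exact noCross hsp ⟨hXm, hXd, hXu⟩ hPO (hσ hflt) hl' hlio
  -- D m is a.e. an initial segment
  have hDae : ∀ m : Fin (n+1), D m =ᵐ[volume] Set.Icc 0 (c m) := by
    intro m
    rw [ae_eq_set]
    constructor
    · apply measure_mono_null _ (hkey m)
      intro x hx
      refine ⟨hx.1, ?_⟩
      have h0x : (0:ℝ) ≤ x := (hDIcc m hx.1).1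
      have := hx.2
      rw [Set.mem_Icc] at this
      push_neg at this
      exact this h0x
    · have hsplit2 : volume (Set.Icc 0 (c m) ∩ D m) + volume (Set.Icc 0 (c m) \ D m)
          = volume (Set.Icc 0 (c m)) := measure_inter_add_diff _ (hDm m)
      have hIccDm : Set.Icc 0 (c m) ∩ D m = D m ∩ Set.Iic (c m) := by
        ext x
        constructor
        · rintro ⟨h1, h2⟩
          exact ⟨h2, h1.2⟩
        · rintro ⟨h1, h2⟩
          exact ⟨⟨(hDIcc m h1).1, h2⟩, h1⟩
      have hDsplit : volume (D m ∩ Set.Iic (c m)) + volume (D m ∩ Set.Ioi (c m)) = volume (D m) := by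
        have := measure_inter_add_diff (μ := volume) (D m) (measurableSet_Iic (a := c m))
        rwa [Set.diff_eq, Set.compl_Iic] at this
      have h6 : volume (D m ∩ Set.Iic (c m)) = ENNReal.ofReal (c m) := by
        rw [← hDval m, ← hDsplit, hkey m, add_zero]
      by_contra hne
      have : volume (Set.Icc 0 (c m)) < volume (Set.Icc 0 (c m) ∩ D m) + volume (Set.Icc 0 (c m) \ D m) := by
        rw [hIccDm, h6, Real.volume_Icc, sub_zero]
        exact ENNReal.lt_add_right ENNReal.ofReal_ne_top hne
      rw [hsplit2] at this
      exact absurd this (lt_irrefl _)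
  -- final assembly
  refine ⟨c, σ, hcmono, hc0, hclast, hσ, ?_⟩
  intro m
  have ham_eq : a m = D m.succ \ D m.castSucc := by
    apply Set.Subset.antisymm
    · intro x hx
      constructor
      · refine Set.mem_iUnion.2 ⟨m, Set.mem_iUnion.2 ⟨?_, hx⟩⟩
        rw [Fin.val_succ]
        exact Nat.lt_succ_self _
      · intro hmem
        obtain ⟨l, hl2⟩ := Set.mem_iUnion.1 hmem
        obtain ⟨hl, hxl⟩ := Set.mem_iUnion.1 hl2
        rw [Fin.coe_castSucc] at hl
        have hne : l ≠ m := fun he => absurd (he ▸ hl) (lt_irrefl _)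
        have := hadisj l m hne
        rw [Set.eq_empty_iff_forall_notMem] at this
        exact this x ⟨hxl, hx⟩
    · rintro x ⟨h1, h2⟩
      obtain ⟨l, hl2⟩ := Set.mem_iUnion.1 h1
      obtain ⟨hl3, hl4⟩ := Set.mem_iUnion.1 hl2
      rw [Fin.val_succ, Nat.lt_succ_iff] at hl3
      rcases lt_or_eq_of_le hl3 with h | h
      · exfalso
        apply h2
        refine Set.mem_iUnion.2 ⟨l, Set.mem_iUnion.2 ⟨?_, hl4⟩⟩
        rwa [Fin.coe_castSucc]
      · have : l = m := Fin.ext h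
        rwa [← this]
  have hXa : X (σ m) =ᵐ[volume] a m := by
    rw [ae_eq_set]
    refine ⟨haX_ae m, ?_⟩
    have : a m \ X (σ m) = ∅ := Set.diff_eq_empty.2 (haX m)
    rw [this]
    exact measure_empty
  have hIoc : Set.Icc 0 (c m.succ) \ Set.Icc 0 (c m.castSucc) = Set.Ioc (c m.castSucc) (c m.succ) := by
    ext x
    simp only [Set.mem_diff, Set.mem_Icc, Set.mem_Ioc]
    constructor
    · rintro ⟨⟨h1, h2⟩, h3⟩
      push_neg at h3
      exact ⟨h3 h1, h2⟩
    · rintro ⟨h1, h2⟩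
      have h0cs : 0 ≤ c m.castSucc := hc0' _
      refine ⟨⟨by linarith, h2⟩, ?_⟩
      push_neg
      intro _
      exact h1
  rw [ham_eq] at hXa
  have hfin := hXa.trans ((hDae m.succ).diff (hDae m.castSucc))
  rwa [hIoc] at hfin
end

section
/- Let n agents have single-peaked value densities on [0,1] with a common slope k, pairwise distinct peaks, supports whose union is [0,1], and normalized total value 1 each. Then every allocation that is non-wasteful, connected, and peak-preserving is Pareto optimal. -/
open MeasureTheory

namespace SPf
open MeasureTheory Set

variable {v v1 v2 : ℝ → ℝ} {p p1 p2 k : ℝ}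


variable {v v1 v2 : ℝ → ℝ} {p p1 p2 k : ℝ}

lemma nonneg (h : SinglePeakedD v p k) {x : ℝ} (hx : x ∈ Icc (0:ℝ) 1) : 0 ≤ v x := by
  rw [h.2.2.1 x hx]; exact le_max_left _ _

lemma cont (h : SinglePeakedD v p k) : ContinuousOn v (Icc (0:ℝ) 1) := by
  have hc : Continuous fun x : ℝ => max 0 (v p - k * |x - p|) := by
    exact continuous_const.max (continuous_const.sub (continuous_const.mul
      ((continuous_id.sub continuous_const).abs)))
  exact hc.continuousOn.congr h.2.2.1

lemma integrable (h : SinglePeakedD v p k) : IntegrableOn v (Icc (0:ℝ) 1) := by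
  exact (cont h).integrableOn_compact isCompact_Icc

lemma peak_pos (h : SinglePeakedD v p k) : 0 < v p := by
  by_contra hle
  push_neg at hle
  have hz : ∀ x ∈ Icc (0:ℝ) 1, v x = 0 := by
    intro x hx
    rw [h.2.2.1 x hx]
    apply max_eq_left
    have : 0 ≤ k * |x - p| := mul_nonneg h.1.le (abs_nonneg _)
    linarith
  have : (∫ x in Icc (0:ℝ) 1, v x) = 0 := by
    rw [setIntegral_congr_fun measurableSet_Icc hz]
    simp
  rw [h.2.2.2] at this
  norm_num at this

/-- strict integral comparison contradiction -/
lemma contra (h1 : SinglePeakedD v1 p1 k) (h2 : SinglePeakedD v2 p2 k)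
    (hle : ∀ x ∈ Icc (0:ℝ) 1, v1 x ≤ v2 x) {x0 : ℝ} (hx0 : x0 ∈ Icc (0:ℝ) 1)
    (hlt : v1 x0 < v2 x0) : False := by
  have hI : (∫ x in (0:ℝ)..1, v1 x) < ∫ x in (0:ℝ)..1, v2 x := by
    apply intervalIntegral.integral_lt_integral_of_continuousOn_of_le_of_exists_lt
      zero_lt_one (cont h1) (cont h2)
    · exact fun x hx => hle x (Ioc_subset_Icc_self hx)
    · exact ⟨x0, hx0, hlt⟩
  have e1 : (∫ x in (0:ℝ)..1, v1 x) = 1 := by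
    rw [intervalIntegral.integral_of_le zero_le_one, ← integral_Icc_eq_integral_Ioc]
    exact h1.2.2.2
  have e2 : (∫ x in (0:ℝ)..1, v2 x) = 1 := by
    rw [intervalIntegral.integral_of_le zero_le_one, ← integral_Icc_eq_integral_Ioc]
    exact h2.2.2.2
  rw [e1, e2] at hI
  exact lt_irrefl _ hI

/-- |s-p1| - |s-p2| is monotone nondecreasing when p1 ≤ p2 -/
lemma absdiff_mono {s t : ℝ} (hp : p1 ≤ p2) (hst : s ≤ t) :
    |s - p1| - |s - p2| ≤ |t - p1| - |t - p2| := by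
  rcases abs_cases (s - p1) with ⟨e1, f1⟩ | ⟨e1, f1⟩ <;>
  rcases abs_cases (s - p2) with ⟨e2, f2⟩ | ⟨e2, f2⟩ <;>
  rcases abs_cases (t - p1) with ⟨e3, f3⟩ | ⟨e3, f3⟩ <;>
  rcases abs_cases (t - p2) with ⟨e4, f4⟩ | ⟨e4, f4⟩ <;>
  linarith

/-- value at a point where v is positive equals the tent expression -/
lemma eq_tent (h : SinglePeakedD v p k) {x : ℝ} (hx : x ∈ Icc (0:ℝ) 1)
    (hpos : 0 < v x) : v x = v p - k * |x - p| := by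
  have hf := h.2.2.1 x hx
  rcases le_or_gt (v p - k * |x - p|) 0 with hc | hc
  · rw [max_eq_left hc] at hf; linarith
  · rw [max_eq_right hc.le] at hf; exact hf

lemma ge_tent (h : SinglePeakedD v p k) {x : ℝ} (hx : x ∈ Icc (0:ℝ) 1) :
    v p - k * |x - p| ≤ v x := by
  rw [h.2.2.1 x hx]; exact le_max_right _ _

lemma engineR (h1 : SinglePeakedD v1 p1 k) (h2 : SinglePeakedD v2 p2 k) (hp : p1 < p2)
    {x : ℝ} (hx : x ∈ Icc (0:ℝ) 1) (hpx : p2 ≤ x) (hlt : v2 x < v1 x) : False := by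
  have hv2nn : 0 ≤ v2 x := nonneg h2 hx
  have hv1pos : 0 < v1 x := lt_of_le_of_lt hv2nn hlt
  have e1 : v1 x = v1 p1 - k * |x - p1| := eq_tent h1 hx hv1pos
  have e2 : v2 p2 - k * |x - p2| ≤ v2 x := ge_tent h2 hx
  have claim : ∀ y ∈ Icc (0:ℝ) 1, v2 y ≤ v1 y := by
    intro y hy
    rw [h1.2.2.1 y hy, h2.2.2.1 y hy]
    apply max_le_max le_rfl
    rcases le_total y x with hyx | hxy
    · have habs := absdiff_mono (p1 := p1) (p2 := p2) hp.le hyx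
      have hk := mul_le_mul_of_nonneg_left habs h1.1.le
      linarith
    · have a1 : |y - p1| = y - p1 := abs_of_nonneg (by linarith)
      have a2 : |y - p2| = y - p2 := abs_of_nonneg (by linarith)
      have a3 : |x - p1| = x - p1 := abs_of_nonneg (by linarith)
      have a4 : |x - p2| = x - p2 := abs_of_nonneg (by linarith)
      rw [a1, a2]; rw [a3] at e1; rw [a4] at e2
      have hr : k * (y - p1) - k * (y - p2) = k * (x - p1) - k * (x - p2) := by ring
      linarith
  exact contra h2 h1 claim hx hlt

lemma engineL (h1 : SinglePeakedD v1 p1 k) (h2 : SinglePeakedD v2 p2 k) (hp : p1 < p2)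
    {x : ℝ} (hx : x ∈ Icc (0:ℝ) 1) (hpx : x ≤ p1) (hlt : v1 x < v2 x) : False := by
  have hv1nn : 0 ≤ v1 x := nonneg h1 hx
  have hv2pos : 0 < v2 x := lt_of_le_of_lt hv1nn hlt
  have e2 : v2 x = v2 p2 - k * |x - p2| := eq_tent h2 hx hv2pos
  have e1 : v1 p1 - k * |x - p1| ≤ v1 x := ge_tent h1 hx
  have claim : ∀ y ∈ Icc (0:ℝ) 1, v1 y ≤ v2 y := by
    intro y hy
    rw [h1.2.2.1 y hy, h2.2.2.1 y hy]
    apply max_le_max le_rfl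
    rcases le_total x y with hxy | hyx
    · have habs := absdiff_mono (p1 := p1) (p2 := p2) hp.le hxy
      have hk := mul_le_mul_of_nonneg_left habs h1.1.le
      linarith
    · have a1 : |y - p1| = p1 - y := by rw [abs_of_nonpos (by linarith : y - p1 ≤ 0)]; ring
      have a2 : |y - p2| = p2 - y := by rw [abs_of_nonpos (by linarith : y - p2 ≤ 0)]; ring
      have a3 : |x - p1| = p1 - x := by rw [abs_of_nonpos (by linarith : x - p1 ≤ 0)]; ring
      have a4 : |x - p2| = p2 - x := by rw [abs_of_nonpos (by linarith : x - p2 ≤ 0)]; ring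
      rw [a1, a2]; rw [a4] at e2; rw [a3] at e1
      have hr : k * (p1 - y) - k * (p2 - y) = k * (p1 - x) - k * (p2 - x) := by ring
      linarith
  exact contra h1 h2 claim hx hlt

lemma lemA (h1 : SinglePeakedD v1 p1 k) (h2 : SinglePeakedD v2 p2 k) (hp : p1 < p2)
    {x : ℝ} (hx : x ∈ Icc (0:ℝ) 1) (hpx : p2 ≤ x) : v1 x ≤ v2 x := by
  by_contra hlt; push_neg at hlt; exact engineR h1 h2 hp hx hpx hlt

lemma lemA' (h1 : SinglePeakedD v1 p1 k) (h2 : SinglePeakedD v2 p2 k) (hp : p1 < p2)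
    {x : ℝ} (hx : x ∈ Icc (0:ℝ) 1) (hpx : x ≤ p1) : v2 x ≤ v1 x := by
  by_contra hlt; push_neg at hlt; exact engineL h1 h2 hp hx hpx hlt

lemma lem2a (h1 : SinglePeakedD v1 p1 k) (h2 : SinglePeakedD v2 p2 k) (hp : p1 < p2)
    {x y : ℝ} (hx : x ∈ Icc (0:ℝ) 1) (hy : y ∈ Icc (0:ℝ) 1) (hxy : x ≤ y)
    (h1x : v1 x = 0) (h1y : 0 < v1 y) (h2x : 0 < v2 x) : False := by
  have hxp : x ≤ p1 := by
    by_contra hgt; push_neg at hgt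
    -- p1 < x ≤ y : tent decreasing, v1 y ≤ ... ≤ 0
    have e1 : v1 y = v1 p1 - k * |y - p1| := eq_tent h1 hy h1y
    have hf := h1.2.2.1 x hx
    rw [h1x] at hf
    have ht1x : v1 p1 - k * |x - p1| ≤ 0 := by
      by_contra hpos; push_neg at hpos
      rw [max_eq_right hpos.le] at hf; linarith
    have a1 : |y - p1| = y - p1 := abs_of_nonneg (by linarith)
    have a2 : |x - p1| = x - p1 := abs_of_nonneg (by linarith)
    nlinarith [h1.1.le]
  exact engineL h1 h2 hp hx hxp (by rw [h1x]; exact h2x)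

lemma lem2b (h1 : SinglePeakedD v1 p1 k) (h2 : SinglePeakedD v2 p2 k) (hp : p1 < p2)
    {x y : ℝ} (hx : x ∈ Icc (0:ℝ) 1) (hy : y ∈ Icc (0:ℝ) 1) (hxy : x ≤ y)
    (h2y : v2 y = 0) (h2x : 0 < v2 x) (h1y : 0 < v1 y) : False := by
  have hyp : p2 ≤ y := by
    by_contra hgt; push_neg at hgt
    have e2 : v2 x = v2 p2 - k * |x - p2| := eq_tent h2 hx h2x
    have hf := h2.2.2.1 y hy
    rw [h2y] at hf
    have ht2y : v2 p2 - k * |y - p2| ≤ 0 := by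
      by_contra hpos; push_neg at hpos
      rw [max_eq_right hpos.le] at hf; linarith
    have a1 : |y - p2| = p2 - y := by rw [abs_of_nonpos (by linarith : y - p2 ≤ 0)]; ring
    have a2 : |x - p2| = p2 - x := by rw [abs_of_nonpos (by linarith : x - p2 ≤ 0)]; ring
    nlinarith [h2.1.le]
  exact engineR h1 h2 hp hy hyp (by rw [h2y]; exact h1y)

lemma zmax1 {ta tc d : ℝ} (hd : 0 ≤ d) (hAC : max 0 tc ≤ max 0 ta) :
    max 0 (ta + d) * max 0 tc ≤ max 0 ta * max 0 (tc + d) := by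
  rcases le_or_gt tc 0 with h | h
  · rw [max_eq_left h, mul_zero]
    exact mul_nonneg (le_max_left _ _) (le_max_left _ _)
  · have hta : 0 < ta := by
      rcases le_or_gt ta 0 with h' | h'
      · rw [max_eq_left h', max_eq_right h.le] at hAC; linarith
      · exact h'
    rw [max_eq_right h.le, max_eq_right hta.le] at hAC ⊢
    rw [max_eq_right (by linarith : (0:ℝ) ≤ ta + d), max_eq_right (by linarith : (0:ℝ) ≤ tc + d)]
    nlinarith
lemma zmax2 {ta tc d : ℝ} (hd : 0 ≤ d) (htc : 0 ≤ max 0 tc) :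
    max 0 (ta - d) * max 0 tc ≤ max 0 ta * max 0 (tc + d) := by
  rcases le_or_gt (ta - d) 0 with h | h
  · rw [max_eq_left h, zero_mul]
    exact mul_nonneg (le_max_left _ _) (le_max_left _ _)
  · have h2 : max 0 ta = ta := max_eq_right (by linarith)
    rcases le_or_gt tc 0 with h3 | h3
    · rw [max_eq_left h3, mul_zero]
      exact mul_nonneg (le_max_left _ _) (le_max_left _ _)
    · rw [max_eq_right h.le, max_eq_right h3.le, h2,
        max_eq_right (by linarith : (0:ℝ) ≤ tc + d)]
      nlinarith
lemma zmax3 {ta tc d : ℝ} (hd : 0 ≤ d) (hAC : max 0 ta ≤ max 0 tc) :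
    max 0 (ta - d) * max 0 tc ≤ max 0 ta * max 0 (tc - d) := by
  rcases le_or_gt (ta - d) 0 with h | h
  · rw [max_eq_left h, zero_mul]
    exact mul_nonneg (le_max_left _ _) (le_max_left _ _)
  · have hta : 0 < ta := by linarith
    rw [max_eq_right hta.le] at hAC
    have htc : 0 < tc := by
      rcases le_or_gt tc 0 with h' | h'
      · rw [max_eq_left h'] at hAC; linarith
      · exact h'
    rw [max_eq_right htc.le] at hAC
    rw [max_eq_right h.le, max_eq_right htc.le, max_eq_right hta.le,
      max_eq_right (by linarith : (0:ℝ) ≤ tc - d)]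
    nlinarith

lemma zone1 (h1 : SinglePeakedD v1 p1 k) (h2 : SinglePeakedD v2 p2 k) (hp : p1 < p2)
    {x y : ℝ} (hx : x ∈ Icc (0:ℝ) 1) (hy : y ∈ Icc (0:ℝ) 1) (hxy : x ≤ y)
    (hy1 : y ≤ p1) : v1 y * v2 x ≤ v1 x * v2 y := by
  have hAC : max 0 (v2 p2 - k * |x - p2|) ≤ max 0 (v1 p1 - k * |x - p1|) := by
    rw [← h1.2.2.1 x hx, ← h2.2.2.1 x hx]
    exact lemA' h1 h2 hp hx (le_trans hxy hy1)
  have a1 : |y - p1| = p1 - y := by rw [abs_of_nonpos (by linarith : y - p1 ≤ 0)]; ring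
  have a2 : |y - p2| = p2 - y := by rw [abs_of_nonpos (by linarith : y - p2 ≤ 0)]; ring
  have a3 : |x - p1| = p1 - x := by rw [abs_of_nonpos (by linarith : x - p1 ≤ 0)]; ring
  have a4 : |x - p2| = p2 - x := by rw [abs_of_nonpos (by linarith : x - p2 ≤ 0)]; ring
  rw [h1.2.2.1 y hy, h2.2.2.1 y hy, h1.2.2.1 x hx, h2.2.2.1 x hx, a1, a2, a3, a4]
  rw [a3, a4] at hAC
  have e1 : v1 p1 - k * (p1 - y) = (v1 p1 - k * (p1 - x)) + k * (y - x) := by ring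
  have e2 : v2 p2 - k * (p2 - y) = (v2 p2 - k * (p2 - x)) + k * (y - x) := by ring
  rw [e1, e2]
  exact zmax1 (mul_nonneg h1.1.le (by linarith)) hAC

lemma zone2 (h1 : SinglePeakedD v1 p1 k) (h2 : SinglePeakedD v2 p2 k) (hp : p1 < p2)
    {x y : ℝ} (hx : x ∈ Icc (0:ℝ) 1) (hy : y ∈ Icc (0:ℝ) 1) (hxy : x ≤ y)
    (hx1 : p1 ≤ x) (hy2 : y ≤ p2) : v1 y * v2 x ≤ v1 x * v2 y := by
  have a1 : |y - p1| = y - p1 := abs_of_nonneg (by linarith)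
  have a2 : |y - p2| = p2 - y := by rw [abs_of_nonpos (by linarith : y - p2 ≤ 0)]; ring
  have a3 : |x - p1| = x - p1 := abs_of_nonneg (by linarith)
  have a4 : |x - p2| = p2 - x := by rw [abs_of_nonpos (by linarith : x - p2 ≤ 0)]; ring
  rw [h1.2.2.1 y hy, h2.2.2.1 y hy, h1.2.2.1 x hx, h2.2.2.1 x hx, a1, a2, a3, a4]
  have e1 : v1 p1 - k * (y - p1) = (v1 p1 - k * (x - p1)) - k * (y - x) := by ring
  have e2 : v2 p2 - k * (p2 - y) = (v2 p2 - k * (p2 - x)) + k * (y - x) := by ring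
  rw [e1, e2]
  exact zmax2 (mul_nonneg h1.1.le (by linarith)) (le_max_left _ _)

lemma zone3 (h1 : SinglePeakedD v1 p1 k) (h2 : SinglePeakedD v2 p2 k) (hp : p1 < p2)
    {x y : ℝ} (hx : x ∈ Icc (0:ℝ) 1) (hy : y ∈ Icc (0:ℝ) 1) (hxy : x ≤ y)
    (hx2 : p2 ≤ x) : v1 y * v2 x ≤ v1 x * v2 y := by
  have hAC : max 0 (v1 p1 - k * |x - p1|) ≤ max 0 (v2 p2 - k * |x - p2|) := by
    rw [← h1.2.2.1 x hx, ← h2.2.2.1 x hx]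
    exact lemA h1 h2 hp hx hx2
  have a1 : |y - p1| = y - p1 := abs_of_nonneg (by linarith)
  have a2 : |y - p2| = y - p2 := abs_of_nonneg (by linarith)
  have a3 : |x - p1| = x - p1 := abs_of_nonneg (by linarith)
  have a4 : |x - p2| = x - p2 := abs_of_nonneg (by linarith)
  rw [h1.2.2.1 y hy, h2.2.2.1 y hy, h1.2.2.1 x hx, h2.2.2.1 x hx, a1, a2, a3, a4]
  rw [a3, a4] at hAC
  have e1 : v1 p1 - k * (y - p1) = (v1 p1 - k * (x - p1)) - k * (y - x) := by ring
  have e2 : v2 p2 - k * (y - p2) = (v2 p2 - k * (x - p2)) - k * (y - x) := by ring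
  rw [e1, e2]
  exact zmax3 (mul_nonneg h1.1.le (by linarith)) hAC

lemma midpos (h : SinglePeakedD v p k) {x y m : ℝ} (hx : x ∈ Icc (0:ℝ) 1)
    (hy : y ∈ Icc (0:ℝ) 1) (hm : m ∈ Icc x y) (hvx : 0 < v x) (hvy : 0 < v y) :
    0 < v m := by
  have hmI : m ∈ Icc (0:ℝ) 1 := ⟨le_trans hx.1 hm.1, le_trans hm.2 hy.2⟩
  have ex := eq_tent h hx hvx
  have ey := eq_tent h hy hvy
  have hgt := ge_tent h hmI
  have habs : |m - p| ≤ max (|x - p|) (|y - p|) := by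
    rcases le_total p m with hpm | hmp
    · rw [abs_of_nonneg (by linarith : (0:ℝ) ≤ m - p)]
      refine le_max_of_le_right ?_
      calc m - p ≤ y - p := by linarith [hm.2]
        _ ≤ |y - p| := le_abs_self _
    · rw [abs_of_nonpos (by linarith : m - p ≤ 0)]
      refine le_max_of_le_left ?_
      calc -(m - p) = p - m := by ring
        _ ≤ p - x := by linarith [hm.1]
        _ ≤ |x - p| := by rw [abs_sub_comm]; exact le_trans (le_of_eq rfl) (le_abs_self _)
  rcases le_total (|x - p|) (|y - p|) with hc | hc
  · rw [max_eq_right hc] at habs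
    nlinarith [h.1]
  · rw [max_eq_left hc] at habs
    nlinarith [h.1]

lemma rtrans {vx1 vm1 vy1 vx2 vm2 vy2 : ℝ} (hm2 : 0 < vm2)
    (hx2 : 0 ≤ vx2) (hy2 : 0 ≤ vy2)
    (r1 : vm1 * vx2 ≤ vx1 * vm2) (r2 : vy1 * vm2 ≤ vm1 * vy2) :
    vy1 * vx2 ≤ vx1 * vy2 := by
  have h1 : vy1 * vm2 * vx2 ≤ vm1 * vy2 * vx2 := mul_le_mul_of_nonneg_right r2 hx2
  have h2 : vm1 * vx2 * vy2 ≤ vx1 * vm2 * vy2 := mul_le_mul_of_nonneg_right r1 hy2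
  have key : vy1 * vx2 * vm2 ≤ vx1 * vy2 * vm2 := by nlinarith
  exact le_of_mul_le_mul_right key hm2

/-- THE key ratio monotonicity lemma -/
lemma lemB (h1 : SinglePeakedD v1 p1 k) (h2 : SinglePeakedD v2 p2 k) (hp : p1 < p2)
    {x y : ℝ} (hx : x ∈ Icc (0:ℝ) 1) (hy : y ∈ Icc (0:ℝ) 1) (hxy : x ≤ y) :
    v1 y * v2 x ≤ v1 x * v2 y := by
  rcases eq_or_lt_of_le (nonneg h1 hy) with h1y | h1y
  · rw [← h1y, zero_mul]; exact mul_nonneg (nonneg h1 hx) (nonneg h2 hy)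
  rcases eq_or_lt_of_le (nonneg h2 hx) with h2x | h2x
  · rw [← h2x, mul_zero]; exact mul_nonneg (nonneg h1 hx) (nonneg h2 hy)
  rcases eq_or_lt_of_le (nonneg h1 hx) with h1x | h1x
  · exact (lem2a h1 h2 hp hx hy hxy h1x.symm h1y h2x).elim
  rcases eq_or_lt_of_le (nonneg h2 hy) with h2y | h2y
  · exact (lem2b h1 h2 hp hx hy hxy h2y.symm h2x h1y).elim
  -- all four positive
  rcases le_total y p1 with hc | hc
  · exact zone1 h1 h2 hp hx hy hxy hc
  rcases le_total p2 x with hd | hd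
  · exact zone3 h1 h2 hp hx hy hxy hd
  rcases le_total x p1 with he | he
  · rcases le_total y p2 with hf | hf
    · -- x ≤ p1 ≤ y ≤ p2 : chain at p1
      have r1 := zone1 h1 h2 hp hx h1.2.1 he le_rfl
      have r2 := zone2 h1 h2 hp h1.2.1 hy hc le_rfl hf
      exact rtrans (midpos h2 hx hy ⟨he, hc⟩ h2x h2y) (nonneg h2 hx) (nonneg h2 hy) r1 r2
    · -- x ≤ p1, p2 ≤ y : chain at p1 and p2
      have rA := zone1 h1 h2 hp hx h1.2.1 he le_rfl
      have r2a := zone2 h1 h2 hp h1.2.1 h2.2.1 hp.le le_rfl le_rfl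
      have r2b := zone3 h1 h2 hp h2.2.1 hy hf le_rfl
      have rB := rtrans (peak_pos h2) (nonneg h2 h1.2.1) (nonneg h2 hy) r2a r2b
      exact rtrans (midpos h2 hx hy ⟨he, le_trans hp.le hf⟩ h2x h2y)
        (nonneg h2 hx) (nonneg h2 hy) rA rB
  · rcases le_total y p2 with hf | hf
    · exact zone2 h1 h2 hp hx hy hxy he hf
    · -- p1 ≤ x ≤ p2 ≤ y : chain at p2
      have r1 := zone2 h1 h2 hp hx h2.2.1 hd he le_rfl
      have r2 := zone3 h1 h2 hp h2.2.1 hy hf le_rfl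
      exact rtrans (peak_pos h2) (nonneg h2 hx) (nonneg h2 hy) r1 r2
lemma zero_tent (h : SinglePeakedD v p k) {x : ℝ} (hx : x ∈ Icc (0:ℝ) 1)
    (h0 : v x = 0) : v p - k * |x - p| ≤ 0 := by
  by_contra hc
  push_neg at hc
  have := h.2.2.1 x hx
  rw [max_eq_right hc.le] at this
  linarith

lemma tentTailR (h : SinglePeakedD v p k) {x0 E y : ℝ} (hx0 : x0 ∈ Icc (0:ℝ) 1)
    (hE : E ∈ Icc (0:ℝ) 1) (hy : y ∈ Icc (0:ℝ) 1) (hx0E : x0 < E)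
    (hx0pos : 0 < v x0) (hE0 : v E = 0) (hEy : E ≤ y) : v y = 0 := by
  have htx0 := eq_tent h hx0 hx0pos
  have htE := zero_tent h hE hE0
  have hpE : p < E := by
    by_contra hc
    push_neg at hc
    have a1 : |E - p| = p - E := by rw [abs_of_nonpos (by linarith : E - p ≤ 0)]; ring
    have a2 : |x0 - p| = p - x0 := by rw [abs_of_nonpos (by linarith : x0 - p ≤ 0)]; ring
    rw [a1] at htE
    rw [a2] at htx0
    nlinarith [h.1]
  have a1 : |E - p| = E - p := abs_of_nonneg (by linarith)
  have a2 : |y - p| = y - p := abs_of_nonneg (by linarith)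
  have hty : v p - k * |y - p| ≤ 0 := by
    rw [a2]; rw [a1] at htE
    nlinarith [h.1]
  rw [h.2.2.1 y hy, max_eq_left hty]

lemma tentTailL (h : SinglePeakedD v p k) {x0 E y : ℝ} (hx0 : x0 ∈ Icc (0:ℝ) 1)
    (hE : E ∈ Icc (0:ℝ) 1) (hy : y ∈ Icc (0:ℝ) 1) (hx0E : E < x0)
    (hx0pos : 0 < v x0) (hE0 : v E = 0) (hEy : y ≤ E) : v y = 0 := by
  have htx0 := eq_tent h hx0 hx0pos
  have htE := zero_tent h hE hE0
  have hpE : E < p := by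
    by_contra hc
    push_neg at hc
    have a1 : |E - p| = E - p := abs_of_nonneg (by linarith)
    have a2 : |x0 - p| = x0 - p := abs_of_nonneg (by linarith)
    rw [a1] at htE
    rw [a2] at htx0
    nlinarith [h.1]
  have a1 : |E - p| = p - E := by rw [abs_of_nonpos (by linarith : E - p ≤ 0)]; ring
  have a2 : |y - p| = p - y := by rw [abs_of_nonpos (by linarith : y - p ≤ 0)]; ring
  have hty : v p - k * |y - p| ≤ 0 := by
    rw [a2]; rw [a1] at htE
    nlinarith [h.1]
  rw [h.2.2.1 y hy, max_eq_left hty]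

lemma posOnPiece (h : SinglePeakedD v p k) {lo hi : ℝ} (hlo : lo ∈ Icc (0:ℝ) 1)
    (hhi : hi ∈ Icc (0:ℝ) 1)
    (hnull : volume (Ioc lo hi \ Supp01 v) = 0) {x : ℝ} (hx : x ∈ Ioo lo hi) :
    0 < v x := by
  by_contra hc
  push_neg at hc
  have hxI : x ∈ Icc (0:ℝ) 1 := ⟨le_trans hlo.1 hx.1.le, le_trans hx.2.le hhi.2⟩
  have hx0 : v x = 0 := le_antisymm hc (nonneg h hxI)
  have htx := zero_tent h hxI hx0
  rcases le_total p x with hpx | hxp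
  · -- the interval (x, hi) has v = 0
    have hsub : Ioo x hi ⊆ Ioc lo hi \ Supp01 v := by
      intro t ht
      have htI : t ∈ Icc (0:ℝ) 1 := ⟨le_trans hlo.1 (lt_trans hx.1 ht.1).le,
        le_trans ht.2.le hhi.2⟩
      refine ⟨⟨lt_trans hx.1 ht.1, ht.2.le⟩, ?_⟩
      intro hmem
      have hpos : 0 < v t := hmem.2
      have htt := eq_tent h htI hpos
      have a1 : |x - p| = x - p := abs_of_nonneg (by linarith)
      have a2 : |t - p| = t - p := abs_of_nonneg (by linarith [ht.1])
      rw [a1] at htx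
      rw [a2] at htt
      nlinarith [h.1, ht.1]
    have := measure_mono_null hsub hnull
    rw [Real.volume_Ioo] at this
    have h2 : hi - x > 0 := by linarith [hx.2]
    rw [ENNReal.ofReal_eq_zero] at this
    linarith
  · have hsub : Ioo lo x ⊆ Ioc lo hi \ Supp01 v := by
      intro t ht
      have htI : t ∈ Icc (0:ℝ) 1 := ⟨le_trans hlo.1 ht.1.le,
        le_trans (lt_trans ht.2 hx.2).le hhi.2⟩
      refine ⟨⟨ht.1, (lt_trans ht.2 hx.2).le⟩, ?_⟩
      intro hmem
      have hpos : 0 < v t := hmem.2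
      have htt := eq_tent h htI hpos
      have a1 : |x - p| = p - x := by rw [abs_of_nonpos (by linarith : x - p ≤ 0)]; ring
      have a2 : |t - p| = p - t := by rw [abs_of_nonpos (by linarith [ht.2] : t - p ≤ 0)]; ring
      rw [a1] at htx
      rw [a2] at htt
      nlinarith [h.1, ht.2]
    have := measure_mono_null hsub hnull
    rw [Real.volume_Ioo] at this
    have h2 : x - lo > 0 := by linarith [hx.1]
    rw [ENNReal.ofReal_eq_zero] at this
    linarith

lemma emono2 {e : ℕ → ℝ} {m : ℕ} (hem : ∀ j, j < m → e j ≤ e (j+1)) :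
    ∀ {i j}, i ≤ j → j ≤ m → e i ≤ e j := by
  intro i j hij hjm
  obtain ⟨d, rfl⟩ : ∃ d, j = i + d := ⟨j - i, by omega⟩
  clear hij
  induction d with
  | zero => exact le_rfl
  | succ dd ih =>
    have h1 : i + dd ≤ m := by omega
    have := hem (i + dd) (by omega)
    have h2 : i + (dd+1) = (i+dd) + 1 := by omega
    rw [h2]
    exact le_trans (ih h1) this

lemma gapconst {e : ℕ → ℝ} : ∀ {t j : ℕ}, t < j → (∀ r, t < r → r < j → e r = e (r+1)) →
    e (t+1) = e j := by
  intro t j htj hconst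
  induction j with
  | zero => omega
  | succ jj ih =>
    rcases Nat.lt_or_ge t jj with h | h
    · have h2 := ih h (fun r hr1 hr2 => hconst r hr1 (by omega))
      rw [h2]
      exact hconst jj h (by omega)
    · have : t = jj := by omega
      subst this
      rfl

lemma iocdecomp {e : ℕ → ℝ} {m : ℕ} (hem : ∀ j, j < m → e j ≤ e (j+1)) :
    ∀ {a b}, a ≤ b → b ≤ m →
      Ioc (e a) (e b) = ⋃ j ∈ Finset.Ico a b, Ioc (e j) (e (j+1)) := by
  intro a b hab hbm
  induction b with
  | zero =>
    have : a = 0 := by omega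
    subst this; simp
  | succ bb ih =>
    rcases Nat.lt_or_ge a (bb+1) with h | h
    · have hab' : a ≤ bb := by omega
      have hbm' : bb ≤ m := by omega
      rw [Nat.Ico_succ_right_eq_insert_Ico hab', Finset.set_biUnion_insert, ← ih hab' hbm',
        Set.union_comm, Ioc_union_Ioc_eq_Ioc (emono2 hem hab' hbm') (hem bb (by omega))]
    · have : a = bb + 1 := by omega
      subst this; simp

/-- disjointness of the Ioc pieces -/
lemma piece_disj {e : ℕ → ℝ} {m : ℕ} (hem : ∀ j, j < m → e j ≤ e (j+1))
    {j l : ℕ} (hjl : j ≠ l) (hj : j < m) (hl : l < m) {x : ℝ}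
    (hxj : x ∈ Ioc (e j) (e (j+1))) (hxl : x ∈ Ioc (e l) (e (l+1))) : False := by
  rcases Nat.lt_or_ge j l with h | h
  · have : e (j+1) ≤ e l := emono2 hem (by omega) (by omega)
    have := hxj.2
    have := hxl.1
    linarith
  · have hlj : l < j := by omega
    have : e (l+1) ≤ e j := emono2 hem (by omega) (by omega)
    have := hxl.2
    have := hxj.1
    linarith

lemma baseCase {m : ℕ} {e : ℕ → ℝ} {f : ℕ → ℝ → ℝ} {Z : ℕ → Set ℝ}
    (hem : ∀ j, j < m → e j ≤ e (j+1))
    (heI : ∀ j, j ≤ m → e j ∈ Icc (0:ℝ) 1)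
    (hfnn : ∀ j, j < m → ∀ x ∈ Icc (0:ℝ) 1, 0 ≤ f j x)
    (hfint : ∀ j, j < m → IntegrableOn (f j) (Icc (0:ℝ) 1))
    (hfpos : ∀ j, j < m → ∀ x ∈ Ioo (e j) (e (j+1)), 0 < f j x)
    (hB : ∀ j j', j < j' → j' < m → ∀ x ∈ Icc (0:ℝ) 1, ∀ y ∈ Icc (0:ℝ) 1, x ≤ y →
      f j y * f j' x ≤ f j x * f j' y)
    (hZm : ∀ j, MeasurableSet (Z j))
    (hZsub : ∀ j, Z j ⊆ Icc (0:ℝ) 1)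
    (hZdisj : ∀ j j', j ≠ j' → Z j ∩ Z j' = ∅)
    (hZe : ∀ j, j < m → ¬ e j < e (j+1) → Z j = ∅)
    (hdom : ∀ j, j < m → (∫ x in Ioc (e j) (e (j+1)), f j x) ≤ ∫ x in Z j, f j x)
    {a b : ℕ} (hab : a < b) (hbm : b ≤ m)
    (hconf : ∀ j, a ≤ j → j < b → (∀ᵐ x, x ∈ Z j → x ∈ Ioc (e a) (e b) ∨ f j x = 0))
    (hlinkR : ∀ s, a ≤ s → s+1 < b → e s < e (s+1) → 0 < f s (e (s+1)))
    (hlinkL : ∀ s, a < s → s < b → e s < e (s+1) → 0 < f s (e s)) :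
    (∀ j, a ≤ j → j < b → (∫ x in Z j, f j x) = ∫ x in Ioc (e j) (e (j+1)), f j x) ∧
      volume (Ioc (e a) (e b) \ ⋃ j ∈ Finset.Ico a b, Z j) = 0 := by
  classical
  set La : ℕ → ℝ := fun s => if e s < e (s+1) then f s (e (s+1)) else 1 with hLadef
  set Rb : ℕ → ℝ := fun s => if e (s+1) < e (s+1+1) then f (s+1) (e (s+1)) else 1 with hRbdef
  set w : ℕ → ℝ := fun j =>
    (∏ s ∈ Finset.Ico a j, La s) * (∏ s ∈ Finset.Ico j (b-1), Rb s) with hwdef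
  have hIccP : ∀ j, j < m → Ioc (e j) (e (j+1)) ⊆ Icc (0:ℝ) 1 := by
    intro j hj x hx
    exact ⟨le_trans (heI j hj.le).1 hx.1.le, le_trans hx.2 (heI (j+1) hj).2⟩
  have hLapos : ∀ s, a ≤ s → s+1 < b → 0 < La s := by
    intro s h1 h2
    rw [hLadef]
    dsimp only
    split_ifs with hne
    · exact hlinkR s h1 h2 hne
    · exact one_pos
  have hRbpos : ∀ s, a ≤ s → s+1 < b → 0 < Rb s := by
    intro s h1 h2
    rw [hRbdef]
    dsimp only
    split_ifs with hne
    · exact hlinkL (s+1) (by omega) h2 hne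
    · exact one_pos
  have hLann : ∀ s, s+1 ≤ m → 0 ≤ La s := by
    intro s h1
    rw [hLadef]; dsimp only
    split_ifs with hne
    · exact hfnn s (by omega) _ (heI (s+1) h1)
    · exact zero_le_one
  have hRbnn : ∀ s, s+2 ≤ m → 0 ≤ Rb s := by
    intro s h1
    rw [hRbdef]; dsimp only
    split_ifs with hne
    · exact hfnn (s+1) (by omega) _ (heI (s+1) (by omega))
    · exact zero_le_one
  have hwpos : ∀ j, a ≤ j → j < b → 0 < w j := by
    intro j h1 h2
    rw [hwdef]; dsimp only
    apply mul_pos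
    · apply Finset.prod_pos
      intro s hs
      rw [Finset.mem_Ico] at hs
      exact hLapos s hs.1 (by omega)
    · apply Finset.prod_pos
      intro s hs
      rw [Finset.mem_Ico] at hs
      exact hRbpos s (by omega) (by omega)
  have hwnn : ∀ j, a ≤ j → j < b → 0 ≤ w j := fun j h1 h2 => (hwpos j h1 h2).le
  -- pair identity for consecutive nonempty pieces
  have hgap : ∀ t t', t < t' → (∀ r, t < r → r < t' → ¬ e r < e (r+1)) →
      t' ≤ m → e (t+1) = e t' := by
    intro t t' h1 h2 h3
    apply gapconst h1
    intro r hr1 hr2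
    exact le_antisymm (hem r (by omega)) (not_lt.mp (h2 r hr1 hr2))
  have hpair : ∀ t t', a ≤ t → t < t' → t' < b → e t < e (t+1) → e t' < e (t'+1) →
      (∀ r, t < r → r < t' → ¬ e r < e (r+1)) →
      ∃ K, 0 ≤ K ∧ w t = K * f t' (e t') ∧ w t' = K * f t (e (t+1)) := by
    intro t t' h1 h2 h3 h4 h5 h6
    refine ⟨(∏ s ∈ Finset.Ico a t, La s) * (∏ s ∈ Finset.Ico t' (b-1), Rb s), ?_, ?_, ?_⟩
    · apply mul_nonneg
      · exact Finset.prod_nonneg fun s hs => hLann s (by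
          rw [Finset.mem_Ico] at hs; omega)
      · exact Finset.prod_nonneg fun s hs => hRbnn s (by
          rw [Finset.mem_Ico] at hs; omega)
    · -- w t = K * f t' (e t')
      rw [hwdef]; dsimp only
      have hsplit : (∏ s ∈ Finset.Ico t (b-1), Rb s) =
          (∏ s ∈ Finset.Ico t t', Rb s) * (∏ s ∈ Finset.Ico t' (b-1), Rb s) :=
        (Finset.prod_Ico_consecutive Rb h2.le (by omega)).symm
      have hmid : (∏ s ∈ Finset.Ico t t', Rb s) = f t' (e t') := by
        have ht'pos : 1 ≤ t' := by omega
        have hmem : t' - 1 ∈ Finset.Ico t t' := by rw [Finset.mem_Ico]; omega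
        rw [Finset.prod_eq_single (t'-1)]
        · have hidx : t' - 1 + 1 = t' := by omega
          rw [hRbdef]; dsimp only
          rw [hidx, if_pos h5]
        · intro s hs hne
          rw [Finset.mem_Ico] at hs
          rw [hRbdef]; dsimp only
          rw [if_neg (h6 (s+1) (by omega) (by omega))]
        · intro hmem'
          exact absurd hmem hmem'
      rw [hsplit, hmid]; ring
    · -- w t' = K * f t (e (t+1))
      rw [hwdef]; dsimp only
      have hsplit : (∏ s ∈ Finset.Ico a t', La s) =
          (∏ s ∈ Finset.Ico a t, La s) * (∏ s ∈ Finset.Ico t t', La s) :=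
        (Finset.prod_Ico_consecutive La (by omega) h2.le).symm
      have hmid : (∏ s ∈ Finset.Ico t t', La s) = f t (e (t+1)) := by
        have hmem : t ∈ Finset.Ico t t' := by rw [Finset.mem_Ico]; omega
        rw [Finset.prod_eq_single t]
        · rw [hLadef]; dsimp only
          rw [if_pos h4]
        · intro s hs hne
          rw [Finset.mem_Ico] at hs
          rw [hLadef]; dsimp only
          rw [if_neg (h6 s (by omega) (by omega))]
        · intro hmem'
          exact absurd hmem hmem'
      rw [hsplit, hmid]; ring
  have hxIcc : ∀ l, l < m → ∀ x ∈ Ioc (e l) (e (l+1)), x ∈ Icc (0:ℝ) 1 :=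
    fun l hl x hx => hIccP l hl hx
  -- the chain dominance
  have hchain : ∀ l, a ≤ l → l < b → e l < e (l+1) → ∀ x ∈ Ioc (e l) (e (l+1)),
      ∀ j, a ≤ j → j < b → e j < e (j+1) → w j * f j x ≤ w l * f l x := by
    intro l hal hlb hlne x hx j haj hjb hjne
    have hxI : x ∈ Icc (0:ℝ) 1 := hxIcc l (by omega) x hx
    have down : ∀ d j, a ≤ j → j < b → e j < e (j+1) → l ≤ j → j - l ≤ d →
        w j * f j x ≤ w l * f l x := by
      intro d
      induction d with
      | zero =>
        intro j h1 h2 h3 h4 h5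
        have : j = l := by omega
        subst this; exact le_rfl
      | succ dd ih =>
        intro j h1 h2 h3 h4 h5
        rcases eq_or_lt_of_le h4 with heq | hlt
        · subst heq; exact le_rfl
        · set F := (Finset.Ico a j).filter (fun s => e s < e (s+1)) with hFdef
          have hlF : l ∈ F := by
            rw [hFdef, Finset.mem_filter, Finset.mem_Ico]
            exact ⟨⟨hal, hlt⟩, hlne⟩
          have hFne : F.Nonempty := ⟨l, hlF⟩
          set t := F.max' hFne with htdef
          have htF : t ∈ F := F.max'_mem hFne
          rw [hFdef, Finset.mem_filter, Finset.mem_Ico] at htF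
          obtain ⟨⟨hta, htj⟩, htne⟩ := htF
          have hlt' : l ≤ t := F.le_max' l hlF
          have hgapE : ∀ r, t < r → r < j → ¬ e r < e (r+1) := by
            intro r hr1 hr2 hcon
            have hrF : r ∈ F := by
              rw [hFdef, Finset.mem_filter, Finset.mem_Ico]
              exact ⟨⟨by omega, hr2⟩, hcon⟩
            have := F.le_max' r hrF
            omega
          have hE : e (t+1) = e j := hgap t j htj hgapE (by omega)
          obtain ⟨K, hK0, hwt, hwj⟩ := hpair t j hta htj h2 htne h3 hgapE
          have hEI : e j ∈ Icc (0:ℝ) 1 := heI j (by omega)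
          have hxE : x ≤ e j := by
            have h6 : e (l+1) ≤ e j := by
              rw [← hE]; exact emono2 hem (by omega) (by omega)
            exact le_trans hx.2 h6
          have hBtj := hB t j (by omega) (by omega) x hxI (e j) hEI hxE
          -- w j * f j x = K * f t (e (t+1)) * f j x ≤ K * f j (e j) * f t x = w t * f t x
          have step : w j * f j x ≤ w t * f t x := by
            rw [hwt, hwj]
            rw [hE]
            calc K * f t (e j) * f j x = K * (f t (e j) * f j x) := by ring
              _ ≤ K * (f t x * f j (e j)) := by
                  apply mul_le_mul_of_nonneg_left _ hK0
                  calc f t (e j) * f j x = f t (e j) * f j x := rfl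
                    _ ≤ f t x * f j (e j) := by
                        have := hBtj
                        nlinarith [hBtj]
              _ = K * f j (e j) * f t x := by ring
          exact le_trans step (ih t hta (by omega) htne hlt' (by omega))
    have up : ∀ d j, a ≤ j → j < b → e j < e (j+1) → j ≤ l → l - j ≤ d →
        w j * f j x ≤ w l * f l x := by
      intro d
      induction d with
      | zero =>
        intro j h1 h2 h3 h4 h5
        have : j = l := by omega
        subst this; exact le_rfl
      | succ dd ih =>
        intro j h1 h2 h3 h4 h5
        rcases eq_or_lt_of_le h4 with heq | hlt
        · subst heq; exact le_rfl
        · set F := (Finset.Ico (j+1) b).filter (fun s => e s < e (s+1)) with hFdef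
          have hlF : l ∈ F := by
            rw [hFdef, Finset.mem_filter, Finset.mem_Ico]
            exact ⟨⟨by omega, hlb⟩, hlne⟩
          have hFne : F.Nonempty := ⟨l, hlF⟩
          set t := F.min' hFne with htdef
          have htF : t ∈ F := F.min'_mem hFne
          rw [hFdef, Finset.mem_filter, Finset.mem_Ico] at htF
          obtain ⟨⟨hjt, htb⟩, htne⟩ := htF
          have hlt' : t ≤ l := F.min'_le l hlF
          have hgapE : ∀ r, j < r → r < t → ¬ e r < e (r+1) := by
            intro r hr1 hr2 hcon
            have hrF : r ∈ F := by
              rw [hFdef, Finset.mem_filter, Finset.mem_Ico]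
              exact ⟨⟨by omega, by omega⟩, hcon⟩
            have := F.min'_le r hrF
            omega
          have hE : e (j+1) = e t := hgap j t (by omega) hgapE (by omega)
          obtain ⟨K, hK0, hwj, hwt⟩ := hpair j t h1 (by omega) htb h3 htne hgapE
          have hEI : e t ∈ Icc (0:ℝ) 1 := heI t (by omega)
          have hxE : e t ≤ x := by
            have h6 : e t ≤ e l := emono2 hem (by omega) (by omega)
            exact le_trans h6 (le_of_lt hx.1)
          have hBjt := hB j t (by omega) (by omega) (e t) hEI x hxI hxE
          have step : w j * f j x ≤ w t * f t x := by
            rw [hwt, hwj, hE]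
            calc K * f t (e t) * f j x = K * (f j x * f t (e t)) := by ring
              _ ≤ K * (f j (e t) * f t x) := by
                  apply mul_le_mul_of_nonneg_left _ hK0
                  nlinarith [hBjt]
              _ = K * f j (e t) * f t x := by ring
          exact le_trans step (ih t (by omega) htb htne hlt' (by omega))
    rcases le_total l j with hc | hc
    · exact down (j - l) j haj hjb hjne hc le_rfl
    · exact up (l - j) j haj hjb hjne hc le_rfl
  -- measure / integral part
  set S := Ioc (e a) (e b) with hSdef
  have hSmeas : MeasurableSet S := measurableSet_Ioc
  have hfintZ : ∀ j, a ≤ j → j < b → IntegrableOn (f j) (Z j) :=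
    fun j h1 h2 => (hfint j (by omega)).mono_set (hZsub j)
  have hc2 : ∀ j, a ≤ j → j < b → (∫ x in Z j, f j x) = ∫ x in Z j ∩ S, f j x := by
    intro j h1 h2
    have hsplit := integral_inter_add_diff (μ := volume) (f := f j) (s := Z j)
      hSmeas (hfintZ j h1 h2)
    have hzero : (∫ x in Z j \ S, f j x) = 0 := by
      have h0 : ∀ᵐ x, x ∈ Z j \ S → f j x = (fun _ => (0:ℝ)) x := by
        filter_upwards [hconf j h1 h2] with x hx hxd
        exact (hx hxd.1).resolve_left hxd.2
      rw [setIntegral_congr_ae ((hZm j).diff hSmeas) h0]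
      simp
    linarith
  set g : ℕ → ℝ → ℝ := fun j => (Ioc (e j) (e (j+1))).indicator (fun y => w j * f j y)
    with hgdef
  set M : ℝ → ℝ := fun y => ∑ j ∈ Finset.Ico a b, g j y with hMdef
  have hintP : ∀ j, a ≤ j → j < b →
      IntegrableOn (fun y => w j * f j y) (Ioc (e j) (e (j+1))) :=
    fun j h1 h2 => (((hfint j (by omega)).mono_set (hIccP j (by omega))).const_mul (w j))
  have hgint : ∀ j, a ≤ j → j < b → Integrable (g j) := by
    intro j h1 h2
    rw [hgdef]
    exact (hintP j h1 h2).integrable_indicator measurableSet_Ioc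
  have hMint : Integrable M := by
    rw [hMdef]
    exact integrable_finset_sum _ (fun j hj =>
      hgint j (Finset.mem_Ico.mp hj).1 (Finset.mem_Ico.mp hj).2)
  have hgnn : ∀ j, a ≤ j → j < b → ∀ y, 0 ≤ g j y := by
    intro j h1 h2 y
    rw [hgdef]
    dsimp only
    apply Set.indicator_apply_nonneg
    intro hy'
    exact mul_nonneg (hwnn j h1 h2) (hfnn j (by omega) y (hIccP j (by omega) hy'))
  have hMnn : ∀ y, 0 ≤ M y := by
    intro y
    rw [hMdef]
    exact Finset.sum_nonneg fun j hj =>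
      hgnn j (Finset.mem_Ico.mp hj).1 (Finset.mem_Ico.mp hj).2 y
  have hMcollapse : ∀ l, a ≤ l → l < b → ∀ y ∈ Ioc (e l) (e (l+1)), M y = w l * f l y := by
    intro l h1 h2 y hy
    rw [hMdef]
    dsimp only
    rw [Finset.sum_eq_single l]
    · rw [hgdef]; dsimp only; rw [Set.indicator_of_mem hy]
    · intro j hj hne
      rw [Finset.mem_Ico] at hj
      rw [hgdef]; dsimp only
      apply Set.indicator_of_notMem
      intro hyj
      exact piece_disj hem hne (by omega) (by omega) hyj hy
    · intro hl
      exact absurd (Finset.mem_Ico.mpr ⟨h1, h2⟩) hl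
  have hSdecomp : S = ⋃ j ∈ Finset.Ico a b, Ioc (e j) (e (j+1)) :=
    iocdecomp hem hab.le hbm
  have hMdom : ∀ y ∈ S, ∀ j, a ≤ j → j < b → e j < e (j+1) → w j * f j y ≤ M y := by
    intro y hyS j h1 h2 h3
    have hmem : y ∈ ⋃ j ∈ Finset.Ico a b, Ioc (e j) (e (j+1)) := hSdecomp ▸ hyS
    rw [Set.mem_iUnion₂] at hmem
    obtain ⟨l, hl, hyl⟩ := hmem
    rw [Finset.mem_Ico] at hl
    have hlne : e l < e (l+1) := lt_of_lt_of_le hyl.1 hyl.2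
    rw [hMcollapse l hl.1 hl.2 y hyl]
    exact hchain l hl.1 hl.2 hlne y hyl j h1 h2 h3
  set U := ⋃ j ∈ Finset.Ico a b, (Z j ∩ S) with hUdef
  have hUmeas : MeasurableSet U := by
    rw [hUdef]
    exact Finset.measurableSet_biUnion _ fun j _ => (hZm j).inter hSmeas
  have hUsub : U ⊆ S := by
    rw [hUdef]
    exact Set.iUnion₂_subset fun j _ => inter_subset_right
  have hZpd : Set.Pairwise ↑(Finset.Ico a b) (Function.onFun Disjoint fun j => Z j ∩ S) := by
    intro j hj l hl hne
    apply Set.disjoint_left.mpr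
    intro x hxj hxl
    have hd := hZdisj j l hne
    have : x ∈ Z j ∩ Z l := ⟨hxj.1, hxl.1⟩
    rw [hd] at this
    exact Set.notMem_empty x this
  have hPpd : Set.Pairwise ↑(Finset.Ico a b) (Function.onFun Disjoint fun j => Ioc (e j) (e (j+1))) := by
    intro j hj l hl hne
    rw [Finset.mem_coe, Finset.mem_Ico] at hj hl
    apply Set.disjoint_left.mpr
    intro x hxj hxl
    exact piece_disj hem hne (by omega) (by omega) hxj hxl
  have c1 : (∑ j ∈ Finset.Ico a b, w j * ∫ x in Ioc (e j) (e (j+1)), f j x)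
      ≤ ∑ j ∈ Finset.Ico a b, w j * ∫ x in Z j, f j x := by
    apply Finset.sum_le_sum
    intro j hj
    rw [Finset.mem_Ico] at hj
    exact mul_le_mul_of_nonneg_left (hdom j (by omega)) (hwnn j hj.1 hj.2)
  have c2' : (∑ j ∈ Finset.Ico a b, w j * ∫ x in Z j, f j x)
      = ∑ j ∈ Finset.Ico a b, w j * ∫ x in Z j ∩ S, f j x := by
    apply Finset.sum_congr rfl
    intro j hj
    rw [Finset.mem_Ico] at hj
    rw [hc2 j hj.1 hj.2]
  have c3 : (∑ j ∈ Finset.Ico a b, w j * ∫ x in Z j ∩ S, f j x)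
      ≤ ∑ j ∈ Finset.Ico a b, ∫ x in Z j ∩ S, M x := by
    apply Finset.sum_le_sum
    intro j hj
    rw [Finset.mem_Ico] at hj
    by_cases hne : e j < e (j+1)
    · rw [← integral_const_mul]
      apply setIntegral_mono_on
        (((hfintZ j hj.1 hj.2).mono_set inter_subset_left).const_mul (w j))
        hMint.integrableOn ((hZm j).inter hSmeas)
      intro x hx
      exact hMdom x hx.2 j hj.1 hj.2 hne
    · rw [hZe j (by omega) hne]
      simp
  have c4 : (∑ j ∈ Finset.Ico a b, ∫ x in Z j ∩ S, M x) = ∫ x in U, M x := by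
    rw [hUdef]
    exact (integral_biUnion_finset _ (fun j _ => (hZm j).inter hSmeas) hZpd
      (fun j _ => hMint.integrableOn)).symm
  have c5 : (∫ x in U, M x) ≤ ∫ x in S, M x :=
    setIntegral_mono_set hMint.integrableOn (ae_of_all _ hMnn)
      (HasSubset.Subset.eventuallyLE hUsub)
  have c6 : (∫ x in S, M x)
      = ∑ l ∈ Finset.Ico a b, w l * ∫ x in Ioc (e l) (e (l+1)), f l x := by
    rw [hSdecomp, integral_biUnion_finset _ (fun j _ => measurableSet_Ioc) hPpd
      (fun j _ => hMint.integrableOn)]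
    apply Finset.sum_congr rfl
    intro l hl
    rw [Finset.mem_Ico] at hl
    rw [setIntegral_congr_fun measurableSet_Ioc (fun y hy => hMcollapse l hl.1 hl.2 y hy),
      integral_const_mul]
  have hA1 : (∑ j ∈ Finset.Ico a b, w j * ∫ x in Ioc (e j) (e (j+1)), f j x)
      ≤ ∫ x in U, M x := by
    calc (∑ j ∈ Finset.Ico a b, w j * ∫ x in Ioc (e j) (e (j+1)), f j x)
        ≤ ∑ j ∈ Finset.Ico a b, w j * ∫ x in Z j, f j x := c1
      _ = ∑ j ∈ Finset.Ico a b, w j * ∫ x in Z j ∩ S, f j x := c2'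
      _ ≤ ∑ j ∈ Finset.Ico a b, ∫ x in Z j ∩ S, M x := c3
      _ = ∫ x in U, M x := c4
  have hUSeq : (∫ x in U, M x) = ∫ x in S, M x := le_antisymm c5 (by rw [c6]; exact hA1)
  have hsumeq : (∑ j ∈ Finset.Ico a b, w j * ∫ x in Z j, f j x)
      = ∑ j ∈ Finset.Ico a b, w j * ∫ x in Ioc (e j) (e (j+1)), f j x := by
    apply le_antisymm _ c1
    calc (∑ j ∈ Finset.Ico a b, w j * ∫ x in Z j, f j x)
        = ∑ j ∈ Finset.Ico a b, w j * ∫ x in Z j ∩ S, f j x := c2'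
      _ ≤ ∑ j ∈ Finset.Ico a b, ∫ x in Z j ∩ S, M x := c3
      _ = ∫ x in U, M x := c4
      _ = ∫ x in S, M x := hUSeq
      _ = ∑ l ∈ Finset.Ico a b, w l * ∫ x in Ioc (e l) (e (l+1)), f l x := c6
  have concl1 : ∀ j, a ≤ j → j < b →
      (∫ x in Z j, f j x) = ∫ x in Ioc (e j) (e (j+1)), f j x := by
    intro j h1 h2
    have hterm := (Finset.sum_eq_sum_iff_of_le (fun j hj => by
        rw [Finset.mem_Ico] at hj
        exact mul_le_mul_of_nonneg_left (hdom j (by omega)) (hwnn j hj.1 hj.2))).mp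
      hsumeq.symm
    have := hterm j (Finset.mem_Ico.mpr ⟨h1, h2⟩)
    exact (mul_left_cancel₀ (ne_of_gt (hwpos j h1 h2)) this).symm
  have hdiffzero : (∫ x in S \ U, M x) = 0 := by
    rw [integral_diff hUmeas hMint.integrableOn hUsub, hUSeq]
    exact sub_self _
  have hae0 : ∀ᵐ x ∂(volume.restrict (S \ U)), M x = 0 :=
    (setIntegral_eq_zero_iff_of_nonneg_ae (ae_of_all _ hMnn) hMint.integrableOn).mp hdiffzero
  have hbadnull : volume ({x | ¬ M x = 0} ∩ (S \ U)) = 0 := by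
    have h' := ae_iff.mp hae0
    rwa [Measure.restrict_apply' (hSmeas.diff hUmeas)] at h'
  have hTsub : S \ U ⊆ ({x | ¬ M x = 0} ∩ (S \ U)) ∪
      (⋃ l ∈ Finset.Ico a b, ({e (l+1)} : Set ℝ)) := by
    intro x hx
    rcases eq_or_ne (M x) 0 with h0 | h0
    · right
      have hxS : x ∈ S := hx.1
      have hmem : x ∈ ⋃ j ∈ Finset.Ico a b, Ioc (e j) (e (j+1)) := hSdecomp ▸ hxS
      rw [Set.mem_iUnion₂] at hmem
      obtain ⟨l, hl, hyl⟩ := hmem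
      rw [Set.mem_iUnion₂]
      refine ⟨l, hl, ?_⟩
      rw [Finset.mem_Ico] at hl
      rcases lt_or_eq_of_le hyl.2 with hlt | heq
      · exfalso
        have hpos : 0 < M x := by
          rw [hMcollapse l hl.1 hl.2 x hyl]
          exact mul_pos (hwpos l hl.1 hl.2) (hfpos l (by omega) x ⟨hyl.1, hlt⟩)
        rw [h0] at hpos
        exact lt_irrefl _ hpos
      · exact heq
    · left
      exact ⟨h0, hx⟩
  have hptsnull : volume (⋃ l ∈ Finset.Ico a b, ({e (l+1)} : Set ℝ)) = 0 := by
    apply Set.Countable.measure_zero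
    exact Set.Countable.biUnion (Finset.countable_toSet _)
      (fun l _ => Set.countable_singleton _)
  have hTnull : volume (S \ U) = 0 :=
    measure_mono_null hTsub (measure_union_null hbadnull hptsnull)
  refine ⟨concl1, ?_⟩
  apply measure_mono_null _ hTnull
  intro x hx
  refine ⟨hx.1, fun hxU => hx.2 ?_⟩
  rw [hUdef] at hxU
  rw [Set.mem_iUnion₂] at hxU
  obtain ⟨j, hj, hxj⟩ := hxU
  rw [Set.mem_iUnion₂]
  exact ⟨j, hj, hxj.1⟩

lemma mainInd {m : ℕ} {e : ℕ → ℝ} {f : ℕ → ℝ → ℝ} {Z : ℕ → Set ℝ}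
    (hem : ∀ j, j < m → e j ≤ e (j+1))
    (heI : ∀ j, j ≤ m → e j ∈ Icc (0:ℝ) 1)
    (hfnn : ∀ j, j < m → ∀ x ∈ Icc (0:ℝ) 1, 0 ≤ f j x)
    (hfint : ∀ j, j < m → IntegrableOn (f j) (Icc (0:ℝ) 1))
    (hfpos : ∀ j, j < m → ∀ x ∈ Ioo (e j) (e (j+1)), 0 < f j x)
    (hB : ∀ j j', j < j' → j' < m → ∀ x ∈ Icc (0:ℝ) 1, ∀ y ∈ Icc (0:ℝ) 1, x ≤ y →
      f j y * f j' x ≤ f j x * f j' y)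
    (hCr : ∀ j, j < m → e j < e (j+1) → f j (e (j+1)) = 0 →
      ∀ y ∈ Icc (0:ℝ) 1, e (j+1) ≤ y → f j y = 0)
    (hCl : ∀ j, j < m → e j < e (j+1) → f j (e j) = 0 →
      ∀ y ∈ Icc (0:ℝ) 1, y ≤ e j → f j y = 0)
    (hZm : ∀ j, MeasurableSet (Z j))
    (hZsub : ∀ j, Z j ⊆ Icc (0:ℝ) 1)
    (hZdisj : ∀ j j', j ≠ j' → Z j ∩ Z j' = ∅)
    (hZe : ∀ j, j < m → ¬ e j < e (j+1) → Z j = ∅)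
    (hdom : ∀ j, j < m → (∫ x in Ioc (e j) (e (j+1)), f j x) ≤ ∫ x in Z j, f j x) :
    ∀ N a b, b - a ≤ N → a < b → b ≤ m →
    (∀ j, a ≤ j → j < b → (∀ᵐ x, x ∈ Z j → x ∈ Ioc (e a) (e b) ∨ f j x = 0)) →
    ((∀ j, a ≤ j → j < b → (∫ x in Z j, f j x) = ∫ x in Ioc (e j) (e (j+1)), f j x) ∧
      volume (Ioc (e a) (e b) \ ⋃ j ∈ Finset.Ico a b, Z j) = 0) := by
  intro N
  induction N with
  | zero => intro a b h1 h2 h3 h4; omega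
  | succ NN ih =>
    intro a b hba hab hbm hconf
    have hIccSub : ∀ {u v : ℕ}, u ≤ m → v ≤ m → Ioc (e u) (e v) ⊆ Icc (0:ℝ) 1 := by
      intro u v hu hv x hx
      exact ⟨le_trans (heI u hu).1 hx.1.le, le_trans hx.2 (heI v hv).2⟩
    by_cases hR : ∃ s t, a < s ∧ s < b ∧ a ≤ t ∧ t < s ∧ e t < e (t+1) ∧ e (t+1) = e s ∧
        f t (e (t+1)) = 0
    · -- type R split
      obtain ⟨s, t, hs1, hs2, ht1, ht2, htne, htE, htf⟩ := hR
      have lemC : ∀ l, a ≤ l → l < s → e l < e (l+1) →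
          ∀ y ∈ Icc (0:ℝ) 1, e s ≤ y → f l y = 0 := by
        intro l hl1 hl2 hlne y hy hys
        have hft : f t y = 0 := hCr t (by omega) htne htf y hy (by rw [htE]; exact hys)
        rcases lt_trichotomy l t with hc | hc | hc
        · set x0 := (e t + e (t+1))/2 with hx0def
          have hx0 : x0 ∈ Ioo (e t) (e (t+1)) := by
            constructor <;> (rw [hx0def]; linarith)
          have hx0I : x0 ∈ Icc (0:ℝ) 1 := by
            constructor
            · exact le_trans (heI t (by omega)).1 hx0.1.le
            · exact le_trans hx0.2.le (heI (t+1) (by omega)).2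
          have hx0pos : 0 < f t x0 := hfpos t (by omega) x0 hx0
          have hx0y : x0 ≤ y := by
            have : e (t+1) ≤ y := by rw [htE]; exact hys
            linarith [hx0.2]
          have hineq := hB l t hc (by omega) x0 hx0I y hy hx0y
          rw [hft, mul_zero] at hineq
          have hnn := hfnn l (by omega) y hy
          nlinarith
        · rw [hc]; exact hft
        · exfalso
          -- t < l < s : piece l must be empty
          have h1 : e (t+1) ≤ e l := emono2 hem (by omega) (by omega)
          have h2 : e (l+1) ≤ e s := emono2 hem (by omega) (by omega)
          rw [htE] at h1
          linarith
      -- left subcall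
      have hconfL : ∀ j, a ≤ j → j < s →
          (∀ᵐ x, x ∈ Z j → x ∈ Ioc (e a) (e s) ∨ f j x = 0) := by
        intro j h1 h2
        by_cases hne : e j < e (j+1)
        · filter_upwards [hconf j h1 (by omega)] with x hx hxZ
          rcases hx hxZ with hS | h0
          · rcases le_or_gt x (e s) with hle | hgt
            · exact Or.inl ⟨hS.1, hle⟩
            · exact Or.inr (lemC j h1 h2 hne x (hIccSub (by omega) hbm hS) hgt.le)
          · exact Or.inr h0
        · rw [hZe j (by omega) hne]
          filter_upwards with x hx
          exact absurd hx (Set.notMem_empty x)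
      obtain ⟨eqL, nullL⟩ := ih a s (by omega) hs1 (by omega) hconfL
      -- right subcall
      have haeNL : ∀ᵐ x, x ∉ Ioc (e a) (e s) \ ⋃ l ∈ Finset.Ico a s, Z l :=
        measure_eq_zero_iff_ae_notMem.mp nullL
      have hconfR : ∀ j, s ≤ j → j < b →
          (∀ᵐ x, x ∈ Z j → x ∈ Ioc (e s) (e b) ∨ f j x = 0) := by
        intro j h1 h2
        filter_upwards [hconf j (by omega) h2, haeNL] with x hx hnl hxZ
        rcases hx hxZ with hS | h0
        · rcases le_or_gt x (e s) with hle | hgt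
          · exfalso
            have hxIoc : x ∈ Ioc (e a) (e s) := ⟨hS.1, hle⟩
            have hxU : x ∈ ⋃ l ∈ Finset.Ico a s, Z l := by
              by_contra hnot
              exact hnl ⟨hxIoc, hnot⟩
            rw [Set.mem_iUnion₂] at hxU
            obtain ⟨l, hl, hxl⟩ := hxU
            rw [Finset.mem_Ico] at hl
            have hd := hZdisj l j (by omega)
            have : x ∈ Z l ∩ Z j := ⟨hxl, hxZ⟩
            rw [hd] at this
            exact Set.notMem_empty x this
          · exact Or.inl ⟨hgt, hS.2⟩
        · exact Or.inr h0
      obtain ⟨eqR, nullR⟩ := ih s b (by omega) hs2 hbm hconfR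
      refine ⟨?_, ?_⟩
      · intro j h1 h2
        rcases lt_or_ge j s with hc | hc
        · exact eqL j h1 hc
        · exact eqR j hc h2
      · apply measure_mono_null ?_ (measure_union_null nullL nullR)
        intro x hx
        rcases le_or_gt x (e s) with hle | hgt
        · left
          refine ⟨⟨hx.1.1, hle⟩, fun hxU => hx.2 ?_⟩
          rw [Set.mem_iUnion₂] at hxU ⊢
          obtain ⟨l, hl, hxl⟩ := hxU
          rw [Finset.mem_Ico] at hl
          exact ⟨l, Finset.mem_Ico.mpr ⟨hl.1, by omega⟩, hxl⟩
        · right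
          refine ⟨⟨hgt, hx.1.2⟩, fun hxU => hx.2 ?_⟩
          rw [Set.mem_iUnion₂] at hxU ⊢
          obtain ⟨l, hl, hxl⟩ := hxU
          rw [Finset.mem_Ico] at hl
          exact ⟨l, Finset.mem_Ico.mpr ⟨by omega, hl.2⟩, hxl⟩
    by_cases hL : ∃ s t, a < s ∧ s < b ∧ s ≤ t ∧ t < b ∧ e t < e (t+1) ∧ e t = e s ∧
        f t (e t) = 0
    · -- type L split
      obtain ⟨s, t, hs1, hs2, ht1, ht2, htne, htE, htf⟩ := hL
      have lemC' : ∀ l, s ≤ l → l < b → e l < e (l+1) →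
          ∀ y ∈ Icc (0:ℝ) 1, y ≤ e s → f l y = 0 := by
        intro l hl1 hl2 hlne y hy hys
        have hft : f t y = 0 := hCl t (by omega) htne htf y hy (by rw [htE]; exact hys)
        rcases lt_trichotomy t l with hc | hc | hc
        · set x0 := (e t + e (t+1))/2 with hx0def
          have hx0 : x0 ∈ Ioo (e t) (e (t+1)) := by
            constructor <;> (rw [hx0def]; linarith)
          have hx0I : x0 ∈ Icc (0:ℝ) 1 := by
            constructor
            · exact le_trans (heI t (by omega)).1 hx0.1.le
            · exact le_trans hx0.2.le (heI (t+1) (by omega)).2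
          have hx0pos : 0 < f t x0 := hfpos t (by omega) x0 hx0
          have hyx0 : y ≤ x0 := by
            have : y ≤ e t := by rw [htE]; exact hys
            linarith [hx0.1]
          have hineq := hB t l hc (by omega) y hy x0 hx0I hyx0
          rw [hft, zero_mul] at hineq
          have hnn := hfnn l (by omega) y hy
          nlinarith
        · rw [← hc]; exact hft
        · exfalso
          -- s ≤ l < t : piece l must be empty
          have h1 : e s ≤ e l := emono2 hem (by omega) (by omega)
          have h2 : e (l+1) ≤ e t := emono2 hem (by omega) (by omega)
          rw [htE] at h2
          linarith
      -- right subcall first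
      have hconfR : ∀ j, s ≤ j → j < b →
          (∀ᵐ x, x ∈ Z j → x ∈ Ioc (e s) (e b) ∨ f j x = 0) := by
        intro j h1 h2
        by_cases hne : e j < e (j+1)
        · filter_upwards [hconf j (by omega) h2] with x hx hxZ
          rcases hx hxZ with hS | h0
          · rcases le_or_gt x (e s) with hle | hgt
            · exact Or.inr (lemC' j h1 h2 hne x (hIccSub (by omega) hbm hS) hle)
            · exact Or.inl ⟨hgt, hS.2⟩
          · exact Or.inr h0
        · rw [hZe j (by omega) hne]
          filter_upwards with x hx
          exact absurd hx (Set.notMem_empty x)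
      obtain ⟨eqR, nullR⟩ := ih s b (by omega) hs2 hbm hconfR
      have haeNR : ∀ᵐ x, x ∉ Ioc (e s) (e b) \ ⋃ l ∈ Finset.Ico s b, Z l :=
        measure_eq_zero_iff_ae_notMem.mp nullR
      have hconfL : ∀ j, a ≤ j → j < s →
          (∀ᵐ x, x ∈ Z j → x ∈ Ioc (e a) (e s) ∨ f j x = 0) := by
        intro j h1 h2
        filter_upwards [hconf j h1 (by omega), haeNR] with x hx hnr hxZ
        rcases hx hxZ with hS | h0
        · rcases le_or_gt x (e s) with hle | hgt
          · exact Or.inl ⟨hS.1, hle⟩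
          · exfalso
            have hxIoc : x ∈ Ioc (e s) (e b) := ⟨hgt, hS.2⟩
            have hxU : x ∈ ⋃ l ∈ Finset.Ico s b, Z l := by
              by_contra hnot
              exact hnr ⟨hxIoc, hnot⟩
            rw [Set.mem_iUnion₂] at hxU
            obtain ⟨l, hl, hxl⟩ := hxU
            rw [Finset.mem_Ico] at hl
            have hd := hZdisj l j (by omega)
            have : x ∈ Z l ∩ Z j := ⟨hxl, hxZ⟩
            rw [hd] at this
            exact Set.notMem_empty x this
        · exact Or.inr h0
      obtain ⟨eqL, nullL⟩ := ih a s (by omega) hs1 (by omega) hconfL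
      refine ⟨?_, ?_⟩
      · intro j h1 h2
        rcases lt_or_ge j s with hc | hc
        · exact eqL j h1 hc
        · exact eqR j hc h2
      · apply measure_mono_null ?_ (measure_union_null nullL nullR)
        intro x hx
        rcases le_or_gt x (e s) with hle | hgt
        · left
          refine ⟨⟨hx.1.1, hle⟩, fun hxU => hx.2 ?_⟩
          rw [Set.mem_iUnion₂] at hxU ⊢
          obtain ⟨l, hl, hxl⟩ := hxU
          rw [Finset.mem_Ico] at hl
          exact ⟨l, Finset.mem_Ico.mpr ⟨hl.1, by omega⟩, hxl⟩
        · right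
          refine ⟨⟨hgt, hx.1.2⟩, fun hxU => hx.2 ?_⟩
          rw [Set.mem_iUnion₂] at hxU ⊢
          obtain ⟨l, hl, hxl⟩ := hxU
          rw [Finset.mem_Ico] at hl
          exact ⟨l, Finset.mem_Ico.mpr ⟨by omega, hl.2⟩, hxl⟩
    · -- base case
      have hlinkR : ∀ s, a ≤ s → s+1 < b → e s < e (s+1) → 0 < f s (e (s+1)) := by
        intro s h1 h2 hne
        have hnn := hfnn s (by omega) _ (heI (s+1) (by omega))
        rcases hnn.lt_or_eq with hpos | heq0
        · exact hpos
        · exact absurd ⟨s+1, s, by omega, h2, h1, by omega, hne, rfl, heq0.symm⟩ hR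
      have hlinkL : ∀ s, a < s → s < b → e s < e (s+1) → 0 < f s (e s) := by
        intro s h1 h2 hne
        have hnn := hfnn s (by omega) _ (heI s (by omega))
        rcases hnn.lt_or_eq with hpos | heq0
        · exact hpos
        · exact absurd ⟨s, s, h1, h2, le_rfl, h2, hne, rfl, heq0.symm⟩ hL
      exact baseCase hem heI hfnn hfint hfpos hB hZm hZsub hZdisj hZe hdom hab hbm
        hconf hlinkR hlinkL


end SPf

open SPf Set in
/-- Sufficiency: every non-wasteful, connected, peak-preserving allocation is
Pareto optimal. -/
theorem statement2 {n : ℕ} (v : Fin n → ℝ → ℝ) (p : Fin n → ℝ) (k : ℝ)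
    (hsp : ∀ i, SinglePeakedD (v i) (p i) k)
    (hdistinct : Function.Injective p)
    (hcover : (⋃ i, Supp01 (v i)) = Set.Icc (0:ℝ) 1)
    (X : Fin n → Set ℝ) (hX : IsAlloc X)
    (hnw : NonWasteful v X) (hpp : ConnPeakPres p X) :
    ParetoOpt v X := by
  rintro ⟨Y, hYalloc, hdomin⟩
  rcases Nat.eq_zero_or_pos n with hn0 | hn
  · obtain ⟨i, _⟩ := hdomin.2
    subst hn0
    exact i.elim0
  obtain ⟨c, σ, hcmono, hc0, hc1, hppk, hae⟩ := hpp
  obtain ⟨hYm, hYdisj, hYuniv⟩ := hYalloc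
  have hYsub : ∀ i, Y i ⊆ Set.Icc (0:ℝ) 1 := by
    intro i
    rw [← hYuniv]
    exact Set.subset_iUnion Y i
  classical
  set e : ℕ → ℝ := fun j => if h : j ≤ n then c ⟨j, by omega⟩ else 1 with hedef
  set F : ℕ → ℝ → ℝ := fun j => if h : j < n then v (σ ⟨j, h⟩) else (fun _ => 0)
    with hFdef
  set Zz : ℕ → Set ℝ := fun j =>
    if h : j < n then (if e j < e (j+1) then Y (σ ⟨j, h⟩) else ∅) else ∅ with hZzdef
  have heval : ∀ j (h : j ≤ n), e j = c ⟨j, by omega⟩ := by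
    intro j h
    rw [hedef]
    exact dif_pos h
  have he0 : e 0 = 0 := by
    rw [heval 0 (by omega)]
    exact hc0
  have hen : e n = 1 := by
    rw [heval n le_rfl]
    exact hc1
  have hemono2' : ∀ i j, i ≤ j → j ≤ n → e i ≤ e j := by
    intro i j hij hj
    rw [heval i (le_trans hij hj), heval j hj]
    exact hcmono (Fin.mk_le_mk.mpr hij)
  have hem : ∀ j, j < n → e j ≤ e (j+1) := fun j hj => hemono2' j (j+1) (by omega) (by omega)
  have heI : ∀ j, j ≤ n → e j ∈ Set.Icc (0:ℝ) 1 := by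
    intro j hj
    constructor
    · rw [← he0]; exact hemono2' 0 j (by omega) hj
    · rw [← hen]; exact hemono2' j n hj le_rfl
  have hFeval : ∀ j (h : j < n), F j = v (σ ⟨j, h⟩) := by
    intro j h
    rw [hFdef]
    exact dif_pos h
  have hpieceEq : ∀ j (h : j < n),
      Set.Ioc (e j) (e (j+1)) =
        Set.Ioc (c ((⟨j, h⟩ : Fin n).castSucc)) (c ((⟨j, h⟩ : Fin n).succ)) := by
    intro j h
    rw [heval j (by omega), heval (j+1) (by omega)]
    rfl
  have haeP : ∀ j (h : j < n), X (σ ⟨j, h⟩) =ᵐ[volume] Set.Ioc (e j) (e (j+1)) := by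
    intro j h
    rw [hpieceEq j h]
    exact hae ⟨j, h⟩
  have hXeqI : ∀ j (h : j < n), (∫ x in X (σ ⟨j, h⟩), v (σ ⟨j, h⟩) x)
      = ∫ x in Set.Ioc (e j) (e (j+1)), v (σ ⟨j, h⟩) x := by
    intro j h
    exact MeasureTheory.setIntegral_congr_set (haeP j h)
  have hZcases : ∀ j, Zz j = ∅ ∨
      ∃ (h : j < n), Zz j = Y (σ ⟨j, h⟩) ∧ e j < e (j+1) := by
    intro j
    rw [hZzdef]
    by_cases h1 : j < n
    · by_cases h2 : e j < e (j+1)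
      · right
        exact ⟨h1, by dsimp only; rw [dif_pos h1, if_pos h2], h2⟩
      · left
        dsimp only
        rw [dif_pos h1, if_neg h2]
    · left
      dsimp only
      rw [dif_neg h1]
  -- piece interior positivity
  have hfposN : ∀ j, j < n → ∀ x ∈ Set.Ioo (e j) (e (j+1)), 0 < F j x := by
    intro j hj x hx
    rw [hFeval j hj]
    have hnull0 := hnw (σ ⟨j, hj⟩)
    have haeJ := haeP j hj
    have hd := (MeasureTheory.ae_eq_set.mp haeJ).2
    have hnull : volume (Set.Ioc (e j) (e (j+1)) \ Supp01 (v (σ ⟨j, hj⟩))) = 0 := by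
      refine measure_mono_null ?_ (measure_union_null hd hnull0)
      intro t ht
      by_cases hm : t ∈ X (σ ⟨j, hj⟩)
      · exact Or.inr ⟨hm, ht.2⟩
      · exact Or.inl ⟨ht.1, hm⟩
    exact posOnPiece (hsp (σ ⟨j, hj⟩)) (heI j (by omega)) (heI (j+1) (by omega)) hnull hx
  -- apply the main induction
  have hmain := mainInd (m := n) (e := e) (f := F) (Z := Zz) hem heI
    (by -- hfnn
      intro j hj x hx
      rw [hFeval j hj]
      exact SPf.nonneg (hsp (σ ⟨j, hj⟩)) hx)
    (by -- hfint
      intro j hj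
      rw [hFeval j hj]
      exact SPf.integrable (hsp (σ ⟨j, hj⟩)))
    hfposN
    (by -- hB
      intro j j' hjj' hj'n x hx y hy hxy
      rw [hFeval j (by omega), hFeval j' hj'n]
      exact SPf.lemB (hsp (σ ⟨j, by omega⟩)) (hsp (σ ⟨j', hj'n⟩))
        (hppk (Fin.mk_lt_mk.mpr hjj')) hx hy hxy)
    (by -- hCr
      intro j hj hne h0 y hy hEy
      rw [hFeval j hj] at h0 ⊢
      have hx0 : (e j + e (j+1))/2 ∈ Set.Ioo (e j) (e (j+1)) := by
        constructor <;> linarith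
      have hx0pos : 0 < v (σ ⟨j, hj⟩) ((e j + e (j+1))/2) := by
        have := hfposN j hj _ hx0
        rwa [hFeval j hj] at this
      have hx0I : (e j + e (j+1))/2 ∈ Set.Icc (0:ℝ) 1 := by
        constructor
        · exact le_trans (heI j (by omega)).1 hx0.1.le
        · exact le_trans hx0.2.le (heI (j+1) (by omega)).2
      exact tentTailR (hsp (σ ⟨j, hj⟩)) hx0I (heI (j+1) (by omega)) hy hx0.2 hx0pos h0 hEy)
    (by -- hCl
      intro j hj hne h0 y hy hEy
      rw [hFeval j hj] at h0 ⊢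
      have hx0 : (e j + e (j+1))/2 ∈ Set.Ioo (e j) (e (j+1)) := by
        constructor <;> linarith
      have hx0pos : 0 < v (σ ⟨j, hj⟩) ((e j + e (j+1))/2) := by
        have := hfposN j hj _ hx0
        rwa [hFeval j hj] at this
      have hx0I : (e j + e (j+1))/2 ∈ Set.Icc (0:ℝ) 1 := by
        constructor
        · exact le_trans (heI j (by omega)).1 hx0.1.le
        · exact le_trans hx0.2.le (heI (j+1) (by omega)).2
      exact tentTailL (hsp (σ ⟨j, hj⟩)) hx0I (heI j (by omega)) hy hx0.1 hx0pos h0 hEy)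
    (by -- hZm
      intro j
      rcases hZcases j with h | ⟨h, heq, _⟩
      · rw [h]; exact MeasurableSet.empty
      · rw [heq]; exact hYm _)
    (by -- hZsub
      intro j
      rcases hZcases j with h | ⟨h, heq, _⟩
      · rw [h]; exact Set.empty_subset _
      · rw [heq]; exact hYsub _)
    (by -- hZdisj
      intro j j' hne
      rcases hZcases j with h | ⟨h, heq, _⟩
      · rw [h]; exact Set.empty_inter _
      rcases hZcases j' with h' | ⟨h', heq', _⟩
      · rw [h']; exact Set.inter_empty _
      rw [heq, heq']
      apply hYdisj
      intro hcon
      have : (⟨j, h⟩ : Fin n) = ⟨j', h'⟩ := σ.injective hcon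
      rw [Fin.mk.injEq] at this
      exact hne this)
    (by -- hZe
      intro j hj hne
      rw [hZzdef]; dsimp only; rw [dif_pos hj, if_neg hne])
    (by -- hdom
      intro j hj
      by_cases hne : e j < e (j+1)
      · have hZj : Zz j = Y (σ ⟨j, hj⟩) := by rw [hZzdef]; dsimp only; rw [dif_pos hj, if_pos hne]
        rw [hZj, hFeval j hj, ← hXeqI j hj]
        exact hdomin.1 (σ ⟨j, hj⟩)
      · have heq : e j = e (j+1) := le_antisymm (hem j hj) (not_lt.mp hne)
        have hZj : Zz j = ∅ := by rw [hZzdef]; dsimp only; rw [dif_pos hj, if_neg hne]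
        rw [hZj, heq, Set.Ioc_self])
    n 0 n (by omega) hn le_rfl
    (by -- hconf
      intro j h0j hjn
      have hsing : volume ({(0:ℝ)} : Set ℝ) = 0 := Real.volume_singleton
      filter_upwards [measure_eq_zero_iff_ae_notMem.mp hsing] with x hx0 hxZ
      left
      have hxI : x ∈ Set.Icc (0:ℝ) 1 := by
        rcases hZcases j with h | ⟨h, heq, _⟩
        · rw [h] at hxZ; exact absurd hxZ (Set.notMem_empty x)
        · rw [heq] at hxZ; exact hYsub _ hxZ
      rw [he0, hen]
      constructor
      · rcases eq_or_lt_of_le hxI.1 with heq | hlt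
        · exact absurd heq.symm hx0
        · exact hlt
      · exact hxI.2)
  obtain ⟨conc1, conc2⟩ := hmain
  -- derive contradiction with the strict improver
  obtain ⟨i0, hstrict⟩ := hdomin.2
  set jF := σ.symm i0 with hjFdef
  have hi0 : σ jF = i0 := σ.apply_symm_apply i0
  have hjFn : (jF : ℕ) < n := jF.2
  have hmkjF : (⟨(jF : ℕ), hjFn⟩ : Fin n) = jF := rfl
  by_cases hne : e (jF : ℕ) < e ((jF : ℕ)+1)
  · have hZj : Zz (jF : ℕ) = Y i0 := by
      rw [hZzdef]; dsimp only; rw [dif_pos hjFn, if_pos hne, hmkjF, hi0]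
    have heqc := conc1 (jF : ℕ) (by omega) hjFn
    rw [hZj, hFeval (jF : ℕ) hjFn, hmkjF, hi0] at heqc
    have hXI : (∫ x in X i0, v i0 x) = ∫ x in Set.Ioc (e (jF : ℕ)) (e ((jF : ℕ)+1)), v i0 x := by
      have := hXeqI (jF : ℕ) hjFn
      rwa [hmkjF, hi0] at this
    have : pieceVal (v i0) (Y i0) = pieceVal (v i0) (X i0) := by
      show (∫ x in Y i0, v i0 x) = ∫ x in X i0, v i0 x
      rw [heqc, hXI]
    rw [this] at hstrict
    exact lt_irrefl _ hstrict
  · -- empty piece : both values are 0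
    have hXval : pieceVal (v i0) (X i0) = 0 := by
      show (∫ x in X i0, v i0 x) = 0
      have hXI := hXeqI (jF : ℕ) hjFn
      rw [hmkjF, hi0] at hXI
      have heq : e (jF : ℕ) = e ((jF : ℕ)+1) := le_antisymm (hem _ hjFn) (not_lt.mp hne)
      rw [hXI, heq, Set.Ioc_self]
      simp
    have hYnull : volume (Y i0) = 0 := by
      refine measure_mono_null ?_ (measure_union_null (Real.volume_singleton (a := (0:ℝ))) conc2)
      · intro x hx
        have hxI : x ∈ Set.Icc (0:ℝ) 1 := hYsub i0 hx
        rcases eq_or_lt_of_le hxI.1 with heq0 | hlt0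
        · exact Or.inl heq0.symm
        · right
          refine ⟨by rw [he0, hen]; exact ⟨hlt0, hxI.2⟩, ?_⟩
          intro hxU
          rw [Set.mem_iUnion₂] at hxU
          obtain ⟨j', hj', hxj'⟩ := hxU
          rcases hZcases j' with h | ⟨h', heq', hne'⟩
          · rw [h] at hxj'; exact Set.notMem_empty x hxj'
          · rw [heq'] at hxj'
            have hneq : σ (⟨j', h'⟩ : Fin n) ≠ i0 := by
              intro hcon
              have : (⟨j', h'⟩ : Fin n) = jF := by
                rw [hjFdef, ← hcon, Equiv.symm_apply_apply]
              have hj'eq : j' = (jF : ℕ) := by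
                rw [← this]
              rw [hj'eq] at hne'
              exact hne hne'
            have hd := hYdisj _ _ hneq
            have : x ∈ Y (σ ⟨j', h'⟩) ∩ Y i0 := ⟨hxj', hx⟩
            rw [hd] at this
            exact Set.notMem_empty x this
    have hYval : pieceVal (v i0) (Y i0) = 0 := by
      show (∫ x in Y i0, v i0 x) = 0
      rw [MeasureTheory.Measure.restrict_eq_zero.mpr hYnull]
      simp
    rw [hXval, hYval] at hstrict
    exact lt_irrefl _ hstrict
end

section
/- Consider a cake-cutting problem on [0,1] with n agents having integrable nonnegative value densities v_1,…,v_n such that the union of the sets {x : v_i(x) > 0} covers [0,1] up to a set of measure zero. If in an allocation X some agent i receives a subset of positive measure on which her density v_i vanishes (i.e., X is wasteful), then X is not Pareto optimal. -/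
open MeasureTheory

/-- A wasteful allocation (some agent holds a positive-measure set where her
density vanishes) is not Pareto optimal, provided the supports cover the cake
up to a null set. -/
theorem statement3 {n : ℕ} (v : Fin n → ℝ → ℝ)
    (hmeas : ∀ i, Measurable (v i))
    (hint : ∀ i, IntegrableOn (v i) (Set.Icc (0:ℝ) 1))
    (hnonneg : ∀ i x, 0 ≤ v i x)
    (hcover : volume (Set.Icc (0:ℝ) 1 \ ⋃ i, {x | 0 < v i x}) = 0)
    (X : Fin n → Set ℝ) (hX : IsAlloc X)
    (i : Fin n) (hwaste : 0 < volume (X i \ {x | 0 < v i x})) :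
    ¬ ParetoOpt v X := by
  classical
  obtain ⟨hXm, hXd, hXu⟩ := hX
  have hXsub : ∀ k, X k ⊆ Set.Icc (0:ℝ) 1 := by
    intro k x hx
    rw [← hXu]; exact Set.mem_iUnion.mpr ⟨k, hx⟩
  set W : Set ℝ := X i \ {x | 0 < v i x} with hWdef
  have hWm : MeasurableSet W :=
    (hXm i).diff (measurableSet_lt measurable_const (hmeas i))
  -- W intersected with the union of supports has positive measure
  have hWU : 0 < volume (W ∩ ⋃ k, {x | 0 < v k x}) := by
    by_contra h
    push_neg at h
    have h0 : volume (W ∩ ⋃ k, {x | 0 < v k x}) = 0 := le_antisymm h zero_le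
    have hdiff : volume (W \ ⋃ k, {x | 0 < v k x}) = 0 := by
      refine measure_mono_null ?_ hcover
      intro x hx
      exact ⟨hXsub i hx.1.1, hx.2⟩
    have : volume W ≤ volume (W ∩ ⋃ k, {x | 0 < v k x}) + volume (W \ ⋃ k, {x | 0 < v k x}) := by
      refine le_trans (measure_mono ?_) (measure_union_le _ _)
      intro x hx
      by_cases hxu : x ∈ ⋃ k, {x | 0 < v k x}
      · exact Or.inl ⟨hx, hxu⟩
      · exact Or.inr ⟨hx, hxu⟩
    rw [h0, hdiff, add_zero] at this
    exact absurd (le_antisymm this zero_le) (ne_of_gt hwaste)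
  -- pick an agent j whose support meets W in positive measure
  have hex : ∃ j, 0 < volume (W ∩ {x | 0 < v j x}) := by
    by_contra h
    push_neg at h
    have : volume (W ∩ ⋃ k, {x | 0 < v k x}) = 0 := by
      rw [Set.inter_iUnion]
      exact measure_iUnion_null fun k => le_antisymm (h k) zero_le
    exact absurd this (ne_of_gt hWU)
  obtain ⟨j, hj⟩ := hex
  set S : Set ℝ := W ∩ {x | 0 < v j x} with hSdef
  have hSm : MeasurableSet S := hWm.inter (measurableSet_lt measurable_const (hmeas j))
  have hSsubXi : S ⊆ X i := fun x hx => hx.1.1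
  have hSsub01 : S ⊆ Set.Icc (0:ℝ) 1 := fun x hx => hXsub i (hSsubXi hx)
  have hji : j ≠ i := by
    intro h
    subst h
    have : S = ∅ := by
      ext x; constructor
      · rintro ⟨⟨_, hx2⟩, hx3⟩; exact hx2 hx3
      · exact fun h => h.elim
    rw [this] at hj; simp at hj
  -- S is disjoint from X j
  have hSXj : Disjoint S (X j) := by
    rw [Set.disjoint_left]
    intro x hxS hxXj
    exact Set.eq_empty_iff_forall_notMem.mp (hXd i j (Ne.symm hji)) x ⟨hSsubXi hxS, hxXj⟩
  -- the improved allocation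
  set Y : Fin n → Set ℝ := fun k => if k = j then X j ∪ S else X k \ S with hYdef
  intro hPO
  apply hPO
  refine ⟨Y, ⟨?_, ?_, ?_⟩, ?_, ⟨j, ?_⟩⟩
  · intro k
    by_cases hk : k = j
    · simp only [hYdef, hk, if_pos rfl]
      exact (hXm j).union hSm
    · simp only [hYdef, if_neg hk]
      exact (hXm k).diff hSm
  · intro k l hkl
    have key : ∀ a b, a ≠ b → a ≠ j → b = j → (X a \ S) ∩ (X b ∪ S) = ∅ := by
      intro a b hab ha hb
      ext x
      simp only [Set.mem_inter_iff, Set.mem_diff, Set.mem_union, Set.mem_empty_iff_false,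
        iff_false]
      rintro ⟨⟨hxa, hxS⟩, hxb | hxS'⟩
      · exact Set.eq_empty_iff_forall_notMem.mp (hXd a b hab) x ⟨hxa, hxb⟩
      · exact hxS hxS'
    by_cases hk : k = j
    · have hl : l ≠ j := by rw [hk] at hkl; exact fun h => hkl h.symm
      simp only [hYdef, hk, if_pos rfl, if_neg hl]
      rw [Set.inter_comm]
      exact key l j (hk ▸ hkl.symm) hl rfl
    · by_cases hl : l = j
      · subst hl
        simp only [hYdef, if_neg hk, if_pos rfl]
        exact key k l hkl hk rfl
      · simp only [hYdef, if_neg hk, if_neg hl]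
        ext x
        simp only [Set.mem_inter_iff, Set.mem_diff, Set.mem_empty_iff_false, iff_false]
        rintro ⟨⟨hxk, _⟩, ⟨hxl, _⟩⟩
        exact Set.eq_empty_iff_forall_notMem.mp (hXd k l hkl) x ⟨hxk, hxl⟩
  · rw [← hXu]
    ext x
    simp only [Set.mem_iUnion, hYdef]
    constructor
    · rintro ⟨k, hk⟩
      by_cases hkj : k = j
      · rw [hkj, if_pos rfl] at hk
        rcases hk with hk | hk
        · exact ⟨j, hk⟩
        · exact ⟨i, hSsubXi hk⟩
      · rw [if_neg hkj] at hk
        exact ⟨k, hk.1⟩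
    · rintro ⟨k, hk⟩
      by_cases hxS : x ∈ S
      · exact ⟨j, by rw [if_pos rfl]; exact Or.inr hxS⟩
      · by_cases hkj : k = j
        · exact ⟨j, by rw [if_pos rfl]; exact Or.inl (hkj ▸ hk)⟩
        · exact ⟨k, by rw [if_neg hkj]; exact ⟨hk, hxS⟩⟩
  -- value computations
  · -- weak improvement for all
    have hSval0 : (∫ x in S, v i x) = 0 := by
      apply setIntegral_eq_zero_of_forall_eq_zero
      intro x hx
      have h1 : ¬ 0 < v i x := hx.1.2
      exact le_antisymm (not_lt.mp h1) (hnonneg i x)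
    have hXival : pieceVal (v i) (X i) = pieceVal (v i) (X i \ S) := by
      unfold pieceVal
      have hsplit : (X i \ S) ∪ S = X i := Set.diff_union_of_subset hSsubXi
      have hkey := setIntegral_union (Set.disjoint_sdiff_left) hSm
        ((hint i).mono_set (fun x hx => hXsub i hx.1))
        ((hint i).mono_set hSsub01) (f := v i) (μ := volume)
      rw [hsplit, hSval0, add_zero] at hkey
      exact hkey
    intro k
    by_cases hkj : k = j
    · subst hkj
      simp only [hYdef, if_pos rfl]
      unfold pieceVal
      rw [setIntegral_union hSXj.symm hSm ((hint k).mono_set (hXsub k))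
        ((hint k).mono_set hSsub01)]
      have : 0 ≤ ∫ x in S, v k x :=
        setIntegral_nonneg hSm fun x _ => hnonneg k x
      linarith
    · by_cases hki : k = i
      · subst hki
        simp only [hYdef, if_neg hkj]
        rw [hXival]
      · simp only [hYdef, if_neg hkj]
        have hdisj : Disjoint (X k) S := by
          rw [Set.disjoint_left]
          intro x hxk hxS
          exact Set.eq_empty_iff_forall_notMem.mp (hXd k i hki) x ⟨hxk, hSsubXi hxS⟩
        rw [hdisj.sdiff_eq_left]
  · -- strict improvement for j
    simp only [hYdef, if_pos rfl]
    unfold pieceVal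
    rw [setIntegral_union hSXj.symm hSm ((hint j).mono_set (hXsub j))
      ((hint j).mono_set hSsub01)]
    have hpos : 0 < ∫ x in S, v j x := by
      rw [setIntegral_pos_iff_support_of_nonneg_ae
        (Filter.Eventually.of_forall fun x => hnonneg j x)
        ((hint j).mono_set hSsub01)]
      refine lt_of_lt_of_le hj (measure_mono ?_)
      intro x hx
      exact ⟨ne_of_gt hx.2, hx⟩
    linarith
end

section
/- Let v_i and v_j be single-peaked value densities on [0,1] with the same slope k > 0, peaks p_i < p_j, and supports U_i, U_j contained in [0,1] (so that normalization forces equal peak densities v_i(p_i) = v_j(p_j)). Let a < b < c ≤ p_i with [a,c] ⊆ U_j, and let b' ∈ [a,c] satisfy ∫_{b'}^{c} v_j = ∫_{a}^{b} v_j. Then ∫_{a}^{b'} v_i > ∫_{b}^{c} v_i. (Hence reassigning [a,c] so that agent i gets [a,b') and agent j gets [b',c], instead of j holding [a,b] and i holding (b,c], is a Pareto improvement.) -/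
open MeasureTheory

lemma lin_int (α β u v : ℝ) :
    (∫ x in u..v, (α + β * x)) = α*(v-u) + β*(v^2-u^2)/2 := by
  have h : ∀ x ∈ Set.uIcc u v, HasDerivAt (fun y => α*y + β*y^2/2) (α + β*x) x := by
    intro x _
    have h1 : HasDerivAt (fun y : ℝ => α*y) α x := by
      simpa using (hasDerivAt_id x).const_mul α
    have h2 : HasDerivAt (fun y : ℝ => β*y^2/2) (β*x) x := by
      have := ((hasDerivAt_pow 2 x).const_mul β).div_const 2
      exact this.congr_deriv (by norm_num; ring)
    exact h1.add h2
  rw [intervalIntegral.integral_eq_sub_of_hasDerivAt h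
    ((continuous_const.add (continuous_const.mul continuous_id)).intervalIntegrable u v)]
  ring

lemma peak_eq_sqrt (v : ℝ → ℝ) (p k : ℝ) (hk : 0 < k)
    (hv : ∀ x : ℝ, v x = max 0 (v p - k * |x - p|))
    (hU : {x : ℝ | 0 < v x} ⊆ Set.Icc (0:ℝ) 1)
    (hn : (∫ x in Set.Icc (0:ℝ) 1, v x) = 1) : v p = Real.sqrt k := by
  set h := v p with hh
  have hh0 : 0 ≤ h := by
    have := hv p
    simp at this
    exact (le_max_left 0 h).trans this.ge
  set g : ℝ → ℝ := fun x => max 0 (h - k * |x - p|) with hg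
  have hvg : ∀ x, v x = g x := hv
  have hgc : Continuous g := by
    apply continuous_const.max
    exact continuous_const.sub (continuous_const.mul (continuous_abs.comp
      (continuous_id.sub continuous_const)))
  have hgI : ∀ u w : ℝ, IntervalIntegrable g volume u w := fun u w =>
    hgc.intervalIntegrable u w
  have hpos : 0 < h := by
    rcases hh0.lt_or_eq with h' | h'
    · exact h'
    · exfalso
      have hz : ∀ x, v x = 0 := by
        intro x
        rw [hvg x]
        show (0:ℝ) ⊔ (h - k * |x - p|) = 0
        exact max_eq_left (by nlinarith [mul_nonneg hk.le (abs_nonneg (x - p)), h'])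
      have : (∫ x in Set.Icc (0:ℝ) 1, v x) = 0 := by simp [hz]
      rw [hn] at this; norm_num at this
  have hp01 : p ∈ Set.Icc (0:ℝ) 1 := hU (by simpa [Set.mem_setOf_eq, ← hh] using hpos)
  set r := h / k with hr
  have hr0 : 0 < r := div_pos hpos hk
  have hkr : k * r = h := by rw [hr]; field_simp
  have hlb : 0 ≤ p - r := by
    by_contra hcon
    push_neg at hcon
    set x := (p - r) / 2 with hx
    have hx0 : x < 0 := by rw [hx]; linarith
    have hvx : 0 < v x := by
      rw [hvg x]
      have habs : |x - p| < r := by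
        rw [abs_sub_comm, abs_of_nonneg (by nlinarith [hp01.1] : (0:ℝ) ≤ p - x)]
        nlinarith [hp01.1]
      exact lt_max_of_lt_right (by nlinarith)
    exact absurd (hU hvx).1 (by linarith)
  have hub : p + r ≤ 1 := by
    by_contra hcon
    push_neg at hcon
    set x := (p + r + 1) / 2 with hx
    have hx1 : 1 < x := by rw [hx]; linarith
    have hvx : 0 < v x := by
      rw [hvg x]
      have habs : |x - p| < r := by
        rw [abs_of_nonneg (by nlinarith [hp01.2] : (0:ℝ) ≤ x - p)]
        nlinarith [hp01.2]
      exact lt_max_of_lt_right (by nlinarith)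
    exact absurd (hU hvx).2 (by linarith)
  have hIcc : (∫ x in Set.Icc (0:ℝ) 1, v x) = ∫ x in (0:ℝ)..1, g x := by
    rw [MeasureTheory.integral_Icc_eq_integral_Ioc]
    rw [← intervalIntegral.integral_of_le (by norm_num : (0:ℝ) ≤ 1)]
    exact intervalIntegral.integral_congr fun x _ => hvg x
  have hsplit : (∫ x in (0:ℝ)..1, g x) =
      (∫ x in (0:ℝ)..(p-r), g x) + (∫ x in (p-r)..p, g x) +
      (∫ x in p..(p+r), g x) + (∫ x in (p+r)..(1:ℝ), g x) := by
    rw [intervalIntegral.integral_add_adjacent_intervals (hgI 0 (p-r)) (hgI (p-r) p),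
      intervalIntegral.integral_add_adjacent_intervals (hgI 0 p) (hgI p (p+r)),
      intervalIntegral.integral_add_adjacent_intervals (hgI 0 (p+r)) (hgI (p+r) 1)]
  have e1 : (∫ x in (0:ℝ)..(p-r), g x) = 0 := by
    have heqz : Set.EqOn g (fun _ => (0:ℝ)) (Set.uIcc 0 (p-r)) := by
      intro x hx
      rw [Set.uIcc_of_le (by linarith)] at hx
      show (0:ℝ) ⊔ (h - k * |x - p|) = 0
      rw [abs_sub_comm, abs_of_nonneg (by linarith [hx.2, hr0.le] : (0:ℝ) ≤ p - x)]
      exact max_eq_left (by nlinarith [hx.2, hkr])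
    rw [intervalIntegral.integral_congr heqz, intervalIntegral.integral_zero]
  have e4 : (∫ x in (p+r)..(1:ℝ), g x) = 0 := by
    have heqz : Set.EqOn g (fun _ => (0:ℝ)) (Set.uIcc (p+r) 1) := by
      intro x hx
      rw [Set.uIcc_of_le (by linarith)] at hx
      show (0:ℝ) ⊔ (h - k * |x - p|) = 0
      rw [abs_of_nonneg (by linarith [hx.1, hr0.le] : (0:ℝ) ≤ x - p)]
      exact max_eq_left (by nlinarith [hx.1, hkr])
    rw [intervalIntegral.integral_congr heqz, intervalIntegral.integral_zero]
  have e2 : (∫ x in (p-r)..p, g x) = (h - k*p)*(p-(p-r)) + k*(p^2-(p-r)^2)/2 := by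
    rw [← lin_int (h - k*p) k (p-r) p]
    apply intervalIntegral.integral_congr
    intro x hx
    rw [Set.uIcc_of_le (by linarith)] at hx
    show (0:ℝ) ⊔ (h - k * |x - p|) = (h - k*p) + k*x
    rw [abs_sub_comm, abs_of_nonneg (by linarith [hx.2] : (0:ℝ) ≤ p - x)]
    rw [max_eq_right (by nlinarith [hx.1, hkr])]
    ring
  have e3 : (∫ x in p..(p+r), g x) = (h + k*p)*((p+r)-p) + (-k)*((p+r)^2-p^2)/2 := by
    rw [← lin_int (h + k*p) (-k) p (p+r)]
    apply intervalIntegral.integral_congr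
    intro x hx
    rw [Set.uIcc_of_le (by linarith)] at hx
    show (0:ℝ) ⊔ (h - k * |x - p|) = (h + k*p) + (-k)*x
    rw [abs_of_nonneg (by linarith [hx.1] : (0:ℝ) ≤ x - p)]
    rw [max_eq_right (by nlinarith [hx.2, hkr])]
    ring
  have hsq : h^2 = k := by
    have h1 := hn
    rw [hIcc, hsplit, e1, e2, e3, e4] at h1
    have hrk : r = h / k := hr
    nlinarith [h1, hkr, hk]
  rw [← hsq, Real.sqrt_sq hh0]

/-- The key swap lemma of Figure 2: with common slope k, peaks p_i < p_j, full
triangular supports inside [0,1], a < b < c ≤ p_i, [a,c] inside agent j's support,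
and b' chosen so that ∫_{b'}^c v_j = ∫_a^b v_j, we get ∫_a^{b'} v_i > ∫_b^c v_i. -/
theorem statement4 (vi vj : ℝ → ℝ) (k pi pj : ℝ) (hk : 0 < k) (hpp : pi < pj)
    (hvi : ∀ x : ℝ, vi x = max 0 (vi pi - k * |x - pi|))
    (hvj : ∀ x : ℝ, vj x = max 0 (vj pj - k * |x - pj|))
    (hUi : {x : ℝ | 0 < vi x} ⊆ Set.Icc (0:ℝ) 1)
    (hUj : {x : ℝ | 0 < vj x} ⊆ Set.Icc (0:ℝ) 1)
    (hni : (∫ x in Set.Icc (0:ℝ) 1, vi x) = 1)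
    (hnj : (∫ x in Set.Icc (0:ℝ) 1, vj x) = 1)
    (a b c b' : ℝ) (hab : a < b) (hbc : b < c) (hcpi : c ≤ pi)
    (hac : Set.Icc a c ⊆ {x : ℝ | 0 < vj x})
    (hb' : b' ∈ Set.Icc a c)
    (heq : (∫ x in b'..c, vj x) = ∫ x in a..b, vj x) :
    (∫ x in b..c, vi x) < ∫ x in a..b', vi x := by
  have hsi : vi pi = Real.sqrt k := peak_eq_sqrt vi pi k hk hvi hUi hni
  have hsj : vj pj = Real.sqrt k := peak_eq_sqrt vj pj k hk hvj hUj hnj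
  set s := Real.sqrt k with hsdef
  -- pointwise facts on [a,c]
  have key : ∀ x ∈ Set.Icc a c, 0 < s - k * (pj - x) := by
    intro x hx
    have h1 := hac hx
    rw [Set.mem_setOf_eq, hvj x, hsj] at h1
    have h2 : 0 < s - k * |x - pj| := by
      rcases lt_max_iff.mp h1 with h | h
      · exact absurd h (lt_irrefl 0)
      · exact h
    rwa [abs_sub_comm, abs_of_nonneg (by linarith [hx.2] : (0:ℝ) ≤ pj - x)] at h2
  have hvjx : ∀ x ∈ Set.Icc a c, vj x = (s - k*pj) + k*x := by
    intro x hx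
    rw [hvj x, hsj]
    rw [abs_sub_comm, abs_of_nonneg (by linarith [hx.2] : (0:ℝ) ≤ pj - x)]
    rw [max_eq_right (by linarith [key x hx])]
    ring
  have hvix : ∀ x ∈ Set.Icc a c, vi x = (s - k*pi) + k*x := by
    intro x hx
    rw [hvi x, hsi]
    rw [abs_sub_comm, abs_of_nonneg (by linarith [hx.2] : (0:ℝ) ≤ pi - x)]
    have : 0 < s - k * (pi - x) := by nlinarith [key x hx]
    rw [max_eq_right (by linarith)]
    ring
  -- convert the four integrals
  have ei1 : (∫ x in b..c, vi x) = (s - k*pi)*(c-b) + k*(c^2-b^2)/2 := by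
    rw [← lin_int (s - k*pi) k b c]
    apply intervalIntegral.integral_congr
    intro x hx
    rw [Set.uIcc_of_le (by linarith)] at hx
    exact hvix x ⟨by linarith [hx.1], hx.2⟩
  have ei2 : (∫ x in a..b', vi x) = (s - k*pi)*(b'-a) + k*(b'^2-a^2)/2 := by
    rw [← lin_int (s - k*pi) k a b']
    apply intervalIntegral.integral_congr
    intro x hx
    rw [Set.uIcc_of_le hb'.1] at hx
    exact hvix x ⟨hx.1, by linarith [hx.2, hb'.2]⟩
  have ej1 : (∫ x in b'..c, vj x) = (s - k*pj)*(c-b') + k*(c^2-b'^2)/2 := by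
    rw [← lin_int (s - k*pj) k b' c]
    apply intervalIntegral.integral_congr
    intro x hx
    rw [Set.uIcc_of_le hb'.2] at hx
    exact hvjx x ⟨by linarith [hx.1, hb'.1], hx.2⟩
  have ej2 : (∫ x in a..b, vj x) = (s - k*pj)*(b-a) + k*(b^2-a^2)/2 := by
    rw [← lin_int (s - k*pj) k a b]
    apply intervalIntegral.integral_congr
    intro x hx
    rw [Set.uIcc_of_le hab.le] at hx
    exact hvjx x ⟨hx.1, by linarith [hx.2]⟩
  rw [ej1, ej2] at heq
  rw [ei1, ei2]
  -- algebra
  have hLa : 0 < s - k * (pj - a) := key a ⟨le_refl a, by linarith⟩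
  -- first: a + c < b + b'
  have hkey : a + c < b + b' := by
    by_contra hcon
    push_neg at hcon
    -- then c - b' ≥ b - a and mean comparison forces contradiction
    nlinarith [heq, hLa, mul_pos hk (sub_pos.2 hab), hb'.1, hb'.2,
      mul_nonneg hk.le (sub_nonneg.2 hb'.1), sq_nonneg (c - b' - (b - a)),
      mul_nonneg (mul_nonneg hk.le (sub_nonneg.2 hb'.1)) (sub_nonneg.2 hb'.2)]
  nlinarith [heq, mul_pos hk (sub_pos.2 hpp), hkey,
    mul_pos (mul_pos hk (sub_pos.2 hpp)) (by linarith : (0:ℝ) < b + b' - a - c)]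
end

section
/- For every n ≥ 2 there exists a cake-cutting problem with n agents having single-peaked normalized value densities on [0,1] with pairwise disjoint supports, together with (a) an envy-free allocation X in which V_i(X_i) = 1/n for every agent i, and (b) a Pareto optimal allocation X* in which V_i(X*_i) = 1 for every agent i. Consequently the welfare loss (1/n)·Σ_i V_i(X*_i) − (1/n)·Σ_i V_i(X_i) equals (n−1)/n. -/
open MeasureTheory

namespace S7

open Set intervalIntegral

noncomputable def vv (n i : ℕ) (x : ℝ) : ℝ :=
  max 0 (2*(n:ℝ) - 4*(n:ℝ)^2 * |x - (2*(i:ℝ)+1)/(2*(n:ℝ))|)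

lemma vv_cont (n i : ℕ) : Continuous (vv n i) := by
  unfold vv; fun_prop

lemma vv_nonneg (n i : ℕ) (x : ℝ) : 0 ≤ vv n i x := le_max_left _ _

lemma e1 {n : ℕ} (hn : 0 < n) (i : ℕ) :
    (2*(i:ℝ)+1)/(2*(n:ℝ)) - (i:ℝ)/(n:ℝ) = 1/(2*(n:ℝ)) := by
  have hN : ((n:ℝ)) ≠ 0 := by exact_mod_cast hn.ne'
  field_simp; ring

lemma e2 {n : ℕ} (hn : 0 < n) (i : ℕ) :
    ((i:ℝ)+1)/(n:ℝ) - (2*(i:ℝ)+1)/(2*(n:ℝ)) = 1/(2*(n:ℝ)) := by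
  have hN : ((n:ℝ)) ≠ 0 := by exact_mod_cast hn.ne'
  field_simp; ring

lemma e3 {n : ℕ} (hn : 0 < n) :
    4*(n:ℝ)^2 * (1/(2*(n:ℝ))) = 2*(n:ℝ) := by
  have hN : ((n:ℝ)) ≠ 0 := by exact_mod_cast hn.ne'
  field_simp; ring

lemma vv_zero {n : ℕ} (hn : 0 < n) (i : ℕ) {x : ℝ}
    (h : x ≤ (i:ℝ)/n ∨ ((i:ℝ)+1)/n ≤ x) : vv n i x = 0 := by
  have hN : (0:ℝ) < n := by exact_mod_cast hn
  have he1 := e1 hn i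
  have he2 := e2 hn i
  have he3 := e3 hn
  unfold vv
  apply max_eq_left
  have habs : 1/(2*(n:ℝ)) ≤ |x - (2*(i:ℝ)+1)/(2*(n:ℝ))| := by
    rcases h with h | h
    · have h1 : (2*(i:ℝ)+1)/(2*(n:ℝ)) - x ≤ |x - (2*(i:ℝ)+1)/(2*(n:ℝ))| := by
        rw [abs_sub_comm]; exact le_abs_self _
      linarith
    · have h1 : x - (2*(i:ℝ)+1)/(2*(n:ℝ)) ≤ |x - (2*(i:ℝ)+1)/(2*(n:ℝ))| :=
        le_abs_self _
      linarith
  have := mul_le_mul_of_nonneg_left habs (by positivity : (0:ℝ) ≤ 4*(n:ℝ)^2)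
  linarith

lemma vv_pos_bounds {n : ℕ} (hn : 0 < n) (i : ℕ) {x : ℝ}
    (h : 0 < vv n i x) : (i:ℝ)/n < x ∧ x < ((i:ℝ)+1)/n := by
  by_contra hc
  rw [not_and_or, not_lt, not_lt] at hc
  have hz : vv n i x = 0 := by
    rcases hc with hc | hc
    · exact vv_zero hn i (Or.inl hc)
    · exact vv_zero hn i (Or.inr hc)
  rw [hz] at h
  exact lt_irrefl 0 h

lemma vv_peak {n : ℕ} (hn : 0 < n) (i : ℕ) :
    vv n i ((2*(i:ℝ)+1)/(2*(n:ℝ))) = 2*(n:ℝ) := by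
  have hN : (0:ℝ) < n := by exact_mod_cast hn
  unfold vv
  rw [sub_self, abs_zero, mul_zero, sub_zero]
  exact max_eq_right (by positivity)

lemma vv_integral {n : ℕ} (hn : 0 < n) (i : ℕ) :
    ∫ x in ((i:ℝ)/n)..(((i:ℝ)+1)/n), vv n i x = 1 := by
  have hN : (0:ℝ) < n := by exact_mod_cast hn
  have hN' : ((n:ℝ)) ≠ 0 := hN.ne'
  set N := (n:ℝ) with hNdef
  set c : ℝ := (2*(i:ℝ)+1)/(2*N) with hc
  set a : ℝ := (i:ℝ)/N with ha
  set b : ℝ := ((i:ℝ)+1)/N with hb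
  have he1 : c - a = 1/(2*N) := by rw [hc, ha]; field_simp; ring
  have he2 : b - c = 1/(2*N) := by rw [hb, hc]; field_simp; ring
  have he3 : 4*N^2 * (1/(2*N)) = 2*N := by field_simp; ring
  have hpos : 0 < 1/(2*N) := by positivity
  have hac : a ≤ c := by linarith
  have hcb : c ≤ b := by linarith
  have hi1 : IntervalIntegrable (vv n i) volume a c := (vv_cont n i).intervalIntegrable _ _
  have hi2 : IntervalIntegrable (vv n i) volume c b := (vv_cont n i).intervalIntegrable _ _
  rw [← integral_add_adjacent_intervals hi1 hi2]
  have L : ∫ x in a..c, vv n i x = 1/2 := by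
    have h1 : ∫ x in a..c, vv n i x = ∫ x in a..c, ((2*N - 4*N^2*c) + 4*N^2 * x) := by
      apply integral_congr
      intro x hx
      rw [uIcc_of_le hac] at hx
      obtain ⟨hx1, hx2⟩ := hx
      unfold vv
      rw [← hNdef, ← hc, abs_of_nonpos (by linarith), max_eq_right (by nlinarith)]
      ring
    rw [h1, integral_add intervalIntegrable_const (intervalIntegrable_id.const_mul _),
      intervalIntegral.integral_const, intervalIntegral.integral_const_mul, integral_id, smul_eq_mul]
    rw [ha, hc]
    field_simp
    ring
  have R : ∫ x in c..b, vv n i x = 1/2 := by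
    have h1 : ∫ x in c..b, vv n i x = ∫ x in c..b, ((2*N + 4*N^2*c) - 4*N^2 * x) := by
      apply integral_congr
      intro x hx
      rw [uIcc_of_le hcb] at hx
      obtain ⟨hx1, hx2⟩ := hx
      unfold vv
      rw [← hNdef, ← hc, abs_of_nonneg (by linarith), max_eq_right (by nlinarith)]
      ring
    rw [h1, integral_sub intervalIntegrable_const (intervalIntegrable_id.const_mul _),
      intervalIntegral.integral_const, intervalIntegral.integral_const_mul, integral_id, smul_eq_mul]
    rw [hb, hc]
    field_simp
    ring
  rw [L, R]; norm_num

noncomputable def FF (n i : ℕ) (t : ℝ) : ℝ := ∫ x in ((i:ℝ)/n)..t, vv n i x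

lemma FF_cont (n i : ℕ) : Continuous (FF n i) :=
  intervalIntegral.continuous_primitive (fun _ _ => (vv_cont n i).intervalIntegrable _ _) _

lemma FF_sub (n i : ℕ) (s t : ℝ) : FF n i t - FF n i s = ∫ x in s..t, vv n i x :=
  integral_interval_sub_left ((vv_cont n i).intervalIntegrable _ _)
    ((vv_cont n i).intervalIntegrable _ _)

lemma FF_zero (n i : ℕ) : FF n i ((i:ℝ)/n) = 0 := integral_same

lemma FF_one {n : ℕ} (hn : 0 < n) (i : ℕ) : FF n i (((i:ℝ)+1)/n) = 1 := vv_integral hn i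

lemma ab_le {n : ℕ} (hn : 0 < n) (i : ℕ) : (i:ℝ)/n ≤ ((i:ℝ)+1)/n := by
  have hN : (0:ℝ) < n := by exact_mod_cast hn
  exact (div_le_div_iff_of_pos_right hN).mpr (by linarith)

noncomputable def cut (n i j : ℕ) : ℝ :=
  if j = n then ((i:ℝ)+1)/n
  else sInf {t : ℝ | t ∈ Icc ((i:ℝ)/n) (((i:ℝ)+1)/n) ∧ FF n i t = (j:ℝ)/n}

lemma cut_spec {n : ℕ} (hn : 0 < n) {i j : ℕ} (hj : j ≤ n) :
    cut n i j ∈ Icc ((i:ℝ)/n) (((i:ℝ)+1)/n) ∧ FF n i (cut n i j) = (j:ℝ)/n := by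
  have hN : (0:ℝ) < n := by exact_mod_cast hn
  by_cases h : j = n
  · subst h
    rw [cut, if_pos rfl]
    refine ⟨⟨ab_le hn i, le_refl _⟩, ?_⟩
    rw [FF_one hn i, div_self hN.ne']
  · rw [cut, if_neg h]
    set S := {t : ℝ | t ∈ Icc ((i:ℝ)/n) (((i:ℝ)+1)/n) ∧ FF n i t = (j:ℝ)/n} with hS
    have hne : S.Nonempty := by
      have hIVT := intermediate_value_Icc (ab_le hn i) (FF_cont n i).continuousOn
      have hmem : (j:ℝ)/n ∈ Icc (FF n i ((i:ℝ)/n)) (FF n i (((i:ℝ)+1)/n)) := by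
        rw [FF_zero, FF_one hn]
        constructor
        · positivity
        · apply div_le_one_of_le₀ (by exact_mod_cast hj) hN.le
      obtain ⟨t, ht, hFt⟩ := hIVT hmem
      exact ⟨t, ht, hFt⟩
    have hcl : IsClosed S :=
      (isClosed_Icc).inter (isClosed_eq (FF_cont n i) continuous_const)
    have hbdd : BddBelow S := ⟨(i:ℝ)/n, fun t ht => ht.1.1⟩
    exact hcl.csInf_mem hne hbdd

lemma cut_mono {n : ℕ} (hn : 0 < n) {i j j' : ℕ} (h : j ≤ j') (hj' : j' ≤ n) :
    cut n i j ≤ cut n i j' := by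
  have hN : (0:ℝ) < n := by exact_mod_cast hn
  rcases eq_or_lt_of_le h with rfl | hlt
  · exact le_refl _
  by_cases hjn : j = n
  · have : j' = n := le_antisymm hj' (hjn ▸ h)
    subst this; subst hjn; exact le_refl _
  obtain ⟨hmem', hF'⟩ := cut_spec hn (i := i) hj'
  rw [cut, if_neg hjn]
  have hbdd : BddBelow {t : ℝ | t ∈ Icc ((i:ℝ)/n) (((i:ℝ)+1)/n) ∧ FF n i t = (j:ℝ)/n} :=
    ⟨(i:ℝ)/n, fun t ht => ht.1.1⟩
  have hIVT := intermediate_value_Icc hmem'.1 (FF_cont n i).continuousOn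
  have hjmem : (j:ℝ)/n ∈ Icc (FF n i ((i:ℝ)/n)) (FF n i (cut n i j')) := by
    rw [FF_zero, hF']
    constructor
    · positivity
    · exact (div_le_div_iff_of_pos_right hN).mpr (by exact_mod_cast h)
  obtain ⟨t, ht, hFt⟩ := hIVT hjmem
  exact le_trans (csInf_le hbdd ⟨⟨ht.1, le_trans ht.2 hmem'.2⟩, hFt⟩) ht.2

lemma cut_zero {n : ℕ} (hn : 0 < n) (i : ℕ) : cut n i 0 = (i:ℝ)/n := by
  rw [cut, if_neg (Nat.ne_of_lt hn)]
  apply le_antisymm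
  · apply csInf_le ⟨(i:ℝ)/n, fun t ht => ht.1.1⟩
    refine ⟨⟨le_refl _, ab_le hn i⟩, ?_⟩
    rw [FF_zero]; simp
  · apply le_csInf
    · refine ⟨(i:ℝ)/n, ⟨le_refl _, ab_le hn i⟩, ?_⟩
      rw [FF_zero]; simp
    · intro t ht; exact ht.1.1

lemma cut_last (n i : ℕ) : cut n i n = ((i:ℝ)+1)/n := by rw [cut, if_pos rfl]

lemma tele (f : ℕ → ℝ) (m : ℕ) (hmono : ∀ j k, j ≤ k → k ≤ m → f j ≤ f k) :
    (⋃ j ∈ Finset.range m, Ioc (f j) (f (j+1))) = Ioc (f 0) (f m) := by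
  induction m with
  | zero => simp
  | succ m ih =>
    rw [Finset.range_add_one, Finset.set_biUnion_insert,
      ih (fun j k hjk hk => hmono j k hjk (hk.trans (Nat.le_succ m))),
      Set.union_comm, Ioc_union_Ioc_eq_Ioc (hmono 0 m (Nat.zero_le m) (Nat.le_succ m))
        (hmono m (m+1) (Nat.le_succ m) (le_refl _))]

lemma iUnion_fin {α : Type*} (n : ℕ) (g : ℕ → Set α) :
    (⋃ i : Fin n, g i.val) = ⋃ i ∈ Finset.range n, g i := by
  ext x
  simp only [Set.mem_iUnion, Finset.mem_range]
  constructor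
  · rintro ⟨i, h⟩; exact ⟨i.val, i.isLt, h⟩
  · rintro ⟨i, hi, h⟩; exact ⟨⟨i, hi⟩, h⟩

noncomputable def Xe (n j : ℕ) : Set ℝ :=
  (⋃ i ∈ Finset.range n, Ioc (cut n i j) (cut n i (j+1))) ∪ (if j = 0 then {0} else ∅)

noncomputable def Xs (n i : ℕ) : Set ℝ :=
  Ioc ((i:ℝ)/n) (((i:ℝ)+1)/n) ∪ (if i = 0 then {0} else ∅)

lemma Xe_meas (n j : ℕ) : MeasurableSet (Xe n j) := by
  unfold Xe
  apply MeasurableSet.union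
  · exact Finset.measurableSet_biUnion _ (fun i _ => measurableSet_Ioc)
  · split <;> simp

lemma Xs_meas (n i : ℕ) : MeasurableSet (Xs n i) := by
  unfold Xs
  apply MeasurableSet.union measurableSet_Ioc
  split <;> simp

lemma mem_Ioc_cut {n : ℕ} (hn : 0 < n) {i j : ℕ} (hij : j + 1 ≤ n) {x : ℝ}
    (hx : x ∈ Ioc (cut n i j) (cut n i (j+1))) :
    (i:ℝ)/n < x ∧ x ≤ ((i:ℝ)+1)/n := by
  have h1 := (cut_spec hn (i := i) (Nat.le_of_succ_le hij)).1
  have h2 := (cut_spec hn (i := i) hij).1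
  exact ⟨lt_of_le_of_lt h1.1 hx.1, le_trans hx.2 h2.2⟩

lemma succ_le_cast {n : ℕ} (hn : 0 < n) {i i' : ℕ} (h : i < i') :
    ((i:ℝ)+1)/n ≤ (i':ℝ)/n := by
  have hN : (0:ℝ) < n := by exact_mod_cast hn
  apply (div_le_div_iff_of_pos_right hN).mpr
  exact_mod_cast h

lemma vv_zero_of_ne {n : ℕ} (hn : 0 < n) {i i' : ℕ} (hne : i ≠ i') {x : ℝ}
    (hx1 : (i':ℝ)/n < x) (hx2 : x ≤ ((i':ℝ)+1)/n) : vv n i x = 0 := by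
  rcases lt_or_gt_of_ne hne with h | h
  · exact vv_zero hn i (Or.inr (le_trans (succ_le_cast hn h) hx1.le))
  · exact vv_zero hn i (Or.inl (le_trans hx2 (succ_le_cast hn h)))

lemma vv_zero_zero {n : ℕ} (hn : 0 < n) (i : ℕ) : vv n i 0 = 0 :=
  vv_zero hn i (Or.inl (by positivity))

lemma mem_Xe_elim {n j : ℕ} {x : ℝ} (hx : x ∈ Xe n j) :
    (∃ i, i < n ∧ x ∈ Ioc (cut n i j) (cut n i (j+1))) ∨ (j = 0 ∧ x = 0) := by
  unfold Xe at hx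
  rcases hx with hx | hx
  · left
    simp only [Set.mem_iUnion, Finset.mem_range, exists_prop] at hx
    exact hx
  · right
    by_cases h : j = 0
    · rw [if_pos h] at hx; exact ⟨h, hx⟩
    · rw [if_neg h] at hx; exact absurd hx (Set.notMem_empty x)

lemma mem_Xs_elim {n i : ℕ} {x : ℝ} (hx : x ∈ Xs n i) :
    x ∈ Ioc ((i:ℝ)/n) (((i:ℝ)+1)/n) ∨ (i = 0 ∧ x = 0) := by
  unfold Xs at hx
  rcases hx with hx | hx
  · exact Or.inl hx
  · right
    by_cases h : i = 0
    · rw [if_pos h] at hx; exact ⟨h, hx⟩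
    · rw [if_neg h] at hx; exact absurd hx (Set.notMem_empty x)

lemma pieceVal_Xe {n : ℕ} (hn : 0 < n) {i j : ℕ} (hi : i < n) (hj : j < n) :
    pieceVal (vv n i) (Xe n j) = 1/(n:ℝ) := by
  have hj1 : j + 1 ≤ n := hj
  have hcs := cut_spec hn (i := i) (le_of_lt hj)
  have hcs1 := cut_spec hn (i := i) hj1
  have hsub : Ioc (cut n i j) (cut n i (j+1)) ⊆ Xe n j := by
    intro x hx
    exact Or.inl (Set.mem_biUnion (Finset.mem_range.mpr hi) hx)
  have hzero : ∀ x ∈ Xe n j \ Ioc (cut n i j) (cut n i (j+1)), vv n i x = 0 := by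
    rintro x ⟨hx, hxn⟩
    rcases mem_Xe_elim hx with ⟨i', hi', hx'⟩ | ⟨hj0, rfl⟩
    · by_cases hii : i' = i
      · subst hii; exact absurd hx' hxn
      · obtain ⟨ha, hb⟩ := mem_Ioc_cut hn hj1 hx'
        exact vv_zero_of_ne hn (fun h => hii h.symm) ha hb
    · exact vv_zero_zero hn i
  unfold pieceVal
  rw [setIntegral_eq_of_subset_of_forall_diff_eq_zero (Xe_meas n j) hsub hzero,
    ← intervalIntegral.integral_of_le (cut_mono hn (Nat.le_succ j) hj1),
    ← FF_sub, hcs1.2, hcs.2]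
  push_cast
  rw [div_sub_div_same]
  norm_num

lemma pieceVal_Xs {n : ℕ} (hn : 0 < n) {i : ℕ} (hi : i < n) :
    pieceVal (vv n i) (Xs n i) = 1 := by
  have hsub : Ioc ((i:ℝ)/n) (((i:ℝ)+1)/n) ⊆ Xs n i := fun x hx => Or.inl hx
  have hzero : ∀ x ∈ Xs n i \ Ioc ((i:ℝ)/n) (((i:ℝ)+1)/n), vv n i x = 0 := by
    rintro x ⟨hx, hxn⟩
    rcases hx with hx | hx
    · exact absurd hx hxn
    · by_cases h : i = 0
      · rw [if_pos h] at hx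
        rw [hx]; exact vv_zero_zero hn i
      · rw [if_neg h] at hx; exact absurd hx (Set.notMem_empty x)
  unfold pieceVal
  rw [setIntegral_eq_of_subset_of_forall_diff_eq_zero (Xs_meas n i) hsub hzero,
    ← intervalIntegral.integral_of_le (ab_le hn i), vv_integral hn i]

lemma Ioc_sub_Icc {n : ℕ} (hn : 0 < n) {i : ℕ} (hi : i < n) :
    Ioc ((i:ℝ)/n) (((i:ℝ)+1)/n) ⊆ Icc (0:ℝ) 1 := by
  have hN : (0:ℝ) < n := by exact_mod_cast hn
  intro x hx
  have h0 : (0:ℝ) ≤ (i:ℝ)/n := by positivity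
  have h1 : ((i:ℝ)+1)/n ≤ 1 := by
    rw [div_le_one hN]
    exact_mod_cast hi
  exact ⟨le_of_lt (lt_of_le_of_lt h0 hx.1), le_trans hx.2 h1⟩

lemma vv_total {n : ℕ} (hn : 0 < n) {i : ℕ} (hi : i < n) :
    ∫ x in Icc (0:ℝ) 1, vv n i x = 1 := by
  have hzero : ∀ x ∈ Icc (0:ℝ) 1 \ Ioc ((i:ℝ)/n) (((i:ℝ)+1)/n), vv n i x = 0 := by
    rintro x ⟨hx, hxn⟩
    rw [Set.mem_Ioc, not_and_or, not_lt, not_le] at hxn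
    rcases hxn with h | h
    · exact vv_zero hn i (Or.inl h)
    · exact vv_zero hn i (Or.inr h.le)
  rw [setIntegral_eq_of_subset_of_forall_diff_eq_zero measurableSet_Icc
    (Ioc_sub_Icc hn hi) hzero,
    ← intervalIntegral.integral_of_le (ab_le hn i), vv_integral hn i]

lemma pieceVal_le_one {n : ℕ} (hn : 0 < n) {i : ℕ} (hi : i < n) {S : Set ℝ}
    (hS : S ⊆ Icc (0:ℝ) 1) : pieceVal (vv n i) S ≤ 1 := by
  rw [pieceVal, ← vv_total hn hi]
  apply setIntegral_mono_set
  · exact (vv_cont n i).integrableOn_Icc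
  · exact Filter.Eventually.of_forall (fun x => vv_nonneg n i x)
  · exact HasSubset.Subset.eventuallyLE hS

lemma Ioc_cut_union {n : ℕ} (hn : 0 < n) (i : ℕ) :
    (⋃ j ∈ Finset.range n, Ioc (cut n i j) (cut n i (j+1)))
      = Ioc ((i:ℝ)/n) (((i:ℝ)+1)/n) := by
  rw [tele (cut n i) n (fun j k hjk hk => cut_mono hn hjk hk), cut_zero hn, cut_last]

lemma Ioc_unit_union {n : ℕ} (hn : 0 < n) :
    (⋃ i ∈ Finset.range n, Ioc ((i:ℝ)/n) (((i:ℝ)+1)/n)) = Ioc (0:ℝ) 1 := by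
  have hN : (0:ℝ) < n := by exact_mod_cast hn
  have h := tele (fun m : ℕ => (m:ℝ)/n) n
    (fun j k hjk _ => (div_le_div_iff_of_pos_right hN).mpr (by exact_mod_cast hjk))
  simp only [Nat.cast_add, Nat.cast_one, Nat.cast_zero, zero_div] at h
  rw [h, div_self hN.ne']

end S7

/-- For every n ≥ 2 there is a cake-cutting problem with single-peaked normalized
densities having pairwise disjoint supports, an envy-free allocation giving every
agent exactly 1/n, and a Pareto optimal allocation giving every agent 1; the
welfare loss between them is exactly (n-1)/n. -/
theorem statement7 (n : ℕ) (hn : 2 ≤ n) :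
    ∃ (v : Fin n → ℝ → ℝ) (p : Fin n → ℝ) (k : Fin n → ℝ),
      (∀ i, SinglePeakedD (v i) (p i) (k i)) ∧
      (∀ i j, i ≠ j → Supp01 (v i) ∩ Supp01 (v j) = ∅) ∧
      ∃ X Xstar : Fin n → Set ℝ,
        IsAlloc X ∧ EnvyFreeA v X ∧ (∀ i, pieceVal (v i) (X i) = 1/n) ∧
        IsAlloc Xstar ∧ ParetoOpt v Xstar ∧ (∀ i, pieceVal (v i) (Xstar i) = 1) ∧
        (1/n) * (∑ i, pieceVal (v i) (Xstar i)) - (1/n) * (∑ i, pieceVal (v i) (X i))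
          = (n - 1)/n := by
  have hn0 : 0 < n := lt_of_lt_of_le (by norm_num) hn
  have hN : (0:ℝ) < n := by exact_mod_cast hn0
  refine ⟨fun i => S7.vv n i.val, fun i => (2*(i.val:ℝ)+1)/(2*(n:ℝ)),
    fun _ => 4*(n:ℝ)^2, ?_, ?_,
    fun j => S7.Xe n j.val, fun i => S7.Xs n i.val, ?_, ?_, ?_, ?_, ?_, ?_, ?_⟩
  · -- SinglePeakedD
    intro i
    refine ⟨by positivity, ⟨by positivity, ?_⟩, ?_, S7.vv_total hn0 i.isLt⟩
    · rw [div_le_one (by positivity)]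
      have : (i.val:ℝ) + 1 ≤ n := by exact_mod_cast i.isLt
      linarith
    · intro x _
      show S7.vv n i.val x = max 0 (S7.vv n i.val ((2*(i.val:ℝ)+1)/(2*(n:ℝ)))
        - 4*(n:ℝ)^2 * |x - (2*(i.val:ℝ)+1)/(2*(n:ℝ))|)
      rw [S7.vv_peak hn0 i.val]
      rfl
  · -- disjoint supports
    intro i j hij
    rw [Set.eq_empty_iff_forall_notMem]
    rintro x ⟨⟨_, hp1⟩, ⟨_, hp2⟩⟩
    obtain ⟨a1, b1⟩ := S7.vv_pos_bounds hn0 i.val hp1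
    obtain ⟨a2, b2⟩ := S7.vv_pos_bounds hn0 j.val hp2
    have hvals : i.val ≠ j.val := fun h => hij (Fin.ext h)
    rcases lt_or_gt_of_ne hvals with h | h
    · have := S7.succ_le_cast hn0 h; linarith
    · have := S7.succ_le_cast hn0 h; linarith
  · -- IsAlloc X
    refine ⟨fun j => S7.Xe_meas n j.val, ?_, ?_⟩
    · intro j j' hne
      rw [Set.eq_empty_iff_forall_notMem]
      rintro x ⟨hx, hx'⟩
      have hvals : j.val ≠ j'.val := fun h => hne (Fin.ext h)
      rcases S7.mem_Xe_elim hx with ⟨i1, hi1, h1⟩ | ⟨hz, rfl⟩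
      · rcases S7.mem_Xe_elim hx' with ⟨i2, hi2, h2⟩ | ⟨_, hx0⟩
        · by_cases hii : i1 = i2
          · subst hii
            rcases lt_or_gt_of_ne hvals with h | h
            · have hmono := S7.cut_mono (i := i1) hn0 h (le_of_lt j'.isLt)
              have := h1.2; have := h2.1; linarith
            · have hmono := S7.cut_mono (i := i1) hn0 h (le_of_lt j.isLt)
              have := h2.2; have := h1.1; linarith
          · obtain ⟨a1, b1⟩ := S7.mem_Ioc_cut hn0 j.isLt h1
            obtain ⟨a2, b2⟩ := S7.mem_Ioc_cut hn0 j'.isLt h2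
            rcases lt_or_gt_of_ne hii with h | h
            · have := S7.succ_le_cast hn0 h; linarith
            · have := S7.succ_le_cast hn0 h; linarith
        · obtain ⟨a1, _⟩ := S7.mem_Ioc_cut hn0 j.isLt h1
          have h0 : (0:ℝ) ≤ (i1:ℝ)/n := by positivity
          rw [hx0] at a1
          linarith
      · rcases S7.mem_Xe_elim hx' with ⟨i2, hi2, h2⟩ | ⟨hz', _⟩
        · obtain ⟨a2, _⟩ := S7.mem_Ioc_cut hn0 j'.isLt h2
          have h0 : (0:ℝ) ≤ (i2:ℝ)/n := by positivity
          linarith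
        · exact hvals (hz.trans hz'.symm)
    · ext x
      constructor
      · intro hx
        obtain ⟨j, hxj⟩ := Set.mem_iUnion.mp hx
        rcases S7.mem_Xe_elim hxj with ⟨i, hi, hxi⟩ | ⟨_, rfl⟩
        · exact S7.Ioc_sub_Icc hn0 hi (S7.mem_Ioc_cut hn0 j.isLt hxi)
        · exact ⟨le_refl 0, zero_le_one⟩
      · intro hx
        by_cases hx0 : x = 0
        · subst hx0
          apply Set.mem_iUnion.mpr ⟨⟨0, hn0⟩, ?_⟩
          exact Or.inr (by rw [if_pos rfl]; exact rfl)
        · have hxIoc : x ∈ Set.Ioc (0:ℝ) 1 := ⟨lt_of_le_of_ne hx.1 (Ne.symm hx0), hx.2⟩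
          rw [← S7.Ioc_unit_union hn0] at hxIoc
          obtain ⟨i, hi, hxi⟩ := Set.mem_iUnion₂.mp hxIoc
          rw [← S7.Ioc_cut_union hn0 i] at hxi
          obtain ⟨j, hj, hxj⟩ := Set.mem_iUnion₂.mp hxi
          exact Set.mem_iUnion.mpr ⟨⟨j, Finset.mem_range.mp hj⟩,
            Or.inl (Set.mem_biUnion hi hxj)⟩
  · -- EnvyFreeA
    intro i j
    have h1 := S7.pieceVal_Xe hn0 i.isLt j.isLt
    have h2 := S7.pieceVal_Xe hn0 i.isLt i.isLt
    exact le_of_eq (h1.trans h2.symm)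
  · -- values 1/n
    intro i
    exact S7.pieceVal_Xe hn0 i.isLt i.isLt
  · -- IsAlloc Xstar
    refine ⟨fun i => S7.Xs_meas n i.val, ?_, ?_⟩
    · intro i i' hne
      rw [Set.eq_empty_iff_forall_notMem]
      rintro x ⟨hx, hx'⟩
      have hvals : i.val ≠ i'.val := fun h => hne (Fin.ext h)
      rcases S7.mem_Xs_elim hx with h1 | ⟨hz, rfl⟩
      · rcases S7.mem_Xs_elim hx' with h2 | ⟨_, hx0⟩
        · rcases lt_or_gt_of_ne hvals with h | h
          · have := S7.succ_le_cast hn0 h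
            have := h1.2; have := h2.1; linarith
          · have := S7.succ_le_cast hn0 h
            have := h2.2; have := h1.1; linarith
        · have h0 : (0:ℝ) ≤ (i.val:ℝ)/n := by positivity
          rw [hx0] at h1
          linarith [h1.1]
      · rcases S7.mem_Xs_elim hx' with h2 | ⟨hz', _⟩
        · have h0 : (0:ℝ) ≤ (i'.val:ℝ)/n := by positivity
          linarith [h2.1]
        · exact hvals (hz.trans hz'.symm)
    · ext x
      constructor
      · intro hx
        obtain ⟨i, hxi⟩ := Set.mem_iUnion.mp hx
        rcases S7.mem_Xs_elim hxi with h1 | ⟨_, rfl⟩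
        · exact S7.Ioc_sub_Icc hn0 i.isLt h1
        · exact ⟨le_refl 0, zero_le_one⟩
      · intro hx
        by_cases hx0 : x = 0
        · subst hx0
          apply Set.mem_iUnion.mpr ⟨⟨0, hn0⟩, ?_⟩
          exact Or.inr (by rw [if_pos rfl]; exact rfl)
        · have hxIoc : x ∈ Set.Ioc (0:ℝ) 1 := ⟨lt_of_le_of_ne hx.1 (Ne.symm hx0), hx.2⟩
          rw [← S7.Ioc_unit_union hn0] at hxIoc
          obtain ⟨i, hi, hxi⟩ := Set.mem_iUnion₂.mp hxIoc
          exact Set.mem_iUnion.mpr ⟨⟨i, Finset.mem_range.mp hi⟩, Or.inl hxi⟩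
  · -- ParetoOpt
    rintro ⟨Y, ⟨hYm, hYd, hYu⟩, hle, i0, hlt⟩
    have hsub : Y i0 ⊆ Set.Icc (0:ℝ) 1 := by
      rw [← hYu]; exact Set.subset_iUnion Y i0
    have h1 : pieceVal (S7.vv n i0.val) (Y i0) ≤ 1 := S7.pieceVal_le_one hn0 i0.isLt hsub
    have h2 : pieceVal (S7.vv n i0.val) (S7.Xs n i0.val) = 1 := S7.pieceVal_Xs hn0 i0.isLt
    have hlt' : pieceVal (S7.vv n i0.val) (S7.Xs n i0.val)
        < pieceVal (S7.vv n i0.val) (Y i0) := hlt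
    linarith
  · -- Xstar values
    intro i
    exact S7.pieceVal_Xs hn0 i.isLt
  · -- welfare
    have s1 : (∑ i : Fin n, pieceVal (S7.vv n i.val) (S7.Xs n i.val)) = n := by
      rw [Finset.sum_congr rfl (fun i _ => S7.pieceVal_Xs hn0 i.isLt)]
      simp
    have s2 : (∑ i : Fin n, pieceVal (S7.vv n i.val) (S7.Xe n i.val)) = n * (1/(n:ℝ)) := by
      rw [Finset.sum_congr rfl (fun i _ => S7.pieceVal_Xe hn0 i.isLt i.isLt)]
      simp [Finset.card_univ, mul_one_div]
    show (1/(n:ℝ)) * (∑ i : Fin n, pieceVal (S7.vv n i.val) (S7.Xs n i.val))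
      - (1/(n:ℝ)) * (∑ i : Fin n, pieceVal (S7.vv n i.val) (S7.Xe n i.val)) = ((n:ℝ) - 1)/n
    rw [s1, s2]
    field_simp
end
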